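/- arXiv:2303.06134 — 11 statements merged into one kernel-verified Lean document; each statement's English description precedes it below -/
import Mathlib

section
/- Let k ≥ 1 and let x₁ < x₂ < … < x_k < x_{k+1} < … < x_{2k} be real numbers. Then the function p(c) = ∏_{i=1}^{k} (c − x_i) − ∏_{i=k+1}^{2k} (x_i − c) has exactly one zero c in the open interval (x_k, x_{k+1}). -/
/-- For data `x 0 < x 1 < … < x (2k-1)`, the function
`p(c) = ∏_{i<k} (c - x i) - ∏_{k ≤ i < 2k} (x i - c)` has exactly one zero in the open
interval `(x (k-1), x k)` (the γ-median of the data). -/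
theorem gammaMedian_existsUnique (k : ℕ) (hk : 1 ≤ k) (x : ℕ → ℝ)
    (hmono : ∀ i, i + 1 < 2 * k → x i < x (i + 1)) :
    ∃! c : ℝ, c ∈ Set.Ioo (x (k - 1)) (x k) ∧
      (∏ i ∈ Finset.range k, (c - x i)) - (∏ i ∈ Finset.Ico k (2 * k), (x i - c)) = 0 := by
  set p : ℝ → ℝ := fun c =>
    (∏ i ∈ Finset.range k, (c - x i)) - (∏ i ∈ Finset.Ico k (2 * k), (x i - c)) with hp
  have hxle : ∀ i j, i ≤ j → j < 2 * k → x i ≤ x j := by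
    intro i j hij hj
    induction j with
    | zero => interval_cases i; rfl
    | succ n ih =>
      rcases eq_or_lt_of_le hij with rfl | h
      · rfl
      · exact (ih (Nat.lt_succ_iff.mp h) (by omega)).trans (hmono n hj).le
  set a := x (k - 1) with ha
  set b := x k with hb
  have hab : a < b := by
    have := hmono (k - 1) (by omega)
    rwa [Nat.sub_add_cancel hk] at this
  have hleft : ∀ i < k, x i ≤ a := fun i hi => hxle i (k - 1) (by omega) (by omega)
  have hright : ∀ i, k ≤ i → i < 2 * k → b ≤ x i := fun i hi hi2 => hxle k i hi hi2
  have hcont : Continuous p := by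
    apply Continuous.sub
    · exact continuous_finset_prod _ fun i _ => continuous_id.sub continuous_const
    · exact continuous_finset_prod _ fun i _ => continuous_const.sub continuous_id
  -- strict monotonicity on the open interval
  have hsm : StrictMonoOn p (Set.Ioo a b) := by
    intro c hc d hd hcd
    have h1 : (∏ i ∈ Finset.range k, (c - x i)) < ∏ i ∈ Finset.range k, (d - x i) := by
      apply Finset.prod_lt_prod_of_nonempty
      · intro i hi
        have := hleft i (Finset.mem_range.mp hi)
        have := hc.1
        linarith
      · intro i _
        linarith
      · exact Finset.nonempty_range_iff.mpr (by omega)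
    have h2 : (∏ i ∈ Finset.Ico k (2 * k), (x i - d)) <
        ∏ i ∈ Finset.Ico k (2 * k), (x i - c) := by
      apply Finset.prod_lt_prod_of_nonempty
      · intro i hi
        obtain ⟨hi1, hi2⟩ := Finset.mem_Ico.mp hi
        have := hright i hi1 hi2
        have := hd.2
        linarith
      · intro i _
        linarith
      · exact Finset.nonempty_Ico.mpr (by omega)
    simp only [hp]
    linarith
  have hpa : p a < 0 := by
    have h1 : (∏ i ∈ Finset.range k, (a - x i)) = 0 := by
      apply Finset.prod_eq_zero (Finset.mem_range.mpr (by omega : k - 1 < k))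
      simp [ha]
    have h2 : 0 < ∏ i ∈ Finset.Ico k (2 * k), (x i - a) := by
      apply Finset.prod_pos
      intro i hi
      obtain ⟨hi1, hi2⟩ := Finset.mem_Ico.mp hi
      have := hright i hi1 hi2
      linarith
    simp only [hp, h1]
    linarith
  have hpb : 0 < p b := by
    have h1 : (∏ i ∈ Finset.Ico k (2 * k), (x i - b)) = 0 := by
      apply Finset.prod_eq_zero (Finset.mem_Ico.mpr ⟨le_refl k, by omega⟩)
      simp [hb]
    have h2 : 0 < ∏ i ∈ Finset.range k, (b - x i) := by
      apply Finset.prod_pos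
      intro i hi
      have := hleft i (Finset.mem_range.mp hi)
      linarith
    simp only [hp, h1]
    linarith
  have hIVT := intermediate_value_Ioo hab.le hcont.continuousOn
  have h0 : (0 : ℝ) ∈ Set.Ioo (p a) (p b) := ⟨hpa, hpb⟩
  obtain ⟨c, hc, hpc⟩ := hIVT h0
  refine ⟨c, ⟨hc, hpc⟩, ?_⟩
  intro y ⟨hy, hpy⟩
  exact hsm.injOn hy hc (by rw [show p y = 0 from hpy, hpc])
end

section
/- Let p > 2, ε > 0 and n ≥ 1. There exists a constant C > 0, depending only on n, p and ε, with the following property: for every bounded measurable function u : ℝⁿ → ℝ and all points x₁, x₂ ∈ ℝⁿ, if λ₁ and λ₂ are real numbers satisfying ∫_{B_ε(x₁)} |u(x) − λ₁|^{p−2}(u(x) − λ₁) dx = 0 and ∫_{B_ε(x₂)} |u(x) − λ₂|^{p−2}(u(x) − λ₂) dx = 0, then |λ₁ − λ₂| ≤ C·‖u‖_{L^∞}·|x₁ − x₂|^{1/(p−1)}. In particular, the map x ↦ A_ε(u)(x) is Hölder continuous with exponent 1/(p−1). -/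
open MeasureTheory Metric Set

private lemma phiEq {p : ℝ} (hp : 2 < p) {t : ℝ} (ht : 0 ≤ t) :
    |t| ^ (p - 2) * t = t ^ (p - 1) := by
  rcases eq_or_lt_of_le ht with h | h
  · rw [← h]
    simp [Real.zero_rpow (by linarith : p - 1 ≠ 0)]
  · rw [abs_of_pos h, show p - 1 = (p - 2) + 1 by ring, Real.rpow_add h, Real.rpow_one]

private lemma realSuperadd {a b q : ℝ} (ha : 0 ≤ a) (hb : 0 ≤ b) (hq : 1 ≤ q) :
    a ^ q + b ^ q ≤ (a + b) ^ q := by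
  have h := NNReal.add_rpow_le_rpow_add a.toNNReal b.toNNReal hq
  have h2 := NNReal.coe_le_coe.mpr h
  push_cast [NNReal.coe_rpow] at h2
  rwa [Real.coe_toNNReal _ ha, Real.coe_toNNReal _ hb] at h2

private lemma realSubadd {a b q : ℝ} (ha : 0 ≤ a) (hb : 0 ≤ b) (hq : 1 ≤ q) :
    (a + b) ^ q ≤ 2 ^ (q - 1) * (a ^ q + b ^ q) := by
  have h := NNReal.rpow_add_le_mul_rpow_add_rpow a.toNNReal b.toNNReal hq
  have h2 := NNReal.coe_le_coe.mpr h
  push_cast [NNReal.coe_rpow] at h2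
  rwa [Real.coe_toNNReal _ ha, Real.coe_toNNReal _ hb] at h2

private lemma keyNonneg {p : ℝ} (hp : 2 < p) {s t : ℝ} (hs : 0 ≤ s) (hst : s ≤ t) :
    2 ^ (2 - p) * (t - s) ^ (p - 1) ≤ |t| ^ (p - 2) * t - |s| ^ (p - 2) * s := by
  have ht : 0 ≤ t := hs.trans hst
  rw [phiEq hp hs, phiEq hp ht]
  have h1 : (t - s) ^ (p - 1) + s ^ (p - 1) ≤ t ^ (p - 1) := by
    have := realSuperadd (sub_nonneg.2 hst) hs (by linarith : 1 ≤ p - 1)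
    rwa [sub_add_cancel] at this
  have h2 : (2:ℝ) ^ (2 - p) ≤ 1 :=
    Real.rpow_le_one_of_one_le_of_nonpos one_le_two (by linarith)
  nlinarith [Real.rpow_nonneg (sub_nonneg.2 hst) (p - 1)]

private lemma keyIneq {p : ℝ} (hp : 2 < p) {s t : ℝ} (hst : s ≤ t) :
    2 ^ (2 - p) * (t - s) ^ (p - 1) ≤ |t| ^ (p - 2) * t - |s| ^ (p - 2) * s := by
  rcases le_or_gt 0 s with hs | hs
  · exact keyNonneg hp hs hst
  rcases le_or_gt t 0 with ht | ht
  · have := keyNonneg hp (by linarith : (0:ℝ) ≤ -t) (by linarith : -t ≤ -s)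
    rw [abs_neg, abs_neg, show -s - -t = t - s by ring] at this
    nlinarith
  · have h1 : |t| ^ (p - 2) * t - |s| ^ (p - 2) * s = t ^ (p - 1) + (-s) ^ (p - 1) := by
      have e1 := phiEq hp ht.le
      have e2 := phiEq hp (by linarith : (0:ℝ) ≤ -s)
      rw [abs_neg] at e2
      nlinarith [e1, e2]
    rw [h1]
    have h2 := realSubadd ht.le (by linarith : (0:ℝ) ≤ -s) (by linarith : 1 ≤ p - 1)
    have h3 : (2:ℝ) ^ (2 - p) * 2 ^ ((p - 1) - 1) = 1 := by
      rw [← Real.rpow_add two_pos, show 2 - p + (p - 1 - 1) = 0 by ring, Real.rpow_zero]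
    calc 2 ^ (2 - p) * (t - s) ^ (p - 1) = 2 ^ (2 - p) * (t + -s) ^ (p - 1) := by ring_nf
      _ ≤ 2 ^ (2 - p) * (2 ^ ((p - 1) - 1) * (t ^ (p - 1) + (-s) ^ (p - 1))) := by
          apply mul_le_mul_of_nonneg_left h2 (Real.rpow_nonneg (by norm_num) _)
      _ = t ^ (p - 1) + (-s) ^ (p - 1) := by rw [← mul_assoc, h3, one_mul]

private lemma powDiffLe (n : ℕ) {a b : ℝ} (ha : 0 ≤ a) (hab : a ≤ b) :
    b ^ n - a ^ n ≤ n * b ^ (n - 1) * (b - a) := by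
  induction n with
  | zero => simp
  | succ m ih =>
    have hb : 0 ≤ b := ha.trans hab
    rcases Nat.eq_zero_or_pos m with rfl | hm
    · norm_num
    · have h2 : a ^ m ≤ b ^ m := pow_le_pow_left₀ ha hab m
      have h3 : b * (b ^ m - a ^ m) ≤ b * (↑m * b ^ (m - 1) * (b - a)) :=
        mul_le_mul_of_nonneg_left ih hb
      have h4 : b * b ^ (m - 1) = b ^ m := by
        rw [← pow_succ', Nat.sub_add_cancel hm]
      have h3' : b * (↑m * b ^ (m - 1) * (b - a)) = ↑m * b ^ m * (b - a) := by
        rw [← h4]; ring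
      have h5 : (0:ℝ) ≤ b - a := sub_nonneg.2 hab
      have h9 : (b - a) * a ^ m ≤ (b - a) * b ^ m := mul_le_mul_of_nonneg_left h2 h5
      have key : b ^ (m + 1) - a ^ (m + 1) = b * (b ^ m - a ^ m) + (b - a) * a ^ m := by ring
      rw [show m + 1 - 1 = m from rfl]
      push_cast
      nlinarith [h3, h9, key, h3']

private lemma phiNormLe {p : ℝ} (hp : 2 < p) {v K : ℝ} (hv : |v| ≤ K) :
    ‖|v| ^ (p - 2) * v‖ ≤ K ^ (p - 1) := by
  have h0 : (0:ℝ) ≤ |v| := abs_nonneg v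
  have h1 : ‖|v| ^ (p - 2) * v‖ = |v| ^ (p - 2) * |v| := by
    rw [Real.norm_eq_abs, abs_mul, abs_of_nonneg (Real.rpow_nonneg h0 _)]
  have h2 := phiEq hp h0
  rw [abs_abs] at h2
  rw [h1, h2]
  exact Real.rpow_le_rpow h0 hv (by linarith)

private lemma intPhi {n : ℕ} {p : ℝ} (hp : 2 < p) {u : EuclideanSpace ℝ (Fin n) → ℝ}
    (hu : Measurable u) {M : ℝ}
    (hMae : ∀ᵐ x ∂(volume : Measure (EuclideanSpace ℝ (Fin n))), |u x| ≤ M)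
    (lam : ℝ) (x₀ : EuclideanSpace ℝ (Fin n)) (ε : ℝ) :
    IntegrableOn (fun x => |u x - lam| ^ (p - 2) * (u x - lam)) (ball x₀ ε) volume := by
  have hcont : Continuous fun t : ℝ => |t| ^ (p - 2) * t :=
    (continuous_abs.rpow_const (fun t => Or.inr (by linarith))).mul continuous_id
  have hm : Measurable fun x => |u x - lam| ^ (p - 2) * (u x - lam) :=
    hcont.measurable.comp (hu.sub measurable_const)
  apply Measure.integrableOn_of_bounded (M := (M + |lam|) ^ (p - 1)) measure_ball_lt_top.ne
    hm.aestronglyMeasurable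
  apply ae_restrict_of_ae
  filter_upwards [hMae] with x hx
  apply phiNormLe hp
  calc |u x - lam| ≤ |u x| + |lam| := abs_sub (u x) lam
    _ ≤ M + |lam| := by linarith

private lemma lamLeAux {n : ℕ} {p ε : ℝ} (hp : 2 < p) (hε : 0 < ε)
    {u : EuclideanSpace ℝ (Fin n) → ℝ} (hu : Measurable u) {M : ℝ}
    (hMae : ∀ᵐ x ∂(volume : Measure (EuclideanSpace ℝ (Fin n))), |u x| ≤ M)
    (x₀ : EuclideanSpace ℝ (Fin n)) (lam : ℝ)
    (h : (∫ x in ball x₀ ε, |u x - lam| ^ (p - 2) * (u x - lam)) = 0) :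
    lam ≤ M := by
  by_contra hlt
  push_neg at hlt
  set c := |M - lam| ^ (p - 2) * (M - lam) with hc
  have hcneg : c < 0 := by
    have h1 : |M - lam| = lam - M := by rw [abs_sub_comm, abs_of_pos (by linarith)]
    have h2 := phiEq hp (by linarith : (0:ℝ) ≤ lam - M)
    rw [abs_of_nonneg (by linarith : (0:ℝ) ≤ lam - M)] at h2
    have h3 : (0:ℝ) < (lam - M) ^ (p - 1) := Real.rpow_pos_of_pos (by linarith) _
    rw [hc, h1]
    nlinarith [h2, h3]
  have mono : ∀ᵐ x ∂(volume : Measure (EuclideanSpace ℝ (Fin n))),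
      |u x - lam| ^ (p - 2) * (u x - lam) ≤ c := by
    filter_upwards [hMae] with x hx
    have hst : u x - lam ≤ M - lam := by
      have := (le_abs_self (u x)).trans hx
      linarith
    have hk := keyIneq hp hst
    nlinarith [Real.rpow_nonneg (sub_nonneg.2 hst) (p - 1),
      Real.rpow_pos_of_pos (two_pos : (0:ℝ) < 2) (2 - p)]
  have hint := intPhi hp hu hMae lam x₀ ε
  have hconst : IntegrableOn (fun _ => c) (ball x₀ ε) volume :=
    integrableOn_const measure_ball_lt_top.ne
  have hle := setIntegral_mono_ae hint hconst mono
  rw [h, setIntegral_const, smul_eq_mul] at hle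
  have hvol : 0 < (volume (ball x₀ ε)).toReal :=
    ENNReal.toReal_pos (measure_ball_pos _ _ hε).ne' measure_ball_lt_top.ne
  nlinarith [hle, (show 0 < volume.real (ball x₀ ε) from hvol), hcneg]

private lemma absLamLe {n : ℕ} {p ε : ℝ} (hp : 2 < p) (hε : 0 < ε)
    {u : EuclideanSpace ℝ (Fin n) → ℝ} (hu : Measurable u) {M : ℝ}
    (hMae : ∀ᵐ x ∂(volume : Measure (EuclideanSpace ℝ (Fin n))), |u x| ≤ M)
    (x₀ : EuclideanSpace ℝ (Fin n)) (lam : ℝ)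
    (h : (∫ x in ball x₀ ε, |u x - lam| ^ (p - 2) * (u x - lam)) = 0) :
    |lam| ≤ M := by
  rw [abs_le]
  constructor
  · have hMae' : ∀ᵐ x ∂(volume : Measure (EuclideanSpace ℝ (Fin n))), |(-u) x| ≤ M := by
      filter_upwards [hMae] with x hx
      simpa using hx
    have h' : (∫ x in ball x₀ ε, |(-u) x - (-lam)| ^ (p - 2) * ((-u) x - (-lam))) = 0 := by
      have heq : ∀ x : EuclideanSpace ℝ (Fin n), |(-u) x - (-lam)| ^ (p - 2) * ((-u) x - (-lam))
          = -(|u x - lam| ^ (p - 2) * (u x - lam)) := by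
        intro x
        simp only [Pi.neg_apply]
        rw [show -u x - -lam = -(u x - lam) by ring, abs_neg]
        ring
      calc (∫ x in ball x₀ ε, |(-u) x - (-lam)| ^ (p - 2) * ((-u) x - (-lam)))
          = ∫ x in ball x₀ ε, -(|u x - lam| ^ (p - 2) * (u x - lam)) := by
            congr 1; funext x; exact heq x
        _ = 0 := by rw [integral_neg, h, neg_zero]
    have := lamLeAux hp hε hu.neg hMae' x₀ (-lam) h'
    linarith
  · exact lamLeAux hp hε hu hMae x₀ lam h

private lemma ballVol {n : ℕ} (x : EuclideanSpace ℝ (Fin n)) {r : ℝ} (hr : 0 < r) :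
    (volume (ball x r)).toReal
      = r ^ n * (volume (ball (0 : EuclideanSpace ℝ (Fin n)) 1)).toReal := by
  rw [Measure.addHaar_ball_of_pos volume x hr, finrank_euclideanSpace_fin, ENNReal.toReal_mul,
    ENNReal.toReal_ofReal (pow_nonneg hr.le n)]

/-- Main asymmetric estimate. -/
private lemma mainAux (n : ℕ) (hn : 1 ≤ n) (p ε : ℝ) (hp : 2 < p) (hε : 0 < ε)
    (u : EuclideanSpace ℝ (Fin n) → ℝ) (hu : Measurable u) {M : ℝ} (hM0 : 0 ≤ M)
    (hMae : ∀ᵐ x ∂(volume : Measure (EuclideanSpace ℝ (Fin n))), |u x| ≤ M)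
    (x₁ x₂ : EuclideanSpace ℝ (Fin n)) (lam₁ lam₂ : ℝ) (hle : lam₂ ≤ lam₁)
    (h1 : (∫ x in ball x₁ ε, |u x - lam₁| ^ (p - 2) * (u x - lam₁)) = 0)
    (h2 : (∫ x in ball x₂ ε, |u x - lam₂| ^ (p - 2) * (u x - lam₂)) = 0) :
    lam₁ - lam₂ ≤ ((2 ^ (p - 2) * 2 ^ (p - 1) * 2 * (n : ℝ) * (2 * ε) ^ (n - 1) / ε ^ n)
        ^ (1 / (p - 1)) + 2 / ε ^ (1 / (p - 1))) * M * dist x₁ x₂ ^ (1 / (p - 1)) := by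
  have hl1 : |lam₁| ≤ M := absLamLe hp hε hu hMae x₁ lam₁ h1
  have hl2 : |lam₂| ≤ M := absLamLe hp hε hu hMae x₂ lam₂ h2
  set d := dist x₁ x₂ with hd
  have hd0 : 0 ≤ d := dist_nonneg
  set A := 2 ^ (p - 2) * 2 ^ (p - 1) * 2 * (n : ℝ) * (2 * ε) ^ (n - 1) / ε ^ n with hA
  set q := p - 1 with hqdef
  have hq0 : 0 < q := by rw [hqdef]; linarith
  have hq1 : 1 ≤ q := by rw [hqdef]; linarith
  have hiq0 : 0 < 1 / q := by positivity
  set δ := lam₁ - lam₂ with hδ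
  clear_value d A q δ
  have hδ0 : 0 ≤ δ := by rw [hδ]; linarith
  have hAnn : 0 ≤ A := by
    rw [hA]
    apply div_nonneg _ (pow_nonneg hε.le n)
    have a1 : (0:ℝ) ≤ 2 ^ (p - 2) := Real.rpow_nonneg (by norm_num) _
    have a2 : (0:ℝ) ≤ (2:ℝ) ^ q := Real.rpow_nonneg (by norm_num) _
    have a3 : (0:ℝ) ≤ (n : ℝ) := Nat.cast_nonneg n
    have a4 : (0:ℝ) ≤ (2 * ε) ^ (n - 1) := pow_nonneg (by linarith) _
    positivity
  have hdq0 : 0 ≤ d ^ (1 / q) := Real.rpow_nonneg hd0 _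
  have hεq : 0 < ε ^ (1 / q) := Real.rpow_pos_of_pos hε _
  have term2nonneg : 0 ≤ 2 / ε ^ (1 / q) * M * d ^ (1 / q) := by positivity
  have term1nonneg : 0 ≤ A ^ (1 / q) * M * d ^ (1 / q) := by
    have := Real.rpow_nonneg hAnn (1 / q)
    positivity
  rcases le_or_gt d ε with hcase | hcase
  · -- main case : d ≤ ε
    set W := (volume (ball (0 : EuclideanSpace ℝ (Fin n)) 1)).toReal with hW
    clear_value W
    have hWpos : 0 < W := by
      rw [hW]
      exact ENNReal.toReal_pos (measure_ball_pos _ _ one_pos).ne' measure_ball_lt_top.ne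
    have int21 : IntegrableOn (fun x => |u x - lam₂| ^ (p - 2) * (u x - lam₂)) (ball x₁ ε)
        volume := intPhi hp hu hMae lam₂ x₁ ε
    have int11 : IntegrableOn (fun x => |u x - lam₁| ^ (p - 2) * (u x - lam₁)) (ball x₁ ε)
        volume := intPhi hp hu hMae lam₁ x₁ ε
    have int22 : IntegrableOn (fun x => |u x - lam₂| ^ (p - 2) * (u x - lam₂)) (ball x₂ ε)
        volume := intPhi hp hu hMae lam₂ x₂ ε
    -- lower bound
    have hlow : 2 ^ (2 - p) * δ ^ q * (volume (ball x₁ ε)).toReal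
        ≤ ∫ x in ball x₁ ε, |u x - lam₂| ^ (p - 2) * (u x - lam₂) := by
      have hpt : ∀ x ∈ ball x₁ ε, 2 ^ (2 - p) * δ ^ q
          ≤ |u x - lam₂| ^ (p - 2) * (u x - lam₂) - |u x - lam₁| ^ (p - 2) * (u x - lam₁) := by
        intro x _
        have hk := keyIneq hp (show u x - lam₁ ≤ u x - lam₂ by linarith)
        rw [show (u x - lam₂) - (u x - lam₁) = δ by rw [hδ]; ring] at hk
        rw [hqdef]
        linarith
      have hmono := setIntegral_mono_on
        (integrableOn_const measure_ball_lt_top.ne) (int21.sub int11)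
        measurableSet_ball hpt
      rw [setIntegral_const, smul_eq_mul] at hmono
      simp only [Pi.sub_apply] at hmono
      rw [integral_sub int21 int11, h1, sub_zero] at hmono
      rw [mul_comm]
      exact hmono
    -- splitting
    have hsplit : (∫ x in ball x₁ ε, |u x - lam₂| ^ (p - 2) * (u x - lam₂))
        = (∫ x in ball x₁ ε \ ball x₂ ε, |u x - lam₂| ^ (p - 2) * (u x - lam₂))
          - ∫ x in ball x₂ ε \ ball x₁ ε, |u x - lam₂| ^ (p - 2) * (u x - lam₂) := by
      have e1 := integral_inter_add_diff (s := ball x₁ ε) (t := ball x₂ ε)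
        measurableSet_ball int21
      have e2 := integral_inter_add_diff (s := ball x₂ ε) (t := ball x₁ ε)
        measurableSet_ball int22
      rw [inter_comm (ball x₂ ε) (ball x₁ ε)] at e2
      rw [h2] at e2
      linarith
    -- a.e. bound
    have hbound : ∀ᵐ x ∂(volume : Measure (EuclideanSpace ℝ (Fin n))),
        ‖|u x - lam₂| ^ (p - 2) * (u x - lam₂)‖ ≤ (M + M) ^ q := by
      filter_upwards [hMae] with x hx
      rw [hqdef]
      apply phiNormLe hp
      calc |u x - lam₂| ≤ |u x| + |lam₂| := abs_sub (u x) lam₂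
        _ ≤ M + M := by linarith
    have hK0 : (0:ℝ) ≤ (M + M) ^ q := Real.rpow_nonneg (by linarith) _
    -- measure of differences
    have hdm1 : (volume (ball x₁ ε \ ball x₂ ε)).toReal ≤ ((ε + d) ^ n - ε ^ n) * W := by
      have hsub : ball x₁ ε \ ball x₂ ε ⊆ ball x₂ (ε + d) \ ball x₂ ε := by
        rintro y ⟨hy1, hy2⟩
        refine ⟨?_, hy2⟩
        rw [mem_ball] at hy1 ⊢
        calc dist y x₂ ≤ dist y x₁ + dist x₁ x₂ := dist_triangle _ _ _
          _ < ε + d := by rw [hd]; linarith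
      calc (volume (ball x₁ ε \ ball x₂ ε)).toReal
          ≤ (volume (ball x₂ (ε + d) \ ball x₂ ε)).toReal :=
            ENNReal.toReal_mono
              ((measure_mono diff_subset).trans_lt measure_ball_lt_top).ne
              (measure_mono hsub)
        _ = (volume (ball x₂ (ε + d))).toReal - (volume (ball x₂ ε)).toReal := by
            rw [measure_diff (ball_subset_ball (by linarith))
              measurableSet_ball.nullMeasurableSet measure_ball_lt_top.ne,
              ENNReal.toReal_sub_of_le (measure_mono (ball_subset_ball (by linarith)))
                measure_ball_lt_top.ne]
        _ = ((ε + d) ^ n - ε ^ n) * W := by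
            rw [ballVol x₂ (by linarith : (0:ℝ) < ε + d), ballVol x₂ hε, hW]; ring
    have hdm2 : (volume (ball x₂ ε \ ball x₁ ε)).toReal ≤ ((ε + d) ^ n - ε ^ n) * W := by
      have hsub : ball x₂ ε \ ball x₁ ε ⊆ ball x₁ (ε + d) \ ball x₁ ε := by
        rintro y ⟨hy1, hy2⟩
        refine ⟨?_, hy2⟩
        rw [mem_ball] at hy1 ⊢
        calc dist y x₁ ≤ dist y x₂ + dist x₂ x₁ := dist_triangle _ _ _
          _ < ε + d := by rw [hd, dist_comm x₁ x₂]; linarith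
      calc (volume (ball x₂ ε \ ball x₁ ε)).toReal
          ≤ (volume (ball x₁ (ε + d) \ ball x₁ ε)).toReal :=
            ENNReal.toReal_mono
              ((measure_mono diff_subset).trans_lt measure_ball_lt_top).ne
              (measure_mono hsub)
        _ = (volume (ball x₁ (ε + d))).toReal - (volume (ball x₁ ε)).toReal := by
            rw [measure_diff (ball_subset_ball (by linarith))
              measurableSet_ball.nullMeasurableSet measure_ball_lt_top.ne,
              ENNReal.toReal_sub_of_le (measure_mono (ball_subset_ball (by linarith)))
                measure_ball_lt_top.ne]
        _ = ((ε + d) ^ n - ε ^ n) * W := by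
            rw [ballVol x₁ (by linarith : (0:ℝ) < ε + d), ballVol x₁ hε, hW]; ring
    -- upper bound
    have hub2 : (∫ x in ball x₁ ε, |u x - lam₂| ^ (p - 2) * (u x - lam₂))
        ≤ (M + M) ^ q * (2 * (((ε + d) ^ n - ε ^ n) * W)) := by
      rw [hsplit]
      have n1 := norm_setIntegral_le_of_norm_le_const_ae (μ := volume)
        (s := ball x₁ ε \ ball x₂ ε)
        (f := fun x => |u x - lam₂| ^ (p - 2) * (u x - lam₂))
        ((measure_mono diff_subset).trans_lt measure_ball_lt_top)
        (ae_restrict_of_ae hbound)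
      have n2 := norm_setIntegral_le_of_norm_le_const_ae (μ := volume)
        (s := ball x₂ ε \ ball x₁ ε)
        (f := fun x => |u x - lam₂| ^ (p - 2) * (u x - lam₂))
        ((measure_mono diff_subset).trans_lt measure_ball_lt_top)
        (ae_restrict_of_ae hbound)
      rw [Real.norm_eq_abs] at n1 n2
      have b1 := mul_le_mul_of_nonneg_left hdm1 hK0
      have b2 := mul_le_mul_of_nonneg_left hdm2 hK0
      have r1 : (∫ x in ball x₁ ε \ ball x₂ ε, |u x - lam₂| ^ (p - 2) * (u x - lam₂))
          ≤ (M + M) ^ q * (volume (ball x₁ ε \ ball x₂ ε)).toReal :=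
        (le_abs_self _).trans n1
      have r2 : -(∫ x in ball x₂ ε \ ball x₁ ε, |u x - lam₂| ^ (p - 2) * (u x - lam₂))
          ≤ (M + M) ^ q * (volume (ball x₂ ε \ ball x₁ ε)).toReal :=
        (neg_le_abs _).trans n2
      linarith
    -- combine
    have hvolB1 : (volume (ball x₁ ε)).toReal = ε ^ n * W := by rw [ballVol x₁ hε, hW]
    have main1 : 2 ^ (2 - p) * δ ^ q * (ε ^ n * W)
        ≤ (M + M) ^ q * (2 * (((ε + d) ^ n - ε ^ n) * W)) := by
      rw [← hvolB1]
      exact hlow.trans hub2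
    have hpd : (ε + d) ^ n - ε ^ n ≤ (n : ℝ) * (2 * ε) ^ (n - 1) * d := by
      have hh1 := powDiffLe n hε.le (by linarith : ε ≤ ε + d)
      have hh2 : (ε + d) ^ (n - 1) ≤ (2 * ε) ^ (n - 1) :=
        pow_le_pow_left₀ (by linarith) (by linarith) _
      calc (ε + d) ^ n - ε ^ n ≤ (n : ℝ) * (ε + d) ^ (n - 1) * (ε + d - ε) := hh1
        _ = (n : ℝ) * (ε + d) ^ (n - 1) * d := by ring
        _ ≤ (n : ℝ) * (2 * ε) ^ (n - 1) * d := by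
            apply mul_le_mul_of_nonneg_right
              (mul_le_mul_of_nonneg_left hh2 (Nat.cast_nonneg n)) hd0
    have main2 : 2 ^ (2 - p) * δ ^ q * (ε ^ n * W)
        ≤ (M + M) ^ q * (2 * (((n : ℝ) * (2 * ε) ^ (n - 1) * d) * W)) := by
      refine main1.trans (mul_le_mul_of_nonneg_left ?_ hK0)
      have := mul_le_mul_of_nonneg_right hpd hWpos.le
      linarith
    have main3 : 2 ^ (2 - p) * δ ^ q * ε ^ n
        ≤ (M + M) ^ q * (2 * ((n : ℝ) * (2 * ε) ^ (n - 1) * d)) := by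
      have e1 : 2 ^ (2 - p) * δ ^ q * (ε ^ n * W) = (2 ^ (2 - p) * δ ^ q * ε ^ n) * W := by ring
      have e2 : (M + M) ^ q * (2 * (((n : ℝ) * (2 * ε) ^ (n - 1) * d) * W))
          = ((M + M) ^ q * (2 * ((n : ℝ) * (2 * ε) ^ (n - 1) * d))) * W := by ring
      rw [e1, e2] at main2
      exact le_of_mul_le_mul_right main2 hWpos
    have hMM : (M + M) ^ q = 2 ^ q * M ^ q := by
      rw [show M + M = 2 * M by ring, Real.mul_rpow (by norm_num) hM0]
    have hc2 : (2:ℝ) ^ (p - 2) * 2 ^ (2 - p) = 1 := by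
      rw [← Real.rpow_add two_pos, show p - 2 + (2 - p) = 0 by ring, Real.rpow_zero]
    have c2pos : (0:ℝ) < 2 ^ (p - 2) := Real.rpow_pos_of_pos two_pos _
    rw [hMM] at main3
    have hεn : (0:ℝ) < ε ^ n := pow_pos hε n
    have target : δ ^ q * ε ^ n
        ≤ 2 ^ (p - 2) * 2 ^ q * 2 * (n : ℝ) * (2 * ε) ^ (n - 1) * (M ^ q * d) := by
      have step := mul_le_mul_of_nonneg_left main3 c2pos.le
      calc δ ^ q * ε ^ n = (2 ^ (p - 2) * 2 ^ (2 - p)) * (δ ^ q * ε ^ n) := by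
            rw [hc2, one_mul]
        _ = 2 ^ (p - 2) * (2 ^ (2 - p) * δ ^ q * ε ^ n) := by ring
        _ ≤ 2 ^ (p - 2) * (2 ^ q * M ^ q * (2 * ((n : ℝ) * (2 * ε) ^ (n - 1) * d))) := step
        _ = 2 ^ (p - 2) * 2 ^ q * 2 * (n : ℝ) * (2 * ε) ^ (n - 1) * (M ^ q * d) := by ring
    have hδq : δ ^ q ≤ A * M ^ q * d := by
      have hdiv : δ ^ q ≤ 2 ^ (p - 2) * 2 ^ q * 2 * (n : ℝ) * (2 * ε) ^ (n - 1)
          * (M ^ q * d) / ε ^ n := by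
        rw [le_div_iff₀ hεn]
        exact target
      calc δ ^ q ≤ 2 ^ (p - 2) * 2 ^ q * 2 * (n : ℝ) * (2 * ε) ^ (n - 1)
            * (M ^ q * d) / ε ^ n := hdiv
        _ = A * M ^ q * d := by rw [hA]; ring
    have final1 : δ ≤ (A * M ^ q * d) ^ (1 / q) := by
      have l : δ = (δ ^ q) ^ (1 / q) := by
        conv_lhs => rw [← Real.rpow_one δ, ← mul_one_div_cancel hq0.ne', Real.rpow_mul hδ0]
      rw [l]
      exact Real.rpow_le_rpow (Real.rpow_nonneg hδ0 q) hδq hiq0.le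
    have final2 : (A * M ^ q * d) ^ (1 / q) = A ^ (1 / q) * M * d ^ (1 / q) := by
      rw [Real.mul_rpow (mul_nonneg hAnn (Real.rpow_nonneg hM0 q)) hd0,
        Real.mul_rpow hAnn (Real.rpow_nonneg hM0 q),
        ← Real.rpow_mul hM0, mul_one_div_cancel hq0.ne', Real.rpow_one]
    rw [final2] at final1
    have expand : (A ^ (1 / q) + 2 / ε ^ (1 / q)) * M * d ^ (1 / q)
        = A ^ (1 / q) * M * d ^ (1 / q) + 2 / ε ^ (1 / q) * M * d ^ (1 / q) := by ring
    rw [expand]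
    linarith
  · -- easy case : ε < d
    have hδ2M : δ ≤ 2 * M := by
      rw [hδ]
      have := abs_le.mp hl1
      have := abs_le.mp hl2
      linarith [(abs_le.mp hl1).2, (abs_le.mp hl2).1]
    have he : ε ^ (1 / q) ≤ d ^ (1 / q) := Real.rpow_le_rpow hε.le hcase.le hiq0.le
    have h2M : 2 * M ≤ 2 / ε ^ (1 / q) * M * d ^ (1 / q) := by
      have step : 2 / ε ^ (1 / q) * M * ε ^ (1 / q) ≤ 2 / ε ^ (1 / q) * M * d ^ (1 / q) := by
        apply mul_le_mul_of_nonneg_left he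
        positivity
      have eq1 : 2 / ε ^ (1 / q) * M * ε ^ (1 / q) = 2 * M := by
        field_simp
      linarith
    have expand : (A ^ (1 / q) + 2 / ε ^ (1 / q)) * M * d ^ (1 / q)
        = A ^ (1 / q) * M * d ^ (1 / q) + 2 / ε ^ (1 / q) * M * d ^ (1 / q) := by ring
    rw [expand]
    linarith

/-- Hölder continuity (with exponent `1/(p-1)`) of the `p`-average over balls of radius `ε`,
for `p > 2`: if `λᵢ` is the `p`-average of a bounded measurable `u` over `B_ε(xᵢ)`
(characterized by `∫_{B_ε(xᵢ)} |u - λᵢ|^{p-2}(u - λᵢ) = 0`), then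
`|λ₁ - λ₂| ≤ C ‖u‖_∞ |x₁ - x₂|^{1/(p-1)}`. -/
theorem pAverage_holder (n : ℕ) (hn : 1 ≤ n) (p ε : ℝ) (hp : 2 < p) (hε : 0 < ε) :
    ∃ C > 0, ∀ u : EuclideanSpace ℝ (Fin n) → ℝ, Measurable u →
      eLpNorm u ⊤ volume < ⊤ →
      ∀ x₁ x₂ : EuclideanSpace ℝ (Fin n), ∀ lam₁ lam₂ : ℝ,
        (∫ x in Metric.ball x₁ ε, |u x - lam₁| ^ (p - 2) * (u x - lam₁)) = 0 →
        (∫ x in Metric.ball x₂ ε, |u x - lam₂| ^ (p - 2) * (u x - lam₂)) = 0 →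
        |lam₁ - lam₂| ≤ C * (eLpNorm u ⊤ volume).toReal * dist x₁ x₂ ^ (1 / (p - 1)) := by
  set C : ℝ := (2 ^ (p - 2) * 2 ^ (p - 1) * 2 * (n : ℝ) * (2 * ε) ^ (n - 1) / ε ^ n)
      ^ (1 / (p - 1)) + 2 / ε ^ (1 / (p - 1)) with hC
  have hq : 0 < 1 / (p - 1) := by
    have : 0 < p - 1 := by linarith
    positivity
  have hbase : (0:ℝ) ≤ 2 ^ (p - 2) * 2 ^ (p - 1) * 2 * (n : ℝ) * (2 * ε) ^ (n - 1) / ε ^ n := by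
    apply div_nonneg _ (pow_nonneg hε.le n)
    have a1 : (0:ℝ) ≤ 2 ^ (p - 2) := Real.rpow_nonneg (by norm_num) _
    have a2 : (0:ℝ) ≤ 2 ^ (p - 1) := Real.rpow_nonneg (by norm_num) _
    have a3 : (0:ℝ) ≤ (n : ℝ) := Nat.cast_nonneg n
    have a4 : (0:ℝ) ≤ (2 * ε) ^ (n - 1) := pow_nonneg (by linarith) _
    positivity
  have hCpos : 0 < C := by
    rw [hC]
    have h2 : 0 < 2 / ε ^ (1 / (p - 1)) := by
      apply div_pos two_pos (Real.rpow_pos_of_pos hε _)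
    have h1 : 0 ≤ (2 ^ (p - 2) * 2 ^ (p - 1) * 2 * (n : ℝ) * (2 * ε) ^ (n - 1) / ε ^ n)
        ^ (1 / (p - 1)) := Real.rpow_nonneg hbase _
    linarith
  refine ⟨C, hCpos, fun u hu hub x₁ x₂ lam₁ lam₂ hi1 hi2 => ?_⟩
  set M : ℝ := (eLpNorm u ⊤ volume).toReal with hM
  have hM0 : 0 ≤ M := ENNReal.toReal_nonneg
  have hMae : ∀ᵐ x ∂(volume : Measure (EuclideanSpace ℝ (Fin n))), |u x| ≤ M := by
    filter_upwards [ae_le_eLpNormEssSup (f := u)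
      (μ := (volume : Measure (EuclideanSpace ℝ (Fin n))))] with x hx
    rw [← eLpNorm_exponent_top (f := u)
      (μ := (volume : Measure (EuclideanSpace ℝ (Fin n))))] at hx
    have := ENNReal.toReal_mono hub.ne hx
    simpa [Real.norm_eq_abs, hM, eLpNorm_exponent_top] using this
  rcases le_total lam₂ lam₁ with hl | hl
  · have := mainAux n hn p ε hp hε u hu hM0 hMae x₁ x₂ lam₁ lam₂ hl hi1 hi2
    rwa [abs_of_nonneg (by linarith)]
  · have := mainAux n hn p ε hp hε u hu hM0 hMae x₂ x₁ lam₂ lam₁ hl hi2 hi1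
    rw [abs_of_nonpos (by linarith), dist_comm x₁ x₂]
    linarith
end

section
/- Let X be a compact topological space equipped with a positive finite Borel measure ν with ν(X) > 0, let 1 < p < ∞, and let φ, ψ : X → ℝ be continuous with φ(y) ≤ ψ(y) for all y ∈ X. Then A_p(φ) ≤ A_p(ψ). Moreover, if in addition φ(y) < ψ(y) holds on a set of positive ν-measure, then A_p(φ) < A_p(ψ). -/
open MeasureTheory Real Metric

/-- the "signed power" function `t ↦ sign t * |t|^(p-1)`. -/
noncomputable def qf (p t : ℝ) : ℝ := (max t 0) ^ (p - 1) - (max (-t) 0) ^ (p - 1)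

lemma qf_of_nonneg {p t : ℝ} (hp : 1 < p) (ht : 0 ≤ t) : qf p t = t ^ (p - 1) := by
  have h1 : max t 0 = t := max_eq_left ht
  have h2 : max (-t) 0 = 0 := max_eq_right (by linarith)
  simp [qf, h1, h2, Real.zero_rpow (by linarith : p - 1 ≠ 0)]

lemma qf_of_neg {p t : ℝ} (hp : 1 < p) (ht : t < 0) : qf p t = -((-t) ^ (p - 1)) := by
  have h1 : max t 0 = 0 := max_eq_right ht.le
  have h2 : max (-t) 0 = -t := max_eq_left (by linarith)
  simp [qf, h1, h2, Real.zero_rpow (by linarith : p - 1 ≠ 0)]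

lemma qf_eq {p : ℝ} (hp : 1 < p) (t : ℝ) : qf p t = |t| ^ (p - 2) * t := by
  rcases lt_trichotomy t 0 with ht | rfl | ht
  · rw [qf_of_neg hp ht, abs_of_neg ht]
    have : (-t) ^ (p - 1) = (-t) ^ (p - 2) * (-t) := by
      rw [← Real.rpow_add_one (by linarith : (-t) ≠ 0)]; ring_nf
    rw [this]; ring
  · rw [qf_of_nonneg hp le_rfl, Real.zero_rpow (by linarith : p - 1 ≠ 0)]
    simp
  · rw [qf_of_nonneg hp ht.le, abs_of_pos ht,
      ← Real.rpow_add_one (ne_of_gt ht)]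
    ring_nf

lemma qf_strictMono {p : ℝ} (hp : 1 < p) : StrictMono (qf p) := by
  intro t s hts
  have hp1 : (0:ℝ) < p - 1 := by linarith
  rcases le_or_gt 0 t with ht | ht
  · rw [qf_of_nonneg hp ht, qf_of_nonneg hp (le_trans ht hts.le)]
    exact Real.rpow_lt_rpow ht hts hp1
  · rw [qf_of_neg hp ht]
    rcases le_or_gt 0 s with hs | hs
    · rw [qf_of_nonneg hp hs]
      have h1 : (0:ℝ) < (-t) ^ (p - 1) := Real.rpow_pos_of_pos (by linarith) _
      have h2 : (0:ℝ) ≤ s ^ (p - 1) := Real.rpow_nonneg hs _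
      linarith
    · rw [qf_of_neg hp hs]
      have : (-s) ^ (p - 1) < (-t) ^ (p - 1) :=
        Real.rpow_lt_rpow (by linarith) (by linarith) hp1
      linarith

lemma qf_abs_le {p t : ℝ} (hp : 1 < p) : |qf p t| ≤ |t| ^ (p - 1) := by
  rcases le_or_gt 0 t with ht | ht
  · rw [qf_of_nonneg hp ht, abs_of_nonneg ht, abs_of_nonneg (Real.rpow_nonneg ht _)]
  · rw [qf_of_neg hp ht, abs_of_neg ht, abs_neg,
      abs_of_nonneg (Real.rpow_nonneg (by linarith : (0:ℝ) ≤ -t) _)]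

lemma qf_continuous {p : ℝ} (hp : 1 < p) : Continuous (qf p) := by
  have hc : ∀ g : ℝ → ℝ, Continuous g → Continuous fun t => (g t) ^ (p - 1) := by
    intro g hg
    rw [continuous_iff_continuousAt]
    intro t
    exact (Real.continuousAt_rpow_const (g t) (p - 1) (Or.inr (by linarith))).comp hg.continuousAt
  exact (hc _ (continuous_id.max continuous_const)).sub
    (hc _ (continuous_neg.max continuous_const))

lemma hasDerivAt_qf {p : ℝ} (hp : 1 < p) (t : ℝ) :
    HasDerivAt (fun s : ℝ => |s| ^ p) (p * qf p t) t := by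
  have h := hasDerivAt_abs_rpow t hp
  rw [qf_eq hp t]
  convert h using 1
  ring

section Main
variable {X : Type*} [TopologicalSpace X] [CompactSpace X] [MeasurableSpace X] [BorelSpace X]

lemma cont_integrable (ν : Measure X) [IsFiniteMeasure ν] {g : X → ℝ} (hg : Continuous g) :
    Integrable g ν :=
  hg.integrable_of_hasCompactSupport (HasCompactSupport.of_compactSpace g)


lemma firstOrder (ν : Measure X) [IsFiniteMeasure ν] {p : ℝ} (hp : 1 < p)
    {f : X → ℝ} (hf : Continuous f) (a : ℝ)
    (hmin : ∀ μ : ℝ, (∫ y, |f y - a| ^ p ∂ν) ≤ ∫ y, |f y - μ| ^ p ∂ν) :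
    ∫ y, qf p (f y - a) ∂ν = 0 := by
  obtain ⟨M, hM⟩ := isCompact_univ.exists_bound_of_continuousOn (f := f) hf.continuousOn
  set R : ℝ := M + |a| + 1 with hR
  have hcont : ∀ lam : ℝ, Continuous fun y => |f y - lam| ^ p := by
    intro lam
    exact ((hf.sub continuous_const).abs).rpow_const fun y => Or.inr (by linarith)
  have hcont' : ∀ lam : ℝ, Continuous fun y => p * qf p (f y - lam) * (-1) := by
    intro lam
    exact (continuous_const.mul ((qf_continuous hp).comp (hf.sub continuous_const))).mul
      continuous_const
  have key := hasDerivAt_integral_of_dominated_loc_of_deriv_le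
    (F := fun lam (y : X) => |f y - lam| ^ p)
    (F' := fun lam (y : X) => p * qf p (f y - lam) * (-1))
    (x₀ := a) (bound := fun _ => p * R ^ (p - 1)) (μ := ν) (s := Metric.ball a 1)
    (Metric.ball_mem_nhds a one_pos)
    (Filter.Eventually.of_forall fun lam => (hcont lam).aestronglyMeasurable)
    (cont_integrable ν (hcont a))
    ((hcont' a).aestronglyMeasurable)
    (Filter.Eventually.of_forall fun y => by
      intro lam hlam
      have h1 : |f y - lam| ≤ R := by
        have h2 : |lam - a| < 1 := by simpa [Real.dist_eq] using hlam
        have h3 : |f y| ≤ M := hM y (Set.mem_univ y)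
        calc |f y - lam| ≤ |f y| + |lam| := abs_sub _ _
          _ ≤ M + (|a| + 1) := by
              have : |lam| ≤ |a| + |lam - a| := by
                calc |lam| = |a + (lam - a)| := by ring_nf
                  _ ≤ |a| + |lam - a| := abs_add_le _ _
              linarith
          _ = R := by ring
      have : ‖p * qf p (f y - lam) * (-1)‖ = p * |qf p (f y - lam)| := by
        rw [Real.norm_eq_abs, abs_mul, abs_mul, abs_neg, abs_one, mul_one,
          abs_of_pos (by linarith : (0:ℝ) < p)]
      rw [this]
      have h4 : |qf p (f y - lam)| ≤ |f y - lam| ^ (p - 1) := qf_abs_le hp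
      have h5 : |f y - lam| ^ (p - 1) ≤ R ^ (p - 1) :=
        Real.rpow_le_rpow (abs_nonneg _) h1 (by linarith)
      calc p * |qf p (f y - lam)| ≤ p * (R ^ (p - 1)) :=
            mul_le_mul_of_nonneg_left (h4.trans h5) (by linarith)
        _ = p * R ^ (p - 1) := rfl)
    (integrable_const _)
    (Filter.Eventually.of_forall fun y => by
      intro lam _
      have h1 : HasDerivAt (fun lam : ℝ => f y - lam) (-1) lam := by
        simpa using (hasDerivAt_id lam).const_sub (f y)
      exact (hasDerivAt_qf hp (f y - lam)).comp lam h1)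
  have hloc : IsLocalMin (fun lam => ∫ y, |f y - lam| ^ p ∂ν) a :=
    Filter.Eventually.of_forall fun μ => hmin μ
  have hz := hloc.hasDerivAt_eq_zero key.2
  have : ∫ y, p * qf p (f y - a) * (-1) ∂ν = (-p) * ∫ y, qf p (f y - a) ∂ν := by
    rw [show (fun y => p * qf p (f y - a) * (-1)) = fun y => (-p) • qf p (f y - a) by
      funext y; simp only [smul_eq_mul]; ring]
    rw [integral_smul]
    simp [smul_eq_mul]
  rw [this] at hz
  have hp0 : (-p) ≠ 0 := by linarith
  exact (mul_eq_zero.mp hz).resolve_left hp0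


end Main

/-- Monotonicity of the `p`-average: if `φ ≤ ψ` pointwise then `A_p(φ) ≤ A_p(ψ)`; if in
addition `φ < ψ` on a set of positive measure then `A_p(φ) < A_p(ψ)`. Here `a` and `b` are
the `p`-averages of `φ` and `ψ`, i.e. the minimizers of `λ ↦ ∫ |· - λ|^p dν`. -/
theorem pAverage_monotone {X : Type*} [TopologicalSpace X] [CompactSpace X]
    [MeasurableSpace X] [BorelSpace X]
    (ν : Measure X) [IsFiniteMeasure ν] (hν : 0 < ν Set.univ)
    (p : ℝ) (hp : 1 < p)
    (φ ψ : X → ℝ) (hφ : Continuous φ) (hψ : Continuous ψ)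
    (hle : ∀ y, φ y ≤ ψ y)
    (a b : ℝ)
    (ha : ∀ μ : ℝ, (∫ y, |φ y - a| ^ p ∂ν) ≤ ∫ y, |φ y - μ| ^ p ∂ν)
    (hb : ∀ μ : ℝ, (∫ y, |ψ y - b| ^ p ∂ν) ≤ ∫ y, |ψ y - μ| ^ p ∂ν) :
    a ≤ b ∧ (0 < ν {y | φ y < ψ y} → a < b) := by
  have hIφ : ∫ y, qf p (φ y - a) ∂ν = 0 := firstOrder ν hp hφ a ha
  have hIψ : ∫ y, qf p (ψ y - b) ∂ν = 0 := firstOrder ν hp hψ b hb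
  have hint : ∀ (g : X → ℝ), Continuous g → ∀ c : ℝ,
      Integrable (fun y => qf p (g y - c)) ν := fun g hg c =>
    cont_integrable ν ((qf_continuous hp).comp (hg.sub continuous_const))
  have hstrict : ∀ (u v : X → ℝ), Continuous u → Continuous v →
      (∀ y, u y ≤ v y) → 0 < ν {y | u y < v y} →
      (∫ y, qf p (u y) ∂ν) < ∫ y, qf p (v y) ∂ν := by
    intro u v hu hv huv hpos
    have hiu : Integrable (fun y => qf p (u y)) ν :=
      cont_integrable ν ((qf_continuous hp).comp hu)
    have hiv : Integrable (fun y => qf p (v y)) ν :=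
      cont_integrable ν ((qf_continuous hp).comp hv)
    have hnn : ∀ y, 0 ≤ qf p (v y) - qf p (u y) := fun y =>
      sub_nonneg.mpr ((qf_strictMono hp).monotone (huv y))
    have hsub : {y | u y < v y} ⊆ Function.support fun y => qf p (v y) - qf p (u y) := by
      intro y hy
      exact ne_of_gt (sub_pos.mpr (qf_strictMono hp hy))
    have hposI : 0 < ∫ y, (qf p (v y) - qf p (u y)) ∂ν := by
      rw [integral_pos_iff_support_of_nonneg hnn (hiv.sub hiu)]
      exact lt_of_lt_of_le hpos (measure_mono hsub)
    have := integral_sub hiv hiu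
    rw [this] at hposI
    linarith
  have hmono : ∀ (u v : X → ℝ), Continuous u → Continuous v → (∀ y, u y ≤ v y) →
      (∫ y, qf p (u y) ∂ν) ≤ ∫ y, qf p (v y) ∂ν := by
    intro u v hu hv huv
    exact integral_mono (cont_integrable ν ((qf_continuous hp).comp hu))
      (cont_integrable ν ((qf_continuous hp).comp hv))
      fun y => (qf_strictMono hp).monotone (huv y)
  constructor
  · by_contra h
    push_neg at h
    have h1 : (∫ y, qf p (φ y - a) ∂ν) ≤ ∫ y, qf p (ψ y - a) ∂ν :=
      hmono _ _ (hφ.sub continuous_const) (hψ.sub continuous_const)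
        fun y => by linarith [hle y]
    have h2 : (∫ y, qf p (ψ y - a) ∂ν) < ∫ y, qf p (ψ y - b) ∂ν := by
      apply hstrict (fun y => ψ y - a) (fun y => ψ y - b) (hψ.sub continuous_const) (hψ.sub continuous_const)
        (fun y => by linarith) _
      have : {y : X | ψ y - a < ψ y - b} = Set.univ := by
        ext y; simp only [Set.mem_setOf_eq, Set.mem_univ, iff_true]; linarith
      rw [this]; exact hν
    linarith
  · intro hposset
    by_contra h
    push_neg at h
    have h1 : (∫ y, qf p (φ y - a) ∂ν) < ∫ y, qf p (ψ y - a) ∂ν := by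
      apply hstrict (fun y => φ y - a) (fun y => ψ y - a) (hφ.sub continuous_const) (hψ.sub continuous_const)
        (fun y => by linarith [hle y]) _
      have : {y : X | φ y - a < ψ y - a} = {y | φ y < ψ y} := by
        ext y; simp only [Set.mem_setOf_eq]; constructor <;> intro <;> linarith
      rw [this]; exact hposset
    have h2 : (∫ y, qf p (ψ y - a) ∂ν) ≤ ∫ y, qf p (ψ y - b) ∂ν :=
      hmono _ _ (hψ.sub continuous_const) (hψ.sub continuous_const)
        fun y => by linarith
    linarith
end

section
/- Let k ≥ 1 and α ∈ ℝ, and for j = 0, 1, …, 2k+1 let η_j = (cos(α + 2πj/(2k+2)), sin(α + 2πj/(2k+2))) ∈ ℝ² be 2k+2 equally spaced unit vectors. Then for every unit vector u ∈ ℝ² and every symmetric 2×2 real matrix A, Σ_{j=0}^{2k+1} ⟨u, η_j⟩^{2k−2} > 0 and ( Σ_{j=0}^{2k+1} ⟨u, η_j⟩^{2k−2} ⟨A η_j, η_j⟩ ) / ( Σ_{j=0}^{2k+1} ⟨u, η_j⟩^{2k−2} ) = (1/(2k))·tr(A) + ((2k−2)/(2k))·⟨A u, u⟩. -/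
open Matrix Complex Finset

lemma exp_sum_zero (n : ℕ) (t : ℤ) (ht : t.natAbs < n) (β : ℝ) :
    ∑ j ∈ Finset.range n, Complex.exp ((t : ℂ) * (β + 2 * Real.pi * j / n) * Complex.I)
      = if t = 0 then (n : ℂ) else 0 := by
  rcases eq_or_ne t 0 with rfl | ht0
  · simp
  · rw [if_neg ht0]
    have hn : 0 < n := lt_of_le_of_lt (Nat.zero_le _) ht
    have hn0 : (n : ℂ) ≠ 0 := by exact_mod_cast hn.ne'
    have hstep : ∀ j : ℕ, Complex.exp ((t : ℂ) * (β + 2 * Real.pi * j / n) * Complex.I)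
        = Complex.exp ((t : ℂ) * β * Complex.I) *
          (Complex.exp ((t : ℂ) * (2 * Real.pi) / n * Complex.I)) ^ j := by
      intro j
      rw [← Complex.exp_nat_mul, ← Complex.exp_add]
      congr 1
      field_simp
    simp only [hstep]
    rw [← Finset.mul_sum]
    set ζ : ℂ := Complex.exp ((t : ℂ) * (2 * Real.pi) / n * Complex.I) with hζ
    have hπI : (2 : ℂ) * Real.pi * Complex.I ≠ 0 := by
      simp [Complex.I_ne_zero, Complex.ofReal_ne_zero, Real.pi_ne_zero]
    have hζ1 : ζ ≠ 1 := by
      intro h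
      rw [hζ, Complex.exp_eq_one_iff] at h
      obtain ⟨m, hm⟩ := h
      have key : (t : ℂ) = (m : ℂ) * n := by
        have h2 : (t : ℂ) * (2 * Real.pi * Complex.I) = (m : ℂ) * n * (2 * Real.pi * Complex.I) := by
          field_simp at hm
          linear_combination (2 * (Real.pi:ℂ) * Complex.I) * hm
        exact mul_right_cancel₀ hπI h2
      have keyz : t = m * n := by exact_mod_cast key
      rcases eq_or_ne m 0 with rfl | hm0
      · simp at keyz; exact ht0 keyz
      · have : (n : ℤ).natAbs ≤ t.natAbs := by
          rw [keyz, Int.natAbs_mul]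
          calc (n:ℤ).natAbs = 1 * (n:ℤ).natAbs := (one_mul _).symm
          _ ≤ m.natAbs * (n:ℤ).natAbs := by
              exact Nat.mul_le_mul_right _ (Int.one_le_abs (by exact_mod_cast hm0) |>.trans_eq rfl |> fun h => by omega)
        simp [Int.natAbs_natCast] at this
        omega
    have hζn : ζ ^ n = 1 := by
      rw [hζ, ← Complex.exp_nat_mul]
      have : (n : ℂ) * ((t : ℂ) * (2 * Real.pi) / n * Complex.I) = (t : ℂ) * (2 * Real.pi * Complex.I) := by
        field_simp
      rw [this]
      exact_mod_cast Complex.exp_int_mul_two_pi_mul_I t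
    rw [geom_sum_eq hζ1, hζn]
    simp

lemma cos_pow_sum (n p : ℕ) (hp : p < n) (β : ℝ) :
    ∑ j ∈ Finset.range n, Real.cos (β + 2 * Real.pi * j / n) ^ p
      = if 2 ∣ p then (n : ℝ) * (p.choose (p / 2)) / 2 ^ p else 0 := by
  have key : ∀ x : ℝ, (Real.cos x : ℂ) ^ p
      = (∑ r ∈ Finset.range (p + 1),
          Complex.exp ((((2 * r : ℤ) - p) : ℂ) * x * Complex.I) * (p.choose r)) / 2 ^ p := by
    intro x
    have hc : (Real.cos x : ℂ) = (Complex.exp (x * Complex.I) + Complex.exp (-x * Complex.I)) / 2 := by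
      rw [Complex.ofReal_cos, Complex.cos]
    rw [hc, div_pow, add_pow]
    congr 1
    refine Finset.sum_congr rfl (fun r hr => ?_)
    simp only [Finset.mem_range] at hr
    have hr' : r ≤ p := Nat.lt_succ_iff.mp hr
    rw [← Complex.exp_nat_mul, ← Complex.exp_nat_mul, ← Complex.exp_add]
    congr 2
    have : ((p - r : ℕ) : ℂ) = (p : ℂ) - r := by
      push_cast [hr']; ring
    rw [this]
    push_cast
    ring
  apply Complex.ofReal_injective
  rw [Complex.ofReal_sum]
  simp only [Complex.ofReal_pow]
  calc (∑ j ∈ Finset.range n, ((Real.cos (β + 2 * Real.pi * j / n) : ℝ) : ℂ) ^ p)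
      = ∑ j ∈ Finset.range n, (∑ r ∈ Finset.range (p + 1),
          Complex.exp ((((2 * r : ℤ) - p) : ℂ) * (β + 2 * Real.pi * j / n) * Complex.I) * (p.choose r)) / 2 ^ p := by
        refine Finset.sum_congr rfl (fun j _ => ?_)
        rw [key]
        push_cast
        ring
    _ = (∑ r ∈ Finset.range (p + 1), (p.choose r : ℂ) *
          ∑ j ∈ Finset.range n, Complex.exp ((((2 * r : ℤ) - p) : ℂ) * (β + 2 * Real.pi * j / n) * Complex.I)) / 2 ^ p := by
        rw [← Finset.sum_div]
        congr 1
        rw [Finset.sum_comm]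
        refine Finset.sum_congr rfl (fun r _ => ?_)
        rw [Finset.mul_sum]
        refine Finset.sum_congr rfl (fun j _ => ?_)
        ring
    _ = (∑ r ∈ Finset.range (p + 1), (p.choose r : ℂ) *
          (if (2 * (r:ℤ) - p) = 0 then (n : ℂ) else 0)) / 2 ^ p := by
        congr 1
        refine Finset.sum_congr rfl (fun r hr => ?_)
        simp only [Finset.mem_range] at hr
        congr 1
        have habs : (2 * (r:ℤ) - p).natAbs < n := by omega
        have h := exp_sum_zero n (2 * r - p) habs β
        push_cast at h ⊢
        exact h
    _ = ((if 2 ∣ p then (n : ℝ) * (p.choose (p / 2)) / 2 ^ p else 0 : ℝ) : ℂ) := by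
        by_cases h2 : 2 ∣ p
        · obtain ⟨q, rfl⟩ := h2
          rw [if_pos ⟨q, rfl⟩]
          rw [Finset.sum_eq_single q]
          · rw [if_pos (by omega)]
            have hq : 2 * q / 2 = q := by omega
            rw [hq]
            push_cast
            ring
          · intro r hr hrq
            rw [if_neg (by omega), mul_zero]
          · intro h; simp at h; omega
        · rw [if_neg h2]
          rw [Finset.sum_eq_zero, zero_div, Complex.ofReal_zero]
          intro r hr
          rw [if_neg (by omega), mul_zero]

lemma cos_pow_sin_sum (n p : ℕ) (hp : p + 1 < n) (β : ℝ) :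
    ∑ j ∈ Finset.range n, Real.cos (β + 2 * Real.pi * j / n) ^ p
        * Real.sin (β + 2 * Real.pi * j / n) = 0 := by
  set C : ℝ := if 2 ∣ (p+1) then (n : ℝ) * ((p+1).choose ((p+1) / 2)) / 2 ^ (p+1) else 0 with hC
  have hconst : (fun b : ℝ => ∑ j ∈ Finset.range n, Real.cos (b + 2 * Real.pi * j / n) ^ (p+1))
      = fun _ => C := by
    funext b
    exact cos_pow_sum n (p+1) hp b
  have hd : HasDerivAt (fun b : ℝ => ∑ j ∈ Finset.range n, Real.cos (b + 2 * Real.pi * j / n) ^ (p+1))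
      (∑ j ∈ Finset.range n, ((p+1 : ℕ) : ℝ) * Real.cos (β + 2 * Real.pi * j / n) ^ p
        * (-Real.sin (β + 2 * Real.pi * j / n))) β := by
    apply HasDerivAt.fun_sum
    intro j _
    have h1 : HasDerivAt (fun b : ℝ => b + 2 * Real.pi * j / n) 1 β := by
      simpa using (hasDerivAt_id β).add_const (2 * Real.pi * j / n)
    have h2 : HasDerivAt (fun b : ℝ => Real.cos (b + 2 * Real.pi * j / n))
        (-Real.sin (β + 2 * Real.pi * j / n) * 1) β :=
      h1.cos
    have h3 := h2.fun_pow (p+1)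
    simpa [mul_comm, mul_assoc, mul_left_comm] using h3
  have hzero : HasDerivAt (fun b : ℝ => ∑ j ∈ Finset.range n, Real.cos (b + 2 * Real.pi * j / n) ^ (p+1))
      0 β := by
    rw [hconst]
    exact hasDerivAt_const β C
  have := hd.unique hzero
  have h4 : ((p+1 : ℕ) : ℝ) * ∑ j ∈ Finset.range n, Real.cos (β + 2 * Real.pi * j / n) ^ p
      * Real.sin (β + 2 * Real.pi * j / n) = 0 := by
    rw [Finset.mul_sum]
    rw [← neg_eq_zero, ← this]
    rw [← Finset.sum_neg_distrib]
    exact Finset.sum_congr rfl (fun j _ => by ring)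
  have hne : ((p+1 : ℕ) : ℝ) ≠ 0 := by positivity
  exact (mul_eq_zero.mp h4).resolve_left hne

lemma central_step (a : ℕ) :
    (2*a+2).choose (a+1) * ((a+1)*(a+1)) = (2*a).choose a * ((2*a+2)*(2*a+1)) := by
  have h1 := Nat.add_one_mul_choose_eq (2*a+1) a
  have h2 := Nat.add_one_mul_choose_eq (2*a) a
  have h3 : (2*a+1).choose a = (2*a+1).choose (a+1) := by
    have := Nat.choose_symm (show a+1 ≤ 2*a+1 by omega)
    rw [show 2*a+1-(a+1) = a by omega] at this
    exact this
  calc (2*a+2).choose (a+1) * ((a+1)*(a+1)) = ((2*a+2).choose (a+1) * (a+1)) * (a+1) := by ring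
    _ = ((2*a+1+1) * (2*a+1).choose a) * (a+1) := by rw [← h1]
    _ = (2*a+2) * ((2*a+1).choose (a+1) * (a+1)) := by rw [h3]; ring
    _ = (2*a+2) * ((2*a+1) * (2*a).choose a) := by rw [← h2]
    _ = (2*a).choose a * ((2*a+2)*(2*a+1)) := by ring

/-- The `2k+2` equally spaced unit vectors of a regular `(2k+2)`-gon form a `2k`-averaging
set in the plane: for every unit vector `u` and symmetric matrix `A`,
`(∑ⱼ ⟨u,ηⱼ⟩^{2k-2} ⟨Aηⱼ,ηⱼ⟩) / (∑ⱼ ⟨u,ηⱼ⟩^{2k-2}) = (1/(2k)) tr A + ((2k-2)/(2k)) ⟨Au,u⟩`. -/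
theorem polygon_averaging_set (k : ℕ) (hk : 1 ≤ k) (α : ℝ)
    (η : ℕ → Fin 2 → ℝ)
    (hη : ∀ j : ℕ, η j =
      ![Real.cos (α + 2 * Real.pi * j / (2 * k + 2)),
        Real.sin (α + 2 * Real.pi * j / (2 * k + 2))])
    (u : Fin 2 → ℝ) (hu : u ⬝ᵥ u = 1)
    (A : Matrix (Fin 2) (Fin 2) ℝ) (hA : A.IsSymm) :
    (0 < ∑ j ∈ Finset.range (2 * k + 2), (u ⬝ᵥ η j) ^ (2 * k - 2)) ∧
    (∑ j ∈ Finset.range (2 * k + 2), (u ⬝ᵥ η j) ^ (2 * k - 2) * (A.mulVec (η j) ⬝ᵥ η j)) /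
        (∑ j ∈ Finset.range (2 * k + 2), (u ⬝ᵥ η j) ^ (2 * k - 2)) =
      (1 / (2 * (k : ℝ))) * Matrix.trace A +
        ((2 * (k : ℝ) - 2) / (2 * (k : ℝ))) * (A.mulVec u ⬝ᵥ u) := by
  obtain ⟨a, rfl⟩ : ∃ a, k = a + 1 := ⟨k - 1, by omega⟩
  clear hk
  simp only [show 2 * (a + 1) - 2 = 2 * a from by omega]
  -- the angle of u
  have hu' : u 0 * u 0 + u 1 * u 1 = 1 := by
    simpa [dotProduct, Fin.sum_univ_two] using hu
  set z : ℂ := ⟨u 0, u 1⟩ with hzdef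
  have hz : ‖z‖ = 1 := by
    rw [Complex.norm_def, Complex.normSq_mk, hu', Real.sqrt_one]
  have hz0 : z ≠ 0 := by
    intro h; rw [h] at hz; simp at hz
  set φ := z.arg with hφ
  have hcos : Real.cos φ = u 0 := by
    rw [hφ, Complex.cos_arg hz0, hz]; simp [hzdef]
  have hsin : Real.sin φ = u 1 := by
    rw [hφ, Complex.sin_arg, hz]; simp [hzdef]
  set β := α - φ with hβ
  set n : ℕ := 2 * (a + 1) + 2 with hn
  have hψ : ∀ j : ℕ, α + 2 * Real.pi * j / (2 * (((a + 1 : ℕ)) : ℝ) + 2)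
      = (β + 2 * Real.pi * j / n) + φ := by
    intro j
    rw [hβ]
    simp only [hn]
    push_cast
    ring
  set c : ℕ → ℝ := fun j => Real.cos (β + 2 * Real.pi * j / n) with hc
  set s : ℕ → ℝ := fun j => Real.sin (β + 2 * Real.pi * j / n) with hs
  set P : ℝ := A.mulVec u ⬝ᵥ u with hP
  set Q : ℝ := A 0 0 + A 1 1 - P with hQ
  set R : ℝ := -2*(A 0 0)*(u 0)*(u 1) + (A 0 1 + A 1 0)*((u 0)^2-(u 1)^2) + 2*(A 1 1)*(u 0)*(u 1) with hR
  have hdot : ∀ j : ℕ, u ⬝ᵥ η j = c j := by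
    intro j
    rw [hη j]
    simp only [dotProduct, Fin.sum_univ_two, Matrix.cons_val_zero, Matrix.cons_val_one,
      Matrix.head_cons]
    rw [hψ j]
    simp only [hc]
    obtain ⟨t, ht⟩ : ∃ t : ℝ, β + 2 * Real.pi * j / n = t := ⟨_, rfl⟩
    rw [ht, Real.cos_add, Real.sin_add, hcos, hsin]
    linear_combination Real.cos t * hu'
  have hquad : ∀ j : ℕ, A.mulVec (η j) ⬝ᵥ η j
      = c j ^ 2 * P + s j ^ 2 * Q + (c j * s j) * R := by
    intro j
    rw [hη j]
    simp only [Matrix.mulVec, dotProduct, Fin.sum_univ_two, Matrix.cons_val_zero,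
      Matrix.cons_val_one, Matrix.head_cons, hP, hQ, hR]
    rw [hψ j]
    simp only [hc, hs]
    obtain ⟨t, ht⟩ : ∃ t : ℝ, β + 2 * Real.pi * j / n = t := ⟨_, rfl⟩
    rw [ht, Real.cos_add, Real.sin_add, hcos, hsin]
    linear_combination (Real.sin t)^2 * (A 0 0 + A 1 1) * hu'
  -- the three trigonometric sums
  have hT0 : ∑ j ∈ Finset.range n, c j ^ (2*a)
      = (n : ℝ) * ((2*a).choose a) / 2 ^ (2*a) := by
    have := cos_pow_sum n (2*a) (by omega) β
    rw [if_pos ⟨a, rfl⟩, show 2*a/2 = a from by omega] at this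
    exact this
  have hT2 : ∑ j ∈ Finset.range n, c j ^ (2*a+2)
      = (n : ℝ) * ((2*a+2).choose (a+1)) / 2 ^ (2*a+2) := by
    have := cos_pow_sum n (2*a+2) (by omega) β
    rw [if_pos ⟨a+1, by omega⟩, show (2*a+2)/2 = a+1 from by omega] at this
    exact this
  have hT1 : ∑ j ∈ Finset.range n, c j ^ (2*a+1) * s j = 0 :=
    cos_pow_sin_sum n (2*a+1) (by omega) β
  have hT0pos : 0 < ∑ j ∈ Finset.range n, c j ^ (2*a) := by
    rw [hT0]
    have h1 : (0:ℝ) < (n : ℝ) := by positivity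
    have h2 : 0 < (2*a).choose a := Nat.choose_pos (by omega)
    have h2' : (0:ℝ) < ((2*a).choose a : ℝ) := by exact_mod_cast h2
    positivity
  have hdenom : ∑ j ∈ Finset.range n, (u ⬝ᵥ η j) ^ (2*a)
      = ∑ j ∈ Finset.range n, c j ^ (2*a) :=
    Finset.sum_congr rfl (fun j _ => by rw [hdot j])
  constructor
  · rw [hdenom]; exact hT0pos
  -- numerator
  have hnum : ∑ j ∈ Finset.range n, (u ⬝ᵥ η j) ^ (2*a) * (A.mulVec (η j) ⬝ᵥ η j)
      = P * (∑ j ∈ Finset.range n, c j ^ (2*a+2))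
        + Q * ((∑ j ∈ Finset.range n, c j ^ (2*a)) - (∑ j ∈ Finset.range n, c j ^ (2*a+2)))
        + R * (∑ j ∈ Finset.range n, c j ^ (2*a+1) * s j) := by
    rw [Finset.mul_sum, Finset.mul_sum, ← Finset.sum_sub_distrib, Finset.mul_sum,
      ← Finset.sum_add_distrib, ← Finset.sum_add_distrib]
    refine Finset.sum_congr rfl (fun j _ => ?_)
    rw [hdot j, hquad j]
    have hs2 : s j ^ 2 = 1 - c j ^ 2 := Real.sin_sq _
    rw [hs2]
    ring
  have hcR : ((2*a+2).choose (a+1) : ℝ) * (((a:ℝ)+1)*((a:ℝ)+1))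
      = ((2*a).choose a : ℝ) * ((2*(a:ℝ)+2)*(2*(a:ℝ)+1)) := by
    have := central_step a
    exact_mod_cast congrArg (fun t : ℕ => (t : ℝ)) this
  have hKne : ((a:ℝ)+1) ≠ 0 := by positivity
  have hC2 : ((2*a+2).choose (a+1) : ℝ) * ((a:ℝ)+1)
      = 2*(2*(a:ℝ)+1) * ((2*a).choose a : ℝ) := by
    apply mul_left_cancel₀ hKne
    linear_combination hcR
  have hpow : (2:ℝ) ^ (2*a+2) = 2 ^ (2*a) * 4 := by rw [pow_add]; norm_num
  have hnR : (0:ℝ) < (n:ℝ) := by positivity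
  have hratio : ∑ j ∈ Finset.range n, c j ^ (2*a+2)
      = (2*(a:ℝ)+1)/(2*(a:ℝ)+2) * ∑ j ∈ Finset.range n, c j ^ (2*a) := by
    rw [hT0, hT2, hpow]
    have h2ne : (2*(a:ℝ)+2) ≠ 0 := by positivity
    have hpne : ((2:ℝ) ^ (2*a)) ≠ 0 := by positivity
    field_simp
    linear_combination 2 * hC2
  have htrace : Matrix.trace A = P + Q := by
    rw [Matrix.trace_fin_two, hQ]; ring
  rw [hdenom, hnum, hT1, hratio, htrace]
  rw [mul_zero, add_zero]
  push_cast
  have hTne : (∑ j ∈ Finset.range n, c j ^ (2*a)) ≠ 0 := hT0pos.ne'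
  have h2ne : (2*(a:ℝ)+2) ≠ 0 := by positivity
  field_simp
  ring
end

section
/- Let k ≥ 1, let r be an integer with 1 ≤ r ≤ k, and let a ∈ ℝ. Then Σ_{j=0}^{2k+1} cos^{2r}( a + j·(2π/(2k+2)) ) = (2k+2) · (1/2^{2r}) · C(2r, r), where C(2r, r) is the central binomial coefficient. -/
open Complex Finset

lemma geom_exp_zero (N : ℕ) (hN : 0 < N) (n : ℤ) (hn0 : n ≠ 0) (hnN : n.natAbs < N) :
    ∑ j ∈ Finset.range N, (Complex.exp ((n : ℂ) * (2 * Real.pi / N) * Complex.I)) ^ j = 0 := by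
  set w := Complex.exp ((n : ℂ) * (2 * Real.pi / N) * Complex.I) with hw
  have hNC : (N : ℂ) ≠ 0 := Nat.cast_ne_zero.mpr hN.ne'
  have hπI : (2 * (Real.pi : ℂ) * Complex.I) ≠ 0 := by
    simp [Real.pi_ne_zero, Complex.I_ne_zero]
  have hw1 : w ≠ 1 := by
    intro h
    rw [hw, Complex.exp_eq_one_iff] at h
    obtain ⟨m, hm⟩ := h
    have h2 : (n : ℂ) * (2 * (Real.pi : ℂ) * Complex.I) = ((m * N : ℤ) : ℂ) * (2 * (Real.pi : ℂ) * Complex.I) := by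
      push_cast
      field_simp at hm
      ring_nf at hm ⊢
      rw [hm]
    have h3 : (n : ℂ) = ((m * N : ℤ) : ℂ) := mul_right_cancel₀ hπI h2
    have h4 : n = m * N := by exact_mod_cast h3
    rcases eq_or_ne m 0 with rfl | hm0
    · simp at h4; exact hn0 h4
    · have : (N : ℤ) ≤ |n| := by
        rw [h4, abs_mul, abs_of_nonneg (by positivity : (0:ℤ) ≤ (N:ℤ))]
        nlinarith [Int.one_le_abs hm0]
      have : N ≤ n.natAbs := by exact_mod_cast (Int.abs_eq_natAbs n ▸ this)
      omega
  have hwN : w ^ N = 1 := by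
    rw [hw, ← Complex.exp_nat_mul]
    have : (N : ℂ) * ((n : ℂ) * (2 * Real.pi / N) * Complex.I) = (n : ℂ) * (2 * Real.pi * Complex.I) := by
      field_simp
    rw [this]
    exact_mod_cast Complex.exp_int_mul_two_pi_mul_I n
  rw [geom_sum_eq hw1, hwN]
  simp

/-- Sum of even powers of cosines over `2k+2` equally spaced angles: for `1 ≤ r ≤ k`,
`∑_{j=0}^{2k+1} cos^{2r}(a + 2πj/(2k+2)) = (2k+2) · 2^{-2r} · C(2r, r)`. -/
theorem sum_cos_even_pow_arith_prog (k r : ℕ) (hr1 : 1 ≤ r) (hrk : r ≤ k) (a : ℝ) :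
    ∑ j ∈ Finset.range (2 * k + 2),
        Real.cos (a + j * (2 * Real.pi / (2 * k + 2))) ^ (2 * r)
      = (2 * (k : ℝ) + 2) * (1 / 2 ^ (2 * r)) * (Nat.choose (2 * r) r : ℝ) := by
  set N : ℕ := 2 * k + 2 with hNdef
  set c : ℂ := 2 * (Real.pi : ℂ) / N with hc
  set θ : ℕ → ℂ := fun j => (a : ℂ) + j * c with hθ
  have hNC : (N : ℂ) ≠ 0 := Nat.cast_ne_zero.mpr (by omega)
  -- inner sum evaluation
  have hterm : ∀ m ∈ Finset.range (2 * r + 1), ∀ j : ℕ,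
      Complex.exp (θ j * Complex.I) ^ m * Complex.exp (-θ j * Complex.I) ^ (2 * r - m)
        = Complex.exp ((((2 * m : ℤ) - 2 * r : ℤ) : ℂ) * (a : ℂ) * Complex.I) *
          (Complex.exp ((((2 * m : ℤ) - 2 * r : ℤ) : ℂ) * c * Complex.I)) ^ j := by
    intro m hm j
    have hm' : m ≤ 2 * r := by simp at hm; omega
    rw [← Complex.exp_nat_mul, ← Complex.exp_nat_mul, ← Complex.exp_add,
      ← Complex.exp_nat_mul, ← Complex.exp_add]
    congr 1
    rw [hθ]
    push_cast [Nat.cast_sub hm']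
    ring
  have hinner : ∀ m ∈ Finset.range (2 * r + 1),
      ∑ j ∈ Finset.range N,
        Complex.exp (θ j * Complex.I) ^ m * Complex.exp (-θ j * Complex.I) ^ (2 * r - m)
        = if m = r then (N : ℂ) else 0 := by
    intro m hm
    have hm' : m ≤ 2 * r := by simp at hm; omega
    rcases eq_or_ne m r with rfl | hmr
    · simp only [if_pos rfl]
      have h2 : 2 * m - m = m := by omega
      calc ∑ j ∈ Finset.range N,
            Complex.exp (θ j * Complex.I) ^ m * Complex.exp (-θ j * Complex.I) ^ (2 * m - m)
          = ∑ j ∈ Finset.range N, (1 : ℂ) := Finset.sum_congr rfl fun j _ => by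
            rw [h2, ← mul_pow, ← Complex.exp_add,
              show θ j * Complex.I + -θ j * Complex.I = 0 by ring, Complex.exp_zero, one_pow]
        _ = (N : ℂ) := by simp
    · rw [if_neg hmr]
      calc ∑ j ∈ Finset.range N,
            Complex.exp (θ j * Complex.I) ^ m * Complex.exp (-θ j * Complex.I) ^ (2 * r - m)
          = ∑ j ∈ Finset.range N,
            Complex.exp ((((2 * m : ℤ) - 2 * r : ℤ) : ℂ) * (a : ℂ) * Complex.I) *
              (Complex.exp ((((2 * m : ℤ) - 2 * r : ℤ) : ℂ) * c * Complex.I)) ^ j :=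
            Finset.sum_congr rfl fun j _ => hterm m hm j
        _ = Complex.exp ((((2 * m : ℤ) - 2 * r : ℤ) : ℂ) * (a : ℂ) * Complex.I) *
              ∑ j ∈ Finset.range N,
                (Complex.exp ((((2 * m : ℤ) - 2 * r : ℤ) : ℂ) * c * Complex.I)) ^ j := by
            rw [Finset.mul_sum]
        _ = 0 := by
            rw [geom_exp_zero N (by omega) ((2 * m : ℤ) - 2 * r)
              (by omega) (by omega), mul_zero]
  -- complexified identity
  have key : ∑ j ∈ Finset.range N, Complex.cos (θ j) ^ (2 * r)
      = (N : ℂ) * (1 / 2 ^ (2 * r)) * (Nat.choose (2 * r) r : ℂ) := by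
    calc ∑ j ∈ Finset.range N, Complex.cos (θ j) ^ (2 * r)
        = ∑ j ∈ Finset.range N,
            (∑ m ∈ Finset.range (2 * r + 1),
              Complex.exp (θ j * Complex.I) ^ m * Complex.exp (-θ j * Complex.I) ^ (2 * r - m) *
                (Nat.choose (2 * r) m : ℂ)) / 2 ^ (2 * r) := by
          refine Finset.sum_congr rfl fun j _ => ?_
          rw [Complex.cos, div_pow, add_pow]
      _ = (∑ m ∈ Finset.range (2 * r + 1),
            ∑ j ∈ Finset.range N,
              Complex.exp (θ j * Complex.I) ^ m * Complex.exp (-θ j * Complex.I) ^ (2 * r - m) *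
                (Nat.choose (2 * r) m : ℂ)) / 2 ^ (2 * r) := by
          rw [← Finset.sum_div, Finset.sum_comm]
      _ = (∑ m ∈ Finset.range (2 * r + 1),
            (if m = r then (N : ℂ) else 0) * (Nat.choose (2 * r) m : ℂ)) / 2 ^ (2 * r) := by
          congr 1
          refine Finset.sum_congr rfl fun m hm => ?_
          rw [← Finset.sum_mul, hinner m hm]
      _ = (N : ℂ) * (1 / 2 ^ (2 * r)) * (Nat.choose (2 * r) r : ℂ) := by
          rw [Finset.sum_eq_single_of_mem r (Finset.mem_range.mpr (by omega))
            (fun b _ hb => by simp [hb])]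
          simp only [if_pos rfl]
          push_cast
          ring
  have h2 : ((∑ j ∈ Finset.range (2 * k + 2),
        Real.cos (a + j * (2 * Real.pi / (2 * k + 2))) ^ (2 * r) : ℝ) : ℂ)
      = (((2 * (k : ℝ) + 2) * (1 / 2 ^ (2 * r)) * (Nat.choose (2 * r) r : ℝ) : ℝ) : ℂ) := by
    push_cast [Complex.ofReal_cos]
    convert key using 2 with j hj
    · rw [hθ, hc, hNdef]; push_cast; ring_nf
    · rw [hNdef]; push_cast; ring
  exact_mod_cast h2
end

section
/- Let φ = (1 + √5)/2 be the golden ratio and let J ⊂ ℝ³ be the 12 vertices of the icosahedron, J = { (0, ±1, ±φ), (±1, ±φ, 0), (±φ, 0, ±1) } (all sign choices). Then for every unit vector u ∈ ℝ³ and every symmetric 3×3 real matrix A: (i) Σ_{η ∈ J} ⟨u, η⟩² = 4 + 4φ²; (ii) Σ_{η ∈ J} ⟨u, η⟩² ⟨A η, η⟩ = 8φ²·⟨A u, u⟩ + 4φ²·tr(A). Consequently the ratio (ii)/(i) equals (4φ²/(4+4φ²))·(2⟨Au,u⟩ + tr(A)), so J is a 4-averaging set in ℝ³. -/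
open Matrix

set_option maxRecDepth 8000
set_option maxHeartbeats 1000000

/-- The 12 vertices of the icosahedron form a 4-averaging set in `ℝ³`: for any unit vector
`u` and symmetric matrix `A`, `∑ ⟨u,η⟩² = 4 + 4φ²`,
`∑ ⟨u,η⟩²⟨Aη,η⟩ = 8φ²⟨Au,u⟩ + 4φ² tr A`, and the ratio equals
`(4φ²/(4+4φ²))(2⟨Au,u⟩ + tr A)`, where `φ` is the golden ratio. -/
theorem icosahedron_four_averaging (gr : ℝ) (hgr : gr = (1 + Real.sqrt 5) / 2)
    (η : Fin 12 → Fin 3 → ℝ)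
    (hη : η = ![![0, 1, gr], ![0, 1, -gr], ![0, -1, gr], ![0, -1, -gr],
                ![1, gr, 0], ![1, -gr, 0], ![-1, gr, 0], ![-1, -gr, 0],
                ![gr, 0, 1], ![gr, 0, -1], ![-gr, 0, 1], ![-gr, 0, -1]])
    (u : Fin 3 → ℝ) (hu : u ⬝ᵥ u = 1)
    (A : Matrix (Fin 3) (Fin 3) ℝ) (hA : A.IsSymm) :
    (∑ j : Fin 12, (u ⬝ᵥ η j) ^ 2 = 4 + 4 * gr ^ 2) ∧
    (∑ j : Fin 12, (u ⬝ᵥ η j) ^ 2 * (A.mulVec (η j) ⬝ᵥ η j)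
      = 8 * gr ^ 2 * (A.mulVec u ⬝ᵥ u) + 4 * gr ^ 2 * Matrix.trace A) ∧
    ((∑ j : Fin 12, (u ⬝ᵥ η j) ^ 2 * (A.mulVec (η j) ⬝ᵥ η j)) /
        (∑ j : Fin 12, (u ⬝ᵥ η j) ^ 2)
      = (4 * gr ^ 2 / (4 + 4 * gr ^ 2)) * (2 * (A.mulVec u ⬝ᵥ u) + Matrix.trace A)) := by
  have h5 : Real.sqrt 5 ^ 2 = 5 := Real.sq_sqrt (by norm_num)
  have hg2 : gr ^ 2 = gr + 1 := by
    rw [hgr]; nlinarith [h5, Real.sqrt_nonneg 5]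
  have hu' : u 0 ^ 2 + u 1 ^ 2 + u 2 ^ 2 = 1 := by
    have h := hu
    simp only [dotProduct, Fin.sum_univ_three] at h
    linear_combination h
  subst hη
  have h1 : (∑ j : Fin 12, (u ⬝ᵥ
      (![![0, 1, gr], ![0, 1, -gr], ![0, -1, gr], ![0, -1, -gr],
                ![1, gr, 0], ![1, -gr, 0], ![-1, gr, 0], ![-1, -gr, 0],
                ![gr, 0, 1], ![gr, 0, -1], ![-gr, 0, 1], ![-gr, 0, -1]] : Fin 12 → Fin 3 → ℝ) j) ^ 2)
      = 4 + 4 * gr ^ 2 := by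
    simp only [dotProduct, Matrix.mulVec, Fin.sum_univ_succ, Fin.sum_univ_zero,
      Matrix.cons_val_zero, Matrix.cons_val_one, Matrix.head_cons, Matrix.cons_val_succ,
      Matrix.head_fin_const, Fin.succ_zero_eq_one, Fin.succ_one_eq_two, Matrix.cons_val_two, Matrix.tail_cons]
    linear_combination (4 + 4 * gr ^ 2) * hu'
  have h2 : (∑ j : Fin 12, (u ⬝ᵥ
      (![![0, 1, gr], ![0, 1, -gr], ![0, -1, gr], ![0, -1, -gr],
                ![1, gr, 0], ![1, -gr, 0], ![-1, gr, 0], ![-1, -gr, 0],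
                ![gr, 0, 1], ![gr, 0, -1], ![-gr, 0, 1], ![-gr, 0, -1]] : Fin 12 → Fin 3 → ℝ) j) ^ 2
        * (A.mulVec ((![![0, 1, gr], ![0, 1, -gr], ![0, -1, gr], ![0, -1, -gr],
                ![1, gr, 0], ![1, -gr, 0], ![-1, gr, 0], ![-1, -gr, 0],
                ![gr, 0, 1], ![gr, 0, -1], ![-gr, 0, 1], ![-gr, 0, -1]] : Fin 12 → Fin 3 → ℝ) j)
          ⬝ᵥ (![![0, 1, gr], ![0, 1, -gr], ![0, -1, gr], ![0, -1, -gr],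
                ![1, gr, 0], ![1, -gr, 0], ![-1, gr, 0], ![-1, -gr, 0],
                ![gr, 0, 1], ![gr, 0, -1], ![-gr, 0, 1], ![-gr, 0, -1]] : Fin 12 → Fin 3 → ℝ) j))
      = 8 * gr ^ 2 * (A.mulVec u ⬝ᵥ u) + 4 * gr ^ 2 * Matrix.trace A := by
    simp only [dotProduct, Matrix.mulVec, Matrix.trace, Matrix.diag, Fin.sum_univ_succ,
      Fin.sum_univ_zero, Matrix.cons_val_zero, Matrix.cons_val_one, Matrix.head_cons,
      Matrix.cons_val_succ, Matrix.head_fin_const, Fin.succ_zero_eq_one, Fin.succ_one_eq_two, Matrix.cons_val_two, Matrix.tail_cons]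
    linear_combination
      (4 * A 0 0 + 4 * gr ^ 2 * A 2 2 + 4 * gr ^ 2 * A 1 1 - 8 * gr ^ 2 * A 0 0
        + 4 * gr ^ 4 * A 0 0) * hu'
      + (-4 * A 0 0 + 4 * gr * A 0 0 + 4 * gr ^ 2 * A 0 0
        - 4 * u 2 ^ 2 * A 2 2 + 4 * u 2 ^ 2 * A 0 0
        + 4 * u 2 ^ 2 * gr * A 2 2 - 4 * u 2 ^ 2 * gr * A 0 0
        + 4 * u 2 ^ 2 * gr ^ 2 * A 2 2 - 4 * u 2 ^ 2 * gr ^ 2 * A 0 0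
        - 4 * u 1 ^ 2 * A 1 1 + 4 * u 1 ^ 2 * A 0 0
        + 4 * u 1 ^ 2 * gr * A 1 1 - 4 * u 1 ^ 2 * gr * A 0 0
        + 4 * u 1 ^ 2 * gr ^ 2 * A 1 1 - 4 * u 1 ^ 2 * gr ^ 2 * A 0 0) * hg2
  refine ⟨h1, h2, ?_⟩
  rw [h1, h2]
  have hd : (4 : ℝ) + 4 * gr ^ 2 ≠ 0 := by positivity
  field_simp
  ring
end

section
/- Let c = (1 + √5)/2 and let J ⊂ ℝ³ be the 20 vertices of the dodecahedron: J = { (0, ±1/c, ±c), (±1/c, ±c, 0), (±c, 0, ±1/c), (±1, ±1, ±1) } (all sign choices). Then for every u ∈ ℝ³ and every symmetric 3×3 real matrix A: (i) Σ_{η ∈ J} ⟨u, η⟩² = 20·|u|²; (ii) Σ_{η ∈ J} ⟨u, η⟩² ⟨A η, η⟩ = 24·⟨A u, u⟩ + 12·tr(A)·|u|². In particular, for unit u the ratio (ii)/(i) equals (12/20)·(2⟨Au,u⟩ + tr(A)), so J is a 4-averaging set in ℝ³. -/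
open Matrix

/-- The 20 vertices of the dodecahedron form a 4-averaging set in `ℝ³`: for any `u` and
symmetric `A`, `∑ ⟨u,η⟩² = 20|u|²`, `∑ ⟨u,η⟩²⟨Aη,η⟩ = 24⟨Au,u⟩ + 12 tr(A) |u|²`, and for
unit `u` the ratio equals `(12/20)(2⟨Au,u⟩ + tr A)`. Here `c` is the golden ratio. -/
theorem dodecahedron_four_averaging (c : ℝ) (hc : c = (1 + Real.sqrt 5) / 2)
    (η : Fin 20 → Fin 3 → ℝ)
    (hη : η = ![![0, c⁻¹, c], ![0, c⁻¹, -c], ![0, -c⁻¹, c], ![0, -c⁻¹, -c],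
                ![c⁻¹, c, 0], ![c⁻¹, -c, 0], ![-c⁻¹, c, 0], ![-c⁻¹, -c, 0],
                ![c, 0, c⁻¹], ![c, 0, -c⁻¹], ![-c, 0, c⁻¹], ![-c, 0, -c⁻¹],
                ![1, 1, 1], ![1, 1, -1], ![1, -1, 1], ![1, -1, -1],
                ![-1, 1, 1], ![-1, 1, -1], ![-1, -1, 1], ![-1, -1, -1]])
    (u : Fin 3 → ℝ)
    (A : Matrix (Fin 3) (Fin 3) ℝ) (hA : A.IsSymm) :
    (∑ j : Fin 20, (u ⬝ᵥ η j) ^ 2 = 20 * (u ⬝ᵥ u)) ∧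
    (∑ j : Fin 20, (u ⬝ᵥ η j) ^ 2 * (A.mulVec (η j) ⬝ᵥ η j)
      = 24 * (A.mulVec u ⬝ᵥ u) + 12 * Matrix.trace A * (u ⬝ᵥ u)) ∧
    (u ⬝ᵥ u = 1 →
      (∑ j : Fin 20, (u ⬝ᵥ η j) ^ 2 * (A.mulVec (η j) ⬝ᵥ η j)) /
          (∑ j : Fin 20, (u ⬝ᵥ η j) ^ 2)
        = (12 / 20) * (2 * (A.mulVec u ⬝ᵥ u) + Matrix.trace A)) := by
  have h5 : Real.sqrt 5 ^ 2 = 5 := Real.sq_sqrt (by norm_num)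
  have hpos : (0:ℝ) < c := by rw [hc]; positivity
  have hc2 : c ^ 2 = c + 1 := by rw [hc]; ring_nf; nlinarith [h5]
  have hcinv : c⁻¹ = c - 1 := by
    field_simp
    linarith [hc2]
  have h10 : A 1 0 = A 0 1 := hA.apply 0 1
  have h20 : A 2 0 = A 0 2 := hA.apply 0 2
  have h21 : A 2 1 = A 1 2 := hA.apply 1 2
  subst hη
  rw [hcinv]
  have e1 : ∑ j : Fin 20, (u ⬝ᵥ ![![0, c - 1, c], ![0, c - 1, -c], ![0, -(c - 1), c], ![0, -(c - 1), -c],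
                ![c - 1, c, 0], ![c - 1, -c, 0], ![-(c - 1), c, 0], ![-(c - 1), -c, 0],
                ![c, 0, c - 1], ![c, 0, -(c - 1)], ![-c, 0, c - 1], ![-c, 0, -(c - 1)],
                ![1, 1, 1], ![1, 1, -1], ![1, -1, 1], ![1, -1, -1],
                ![-1, 1, 1], ![-1, 1, -1], ![-1, -1, 1], ![-1, -1, -1]] j) ^ 2 = 20 * (u ⬝ᵥ u) := by
    simp [Fin.sum_univ_succ, dotProduct, Fin.sum_univ_three]
    linear_combination (8*(u 0)^2 + 8*(u 1)^2 + 8*(u 2)^2) * hc2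
  have e2 : ∑ j : Fin 20, (u ⬝ᵥ ![![0, c - 1, c], ![0, c - 1, -c], ![0, -(c - 1), c], ![0, -(c - 1), -c],
                ![c - 1, c, 0], ![c - 1, -c, 0], ![-(c - 1), c, 0], ![-(c - 1), -c, 0],
                ![c, 0, c - 1], ![c, 0, -(c - 1)], ![-c, 0, c - 1], ![-c, 0, -(c - 1)],
                ![1, 1, 1], ![1, 1, -1], ![1, -1, 1], ![1, -1, -1],
                ![-1, 1, 1], ![-1, 1, -1], ![-1, -1, 1], ![-1, -1, -1]] j) ^ 2 *
        (A.mulVec (![![0, c - 1, c], ![0, c - 1, -c], ![0, -(c - 1), c], ![0, -(c - 1), -c],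
                ![c - 1, c, 0], ![c - 1, -c, 0], ![-(c - 1), c, 0], ![-(c - 1), -c, 0],
                ![c, 0, c - 1], ![c, 0, -(c - 1)], ![-c, 0, c - 1], ![-c, 0, -(c - 1)],
                ![1, 1, 1], ![1, 1, -1], ![1, -1, 1], ![1, -1, -1],
                ![-1, 1, 1], ![-1, 1, -1], ![-1, -1, 1], ![-1, -1, -1]] j) ⬝ᵥ
            ![![0, c - 1, c], ![0, c - 1, -c], ![0, -(c - 1), c], ![0, -(c - 1), -c],
                ![c - 1, c, 0], ![c - 1, -c, 0], ![-(c - 1), c, 0], ![-(c - 1), -c, 0],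
                ![c, 0, c - 1], ![c, 0, -(c - 1)], ![-c, 0, c - 1], ![-c, 0, -(c - 1)],
                ![1, 1, 1], ![1, 1, -1], ![1, -1, 1], ![1, -1, -1],
                ![-1, 1, 1], ![-1, 1, -1], ![-1, -1, 1], ![-1, -1, -1]] j)
      = 24 * (A.mulVec u ⬝ᵥ u) + 12 * Matrix.trace A * (u ⬝ᵥ u) := by
    simp [Fin.sum_univ_succ, dotProduct, Matrix.mulVec, Fin.sum_univ_three, Matrix.trace,
      Matrix.diag, h10, h20, h21]
    linear_combination ((24*(u 2)^2*(A 2 2) + 4*(u 2)^2*(A 1 1) + 4*(u 2)^2*(A 0 0) + 16*(u 1)*(u 2)*(A 1 2) + 4*(u 1)^2*(A 2 2) + 24*(u 1)^2*(A 1 1) + 4*(u 1)^2*(A 0 0) + 16*(u 0)*(u 2)*(A 0 2) + 16*(u 0)*(u 1)*(A 0 1) + 4*(u 0)^2*(A 2 2) + 4*(u 0)^2*(A 1 1) + 24*(u 0)^2*(A 0 0)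
  - 8*c*(u 2)^2*(A 2 2) - 4*c*(u 2)^2*(A 1 1) - 4*c*(u 2)^2*(A 0 0) - 16*c*(u 1)*(u 2)*(A 1 2) - 4*c*(u 1)^2*(A 2 2) - 8*c*(u 1)^2*(A 1 1) - 4*c*(u 1)^2*(A 0 0) - 16*c*(u 0)*(u 2)*(A 0 2) - 16*c*(u 0)*(u 1)*(A 0 1) - 4*c*(u 0)^2*(A 2 2) - 4*c*(u 0)^2*(A 1 1) - 8*c*(u 0)^2*(A 0 0)
  + 8*c^2*(u 2)^2*(A 2 2) + 4*c^2*(u 2)^2*(A 1 1) + 4*c^2*(u 2)^2*(A 0 0) + 16*c^2*(u 1)*(u 2)*(A 1 2) + 4*c^2*(u 1)^2*(A 2 2) + 8*c^2*(u 1)^2*(A 1 1) + 4*c^2*(u 1)^2*(A 0 0) + 16*c^2*(u 0)*(u 2)*(A 0 2) + 16*c^2*(u 0)*(u 1)*(A 0 1) + 4*c^2*(u 0)^2*(A 2 2) + 4*c^2*(u 0)^2*(A 1 1) + 8*c^2*(u 0)^2*(A 0 0))) * hc2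
  refine ⟨e1, e2, fun hu => ?_⟩
  rw [e1, e2, hu]
  ring
end

section
/- Let J ⊂ ℝ⁴ be the 24 vertices of the 24-cell centered at the origin: all vectors obtained from (1,1,0,0) by permuting coordinates and choosing signs, i.e. all vectors with two coordinates equal to ±1 and two coordinates equal to 0. Then for every u ∈ ℝ⁴ and every symmetric 4×4 real matrix A: (i) Σ_{η ∈ J} ⟨u, η⟩² = 12·|u|²; (ii) Σ_{η ∈ J} ⟨u, η⟩² ⟨A η, η⟩ = 8·⟨A u, u⟩ + 4·tr(A)·|u|². In particular, for unit u the ratio (ii)/(i) equals (8/6)·( (2/4)⟨Au,u⟩ + (1/4)tr(A) ), so J is a 4-averaging set in ℝ⁴. -/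
open Matrix

/-- The 24 vertices of the 24-cell (all vectors with two coordinates `±1` and two `0`)
form a 4-averaging set in `ℝ⁴`: `∑ ⟨u,η⟩² = 12|u|²`,
`∑ ⟨u,η⟩²⟨Aη,η⟩ = 8⟨Au,u⟩ + 4 tr(A) |u|²`, and for unit `u` the ratio equals
`(8/6)((2/4)⟨Au,u⟩ + (1/4) tr A)`. -/
theorem cell24_four_averaging
    (η : Fin 24 → Fin 4 → ℝ)
    (hη : η = ![![1, 1, 0, 0], ![1, -1, 0, 0], ![-1, 1, 0, 0], ![-1, -1, 0, 0],
                ![1, 0, 1, 0], ![1, 0, -1, 0], ![-1, 0, 1, 0], ![-1, 0, -1, 0],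
                ![1, 0, 0, 1], ![1, 0, 0, -1], ![-1, 0, 0, 1], ![-1, 0, 0, -1],
                ![0, 1, 1, 0], ![0, 1, -1, 0], ![0, -1, 1, 0], ![0, -1, -1, 0],
                ![0, 1, 0, 1], ![0, 1, 0, -1], ![0, -1, 0, 1], ![0, -1, 0, -1],
                ![0, 0, 1, 1], ![0, 0, 1, -1], ![0, 0, -1, 1], ![0, 0, -1, -1]])
    (u : Fin 4 → ℝ)
    (A : Matrix (Fin 4) (Fin 4) ℝ) (hA : A.IsSymm) :
    (∑ j : Fin 24, (u ⬝ᵥ η j) ^ 2 = 12 * (u ⬝ᵥ u)) ∧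
    (∑ j : Fin 24, (u ⬝ᵥ η j) ^ 2 * (A.mulVec (η j) ⬝ᵥ η j)
      = 8 * (A.mulVec u ⬝ᵥ u) + 4 * Matrix.trace A * (u ⬝ᵥ u)) ∧
    (u ⬝ᵥ u = 1 →
      (∑ j : Fin 24, (u ⬝ᵥ η j) ^ 2 * (A.mulVec (η j) ⬝ᵥ η j)) /
          (∑ j : Fin 24, (u ⬝ᵥ η j) ^ 2)
        = (8 / 6) * ((2 / 4) * (A.mulVec u ⬝ᵥ u) + (1 / 4) * Matrix.trace A)) := by
  have hs : ∀ i j, A j i = A i j := fun i j => hA.apply i j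
  have h1 : ∑ j : Fin 24, (u ⬝ᵥ η j) ^ 2 = 12 * (u ⬝ᵥ u) := by
    subst hη
    simp [Fin.sum_univ_succ, dotProduct, Fin.sum_univ_four]
    ring
  have h2 : ∑ j : Fin 24, (u ⬝ᵥ η j) ^ 2 * (A.mulVec (η j) ⬝ᵥ η j)
      = 8 * (A.mulVec u ⬝ᵥ u) + 4 * Matrix.trace A * (u ⬝ᵥ u) := by
    subst hη
    simp [Fin.sum_univ_succ, dotProduct, Matrix.mulVec, Matrix.trace, Matrix.diag,
      Fin.sum_univ_four]
    rw [hs 0 1, hs 0 2, hs 0 3, hs 1 2, hs 1 3, hs 2 3]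
    ring
  refine ⟨h1, h2, fun hu => ?_⟩
  rw [h1, h2, hu]
  ring
end

section
/- Let c = (1 + √5)/2 and let J ⊂ ℝ⁴ be the 120 vertices of the 600-cell: all vectors (±1, ±1, ±1, ±1); all permutations of (±2, 0, 0, 0); and all even permutations of (±c, ±1, ±1/c, 0) (all sign choices). Then for every u ∈ ℝ⁴ and every symmetric 4×4 real matrix A: (i) Σ_{η ∈ J} ⟨u, η⟩² = 120·|u|²; (ii) Σ_{η ∈ J} ⟨u, η⟩² ⟨A η, η⟩ = 160·⟨A u, u⟩ + 80·tr(A)·|u|². In particular, for unit u the ratio (ii)/(i) equals (8/3)·( (2/4)⟨Au,u⟩ + (1/4)tr(A) ), so J is a 4-averaging set in ℝ⁴. -/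
set_option maxHeartbeats 2000000

open Matrix

/-- All vectors obtained from `w` by permuting coordinates (by an arbitrary permutation)
and arbitrary sign changes. -/
noncomputable def signedPerms (w : Fin 4 → ℝ) : Finset (Fin 4 → ℝ) :=
  Finset.image
    (fun x : Equiv.Perm (Fin 4) × (Fin 4 → Bool) =>
      fun i => (if x.2 i then (1 : ℝ) else -1) * w (x.1 i))
    Finset.univ

/-- All vectors obtained from `w` by an even permutation of coordinates and arbitrary
sign changes. -/
noncomputable def evenSignedPerms (w : Fin 4 → ℝ) : Finset (Fin 4 → ℝ) :=
  Finset.image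
    (fun x : Equiv.Perm (Fin 4) × (Fin 4 → Bool) =>
      fun i => (if x.2 i then (1 : ℝ) else -1) * w (x.1 i))
    ((Finset.univ.filter fun σ : Equiv.Perm (Fin 4) => Equiv.Perm.sign σ = 1) ×ˢ Finset.univ)

/-! ### Auxiliary definitions -/

noncomputable def sp1map : (Fin 4 → Bool) → (Fin 4 → ℝ) :=
  fun ε i => if ε i then (1 : ℝ) else -1

noncomputable def sp2map : Fin 4 × Bool → (Fin 4 → ℝ) :=
  fun x i => if i = x.1 then (if x.2 then (2:ℝ) else -2) else 0

def ep0 : Equiv.Perm (Fin 4) := ⟨![0,1,2,3], ![0,1,2,3], by decide, by decide⟩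
def ep1 : Equiv.Perm (Fin 4) := ⟨![0,2,3,1], ![0,3,1,2], by decide, by decide⟩
def ep2 : Equiv.Perm (Fin 4) := ⟨![0,3,1,2], ![0,2,3,1], by decide, by decide⟩
def ep3 : Equiv.Perm (Fin 4) := ⟨![1,0,3,2], ![1,0,3,2], by decide, by decide⟩
def ep4 : Equiv.Perm (Fin 4) := ⟨![1,2,0,3], ![2,0,1,3], by decide, by decide⟩
def ep5 : Equiv.Perm (Fin 4) := ⟨![1,3,2,0], ![3,0,2,1], by decide, by decide⟩
def ep6 : Equiv.Perm (Fin 4) := ⟨![2,0,1,3], ![1,2,0,3], by decide, by decide⟩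
def ep7 : Equiv.Perm (Fin 4) := ⟨![2,1,3,0], ![3,1,0,2], by decide, by decide⟩
def ep8 : Equiv.Perm (Fin 4) := ⟨![2,3,0,1], ![2,3,0,1], by decide, by decide⟩
def ep9 : Equiv.Perm (Fin 4) := ⟨![3,0,2,1], ![1,3,2,0], by decide, by decide⟩
def ep10 : Equiv.Perm (Fin 4) := ⟨![3,1,0,2], ![2,1,3,0], by decide, by decide⟩
def ep11 : Equiv.Perm (Fin 4) := ⟨![3,2,1,0], ![3,2,1,0], by decide, by decide⟩
def epList : List (Equiv.Perm (Fin 4)) := [ep0, ep1, ep2, ep3, ep4, ep5, ep6, ep7, ep8, ep9, ep10, ep11]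

def permsE : Finset (Equiv.Perm (Fin 4)) :=
  Finset.univ.filter fun σ : Equiv.Perm (Fin 4) => Equiv.Perm.sign σ = 1
def boolsB : Finset (Fin 4 → Bool) := Finset.univ.filter fun b : Fin 4 → Bool => b 3 = true

noncomputable def sp3map (c : ℝ) : Equiv.Perm (Fin 4) × (Fin 4 → Bool) → (Fin 4 → ℝ) :=
  fun x i => (if x.2 (x.1 i) then (1 : ℝ) else -1) * ![c, 1, c - 1, 0] (x.1 i)

/-! ### Piece 1 -/

lemma sp1_eq : signedPerms ![1, 1, 1, 1] = Finset.image sp1map Finset.univ := by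
  have hw : ∀ j : Fin 4, ![(1:ℝ),1,1,1] j = 1 := by intro j; fin_cases j <;> rfl
  ext v
  simp only [signedPerms, Finset.mem_image, Finset.mem_univ, true_and]
  constructor
  · rintro ⟨⟨σ, ε⟩, rfl⟩
    exact ⟨ε, by funext i; simp [sp1map, hw]⟩
  · rintro ⟨ε, rfl⟩
    exact ⟨(1, ε), by funext i; simp [sp1map, hw]⟩

lemma sp1_inj : ∀ x ∈ (Finset.univ : Finset (Fin 4 → Bool)), ∀ y ∈ Finset.univ,
    sp1map x = sp1map y → x = y := by
  intro x _ y _ h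
  funext i
  have hi := congrFun h i
  simp only [sp1map] at hi
  cases hx : x i <;> cases hy : y i <;> rw [hx, hy] at hi <;> simp_all <;> norm_num at hi

lemma sumBool4 (h : (Fin 4 → Bool) → ℝ) :
    ∑ ε : Fin 4 → Bool, h ε = ∑ p : Bool × Bool × Bool × Bool, h ![p.1, p.2.1, p.2.2.1, p.2.2.2] := by
  rw [show (Finset.univ : Finset (Fin 4 → Bool))
      = Finset.image (fun p : Bool × Bool × Bool × Bool => ![p.1, p.2.1, p.2.2.1, p.2.2.2]) Finset.univ from by decide,
    Finset.sum_image (by decide)]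

lemma sp1_sum1 (u : Fin 4 → ℝ) :
    ∑ η ∈ signedPerms ![1,1,1,1], (u ⬝ᵥ η) ^ 2 = 16 * (u ⬝ᵥ u) := by
  rw [sp1_eq, Finset.sum_image sp1_inj, sumBool4]
  simp only [Fintype.sum_prod_type, Fintype.sum_bool, sp1map, dotProduct, Fin.sum_univ_four,
    Matrix.cons_val_zero, Matrix.cons_val_one, Matrix.head_cons,
    Matrix.cons_val_two, Matrix.cons_val_three, Matrix.tail_cons]
  norm_num
  ring

lemma sp1_sum2 (u : Fin 4 → ℝ) (A : Matrix (Fin 4) (Fin 4) ℝ) :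
    ∑ η ∈ signedPerms ![1,1,1,1], (u ⬝ᵥ η) ^ 2 * (A.mulVec η ⬝ᵥ η)
      = 16 * Matrix.trace A * (u ⬝ᵥ u) + 32 * (A.mulVec u ⬝ᵥ u)
        - 32 * (u 0^2 * A 0 0 + u 1^2 * A 1 1 + u 2^2 * A 2 2 + u 3^2 * A 3 3) := by
  rw [sp1_eq, Finset.sum_image sp1_inj, sumBool4]
  simp only [Fintype.sum_prod_type, Fintype.sum_bool, sp1map, dotProduct, Matrix.mulVec,
    Matrix.trace, Matrix.diag, Fin.sum_univ_four,
    Matrix.cons_val_zero, Matrix.cons_val_one, Matrix.head_cons,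
    Matrix.cons_val_two, Matrix.cons_val_three, Matrix.tail_cons]
  norm_num
  ring

/-! ### Piece 2 -/

lemma sp2_eq : signedPerms ![2, 0, 0, 0] = Finset.image sp2map Finset.univ := by
  have hw : ∀ j : Fin 4, ![(2:ℝ),0,0,0] j = if j = 0 then 2 else 0 := by
    intro j; fin_cases j <;> rfl
  ext v
  simp only [signedPerms, Finset.mem_image, Finset.mem_univ, true_and]
  constructor
  · rintro ⟨⟨σ, ε⟩, rfl⟩
    refine ⟨(σ⁻¹ 0, ε (σ⁻¹ 0)), ?_⟩
    funext i
    simp only [sp2map, hw]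
    by_cases h : σ i = 0
    · have hi : i = σ⁻¹ 0 := by rw [← h]; simp
      rw [if_pos h, if_pos hi, ← hi]
      by_cases hε : ε i = true <;> simp [hε] <;> norm_num
    · have hi : ¬ i = σ⁻¹ 0 := fun hh => h (by rw [hh]; simp)
      rw [if_neg h, if_neg hi, mul_zero]
  · rintro ⟨⟨j, s⟩, rfl⟩
    refine ⟨(Equiv.swap 0 j, fun _ => s), ?_⟩
    funext i
    simp only [sp2map, hw]
    by_cases h : i = j
    · subst h
      rw [if_pos rfl, Equiv.swap_apply_right, if_pos rfl]
      cases s <;> norm_num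
    · rw [if_neg h]
      have hne : ¬ Equiv.swap (0:Fin 4) j i = 0 := by
        by_cases hi : i = 0
        · subst hi
          rw [Equiv.swap_apply_left]
          exact fun hj => h hj.symm
        · rw [Equiv.swap_apply_of_ne_of_ne hi h]
          exact hi
      rw [if_neg hne, mul_zero]

lemma sp2_inj : ∀ x ∈ (Finset.univ : Finset (Fin 4 × Bool)), ∀ y ∈ Finset.univ,
    sp2map x = sp2map y → x = y := by
  rintro ⟨j, s⟩ _ ⟨j', s'⟩ _ h
  have hj := congrFun h j
  simp only [sp2map, if_pos rfl] at hj
  by_cases hjj : j = j'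
  · subst hjj
    rw [if_pos rfl] at hj
    cases s <;> cases s' <;> simp_all <;> norm_num at hj
  · rw [if_neg hjj] at hj
    cases s <;> norm_num at hj

lemma sp2_sum1 (u : Fin 4 → ℝ) :
    ∑ η ∈ signedPerms ![2,0,0,0], (u ⬝ᵥ η) ^ 2 = 8 * (u ⬝ᵥ u) := by
  rw [sp2_eq, Finset.sum_image sp2_inj, Fintype.sum_prod_type, Fin.sum_univ_four]
  simp only [Fintype.sum_bool, sp2map, dotProduct, Fin.sum_univ_four, Fin.reduceEq, ite_true,
    ite_false]
  norm_num
  ring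

lemma sp2_sum2 (u : Fin 4 → ℝ) (A : Matrix (Fin 4) (Fin 4) ℝ) :
    ∑ η ∈ signedPerms ![2,0,0,0], (u ⬝ᵥ η) ^ 2 * (A.mulVec η ⬝ᵥ η)
      = 32 * (u 0^2 * A 0 0 + u 1^2 * A 1 1 + u 2^2 * A 2 2 + u 3^2 * A 3 3) := by
  rw [sp2_eq, Finset.sum_image sp2_inj, Fintype.sum_prod_type, Fin.sum_univ_four]
  simp only [Fintype.sum_bool, sp2map, dotProduct, Matrix.mulVec, Fin.sum_univ_four, Fin.reduceEq,
    ite_true, ite_false]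
  norm_num
  ring

/-! ### Piece 3 -/

lemma hE3 : permsE = epList.toFinset := by decide

lemma sumB3 (h : (Fin 4 → Bool) → ℝ) :
    ∑ b ∈ boolsB, h b = ∑ p : Bool × Bool × Bool, h ![p.1, p.2.1, p.2.2, true] := by
  rw [show boolsB
      = Finset.image (fun p : Bool × Bool × Bool => ![p.1, p.2.1, p.2.2, true]) Finset.univ from by decide,
    Finset.sum_image (by decide)]

lemma sp3_eq (c : ℝ) :
    evenSignedPerms ![c, 1, c - 1, 0] = Finset.image (sp3map c) (permsE ×ˢ boolsB) := by
  ext v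
  simp only [evenSignedPerms, Finset.mem_image, Finset.mem_product, Finset.mem_filter,
    Finset.mem_univ, true_and, and_true, permsE, boolsB]
  constructor
  · rintro ⟨⟨σ, ε⟩, hσ, rfl⟩
    refine ⟨(σ, fun j => if j = 3 then true else ε (σ.symm j)), ⟨hσ, by simp⟩, ?_⟩
    funext i
    simp only [sp3map]
    by_cases h : σ i = 3
    · rw [h]
      norm_num [Matrix.cons_val_three, Matrix.tail_cons, Matrix.head_cons]
    · simp [h, Equiv.symm_apply_apply]
  · rintro ⟨⟨σ, b⟩, ⟨hσ, _⟩, rfl⟩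
    exact ⟨(σ, fun i => b (σ i)), hσ, rfl⟩

lemma sp3_inj (c : ℝ) (h1 : 1 < c) (h2 : c < 2) :
    ∀ x ∈ permsE ×ˢ boolsB, ∀ y ∈ permsE ×ˢ boolsB, sp3map c x = sp3map c y → x = y := by
  have hwpos : ∀ j : Fin 4, 0 ≤ ![c, 1, c - 1, 0] j := by
    intro j; fin_cases j <;> simp <;> linarith
  have hwinj : ∀ j j' : Fin 4, ![c, 1, c - 1, 0] j = ![c, 1, c - 1, 0] j' → j = j' := by
    intro j j'
    fin_cases j <;> fin_cases j' <;> simp <;> intro h <;> exfalso <;> linarith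
  rintro ⟨σ, b⟩ hx ⟨σ', b'⟩ hy h
  simp only [Finset.mem_product, Finset.mem_filter, Finset.mem_univ, true_and,
    permsE, boolsB] at hx hy
  have hσ : σ = σ' := by
    apply Equiv.ext
    intro i
    have hi := congrFun h i
    simp only [sp3map] at hi
    apply hwinj
    have p1 := hwpos (σ i)
    have p2 := hwpos (σ' i)
    cases hb : b (σ i) <;> cases hb' : b' (σ' i) <;> simp only [hb, hb'] at hi <;>
      simp at hi <;> linarith
  subst hσ
  have hbb : b = b' := by
    funext j
    by_cases hj : j = 3
    · rw [hj, hx.2, hy.2]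
    · have hi := congrFun h (σ.symm j)
      simp only [sp3map, Equiv.apply_symm_apply] at hi
      have hw0 : ![c, 1, c - 1, 0] j ≠ 0 := by
        fin_cases j <;> simp_all <;> linarith
      have hss := mul_right_cancel₀ hw0 hi
      cases hbj : b j <;> cases hbj' : b' j <;> simp only [hbj, hbj'] at hss <;>
        first | rfl | norm_num at hss
  rw [hbb]

lemma sp3_sum1 (c : ℝ) (h1 : 1 < c) (h2 : c < 2) (hc2 : c ^ 2 = c + 1) (u : Fin 4 → ℝ) :
    ∑ η ∈ evenSignedPerms ![c, 1, c - 1, 0], (u ⬝ᵥ η) ^ 2 = 96 * (u ⬝ᵥ u) := by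
  rw [sp3_eq, Finset.sum_image (sp3_inj c h1 h2), Finset.sum_product, hE3,
    List.sum_toFinset _ (by decide)]
  simp only [List.map_cons, List.map_nil, List.sum_cons, List.sum_nil, sumB3, epList,
    Fintype.sum_prod_type, Fintype.sum_bool, sp3map,
    ep0, ep1, ep2, ep3, ep4, ep5, ep6, ep7, ep8, ep9, ep10, ep11, Equiv.coe_fn_mk,
    dotProduct, Fin.sum_univ_four, Matrix.cons_val_zero, Matrix.cons_val_one,
    Matrix.cons_val_two, Matrix.cons_val_three, Matrix.head_cons, Matrix.tail_cons,
    ite_true, ite_false, Bool.false_eq_true, if_true, if_false]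
  linear_combination ((48) * (u 0) * (u 0) + (48) * (u 1) * (u 1) + (48) * (u 2) * (u 2) + (48) * (u 3) * (u 3)) * hc2

lemma sp3_sum2 (c : ℝ) (h1 : 1 < c) (h2 : c < 2) (hc2 : c ^ 2 = c + 1) (u : Fin 4 → ℝ)
    (A : Matrix (Fin 4) (Fin 4) ℝ) :
    ∑ η ∈ evenSignedPerms ![c, 1, c - 1, 0], (u ⬝ᵥ η) ^ 2 * (A.mulVec η ⬝ᵥ η)
      = 64 * Matrix.trace A * (u ⬝ᵥ u) + 128 * (A.mulVec u ⬝ᵥ u) := by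
  rw [sp3_eq, Finset.sum_image (sp3_inj c h1 h2), Finset.sum_product, hE3,
    List.sum_toFinset _ (by decide)]
  simp only [List.map_cons, List.map_nil, List.sum_cons, List.sum_nil, sumB3, epList,
    Fintype.sum_prod_type, Fintype.sum_bool, sp3map,
    ep0, ep1, ep2, ep3, ep4, ep5, ep6, ep7, ep8, ep9, ep10, ep11, Equiv.coe_fn_mk,
    dotProduct, Matrix.mulVec, Matrix.trace, Matrix.diag, Fin.sum_univ_four,
    Matrix.cons_val_zero, Matrix.cons_val_one,
    Matrix.cons_val_two, Matrix.cons_val_three, Matrix.head_cons, Matrix.tail_cons,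
    ite_true, ite_false, Bool.false_eq_true, if_true, if_false]
  linear_combination ((48) * (A 0 0) * c * c * (u 0) * (u 0) + (16) * (A 0 0) * c * c * (u 1) * (u 1) + (16) * (A 0 0) * c * c * (u 2) * (u 2) + (16) * (A 0 0) * c * c * (u 3) * (u 3) + (-48) * (A 0 0) * c * (u 0) * (u 0) + (-16) * (A 0 0) * c * (u 1) * (u 1) + (-16) * (A 0 0) * c * (u 2) * (u 2) + (-16) * (A 0 0) * c * (u 3) * (u 3) + (144) * (A 0 0) * (u 0) * (u 0) + (48) * (A 0 0) * (u 1) * (u 1) + (48) * (A 0 0) * (u 2) * (u 2) + (48) * (A 0 0) * (u 3) * (u 3) + (32) * (A 0 1) * c * c * (u 0) * (u 1) + (-32) * (A 0 1) * c * (u 0) * (u 1) + (96) * (A 0 1) * (u 0) * (u 1) + (32) * (A 0 2) * c * c * (u 0) * (u 2) + (-32) * (A 0 2) * c * (u 0) * (u 2) + (96) * (A 0 2) * (u 0) * (u 2) + (32) * (A 0 3) * c * c * (u 0) * (u 3) + (-32) * (A 0 3) * c * (u 0) * (u 3) + (96) * (A 0 3) * (u 0) * (u 3) + (32) * (A 1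 0) * c * c * (u 0) * (u 1) + (-32) * (A 1 0) * c * (u 0) * (u 1) + (96) * (A 1 0) * (u 0) * (u 1) + (16) * (A 1 1) * c * c * (u 0) * (u 0) + (48) * (A 1 1) * c * c * (u 1) * (u 1) + (16) * (A 1 1) * c * c * (u 2) * (u 2) + (16) * (A 1 1) * c * c * (u 3) * (u 3) + (-16) * (A 1 1) * c * (u 0) * (u 0) + (-48) * (A 1 1) * c * (u 1) * (u 1) + (-16) * (A 1 1) * c * (u 2) * (u 2) + (-16) * (A 1 1) * c * (u 3) * (u 3) + (48) * (A 1 1) * (u 0) * (u 0) + (144) * (A 1 1) * (u 1) * (u 1) + (48) * (A 1 1) * (u 2) * (u 2) + (48) * (A 1 1) * (u 3) * (u 3) + (32) * (A 1 2) * c * c * (u 1) * (u 2) + (-32) * (A 1 2) * c * (u 1) * (u 2) + (96) * (A 1 2) * (u 1) * (u 2) + (32) * (A 1 3) * c * c * (u 1) * (u 3) + (-32) * (A 1 3) * c * (u 1) * (u 3) + (96) * (A 1 3) * (u 1) * (u 3) + (32) * (A 2 0) * c * c * (u 0) * (u 2) + (-32) * (A 2 0) * c * (u 0) * (u 2) +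 (96) * (A 2 0) * (u 0) * (u 2) + (32) * (A 2 1) * c * c * (u 1) * (u 2) + (-32) * (A 2 1) * c * (u 1) * (u 2) + (96) * (A 2 1) * (u 1) * (u 2) + (16) * (A 2 2) * c * c * (u 0) * (u 0) + (16) * (A 2 2) * c * c * (u 1) * (u 1) + (48) * (A 2 2) * c * c * (u 2) * (u 2) + (16) * (A 2 2) * c * c * (u 3) * (u 3) + (-16) * (A 2 2) * c * (u 0) * (u 0) + (-16) * (A 2 2) * c * (u 1) * (u 1) + (-48) * (A 2 2) * c * (u 2) * (u 2) + (-16) * (A 2 2) * c * (u 3) * (u 3) + (48) * (A 2 2) * (u 0) * (u 0) + (48) * (A 2 2) * (u 1) * (u 1) + (144) * (A 2 2) * (u 2) * (u 2) + (48) * (A 2 2) * (u 3) * (u 3) + (32) * (A 2 3) * c * c * (u 2) * (u 3) + (-32) * (A 2 3) * c * (u 2) * (u 3) + (96) * (A 2 3) * (u 2) * (u 3) + (32) * (A 3 0) * c * c * (u 0) * (u 3) + (-32) * (A 3 0) * c * (u 0) * (u 3) + (96) * (A 3 0) * (u 0) * (u 3) + (32) * (A 3 1) * c * c * (u 1) *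 (u 3) + (-32) * (A 3 1) * c * (u 1) * (u 3) + (96) * (A 3 1) * (u 1) * (u 3) + (32) * (A 3 2) * c * c * (u 2) * (u 3) + (-32) * (A 3 2) * c * (u 2) * (u 3) + (96) * (A 3 2) * (u 2) * (u 3) + (16) * (A 3 3) * c * c * (u 0) * (u 0) + (16) * (A 3 3) * c * c * (u 1) * (u 1) + (16) * (A 3 3) * c * c * (u 2) * (u 2) + (48) * (A 3 3) * c * c * (u 3) * (u 3) + (-16) * (A 3 3) * c * (u 0) * (u 0) + (-16) * (A 3 3) * c * (u 1) * (u 1) + (-16) * (A 3 3) * c * (u 2) * (u 2) + (-48) * (A 3 3) * c * (u 3) * (u 3) + (48) * (A 3 3) * (u 0) * (u 0) + (48) * (A 3 3) * (u 1) * (u 1) + (48) * (A 3 3) * (u 2) * (u 2) + (144) * (A 3 3) * (u 3) * (u 3)) * hc2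

/-! ### Disjointness -/

lemma disj12 : Disjoint (signedPerms ![(1:ℝ),1,1,1]) (signedPerms ![2,0,0,0]) := by
  rw [sp1_eq, sp2_eq, Finset.disjoint_left]
  rintro v hv1 hv2
  obtain ⟨ε, -, rfl⟩ := Finset.mem_image.mp hv1
  obtain ⟨⟨j, s⟩, -, hv⟩ := Finset.mem_image.mp hv2
  have hj := congrFun hv j
  simp only [sp1map, sp2map, if_pos rfl] at hj
  cases hε : ε j <;> cases hs : s <;> rw [hε, hs] at hj <;> norm_num at hj

lemma disj3 (c : ℝ) (h1 : 1 < c) (h2 : c < 2) :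
    Disjoint (signedPerms ![(1:ℝ),1,1,1] ∪ signedPerms ![2,0,0,0])
      (evenSignedPerms ![c, 1, c - 1, 0]) := by
  have hw4 : ∀ k : Fin 4, ![c,1,c-1,0] k = c ∨ ![c,1,c-1,0] k = 1
      ∨ ![c,1,c-1,0] k = c - 1 ∨ ![c,1,c-1,0] k = 0 := by
    intro k; fin_cases k <;> simp
  rw [Finset.disjoint_left]
  rintro v hv hv3
  rw [sp3_eq] at hv3
  obtain ⟨⟨σ, b⟩, -, rfl⟩ := Finset.mem_image.mp hv3
  rcases Finset.mem_union.mp hv with hv1 | hv2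
  · rw [sp1_eq] at hv1
    obtain ⟨ε, -, hfe⟩ := Finset.mem_image.mp hv1
    have hk := congrFun hfe (σ.symm 3)
    simp only [sp1map, sp3map, Equiv.apply_symm_apply] at hk
    rw [show ![c,1,c-1,0] 3 = 0 from rfl, mul_zero] at hk
    cases hε : ε (σ.symm 3) <;> rw [hε] at hk <;> norm_num at hk
  · rw [sp2_eq] at hv2
    obtain ⟨⟨j, s⟩, -, hfe⟩ := Finset.mem_image.mp hv2
    have hk := congrFun hfe j
    simp only [sp1map, sp2map, sp3map, if_pos rfl] at hk
    rcases hw4 (σ j) with h | h | h | h <;> rw [h] at hk <;>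
      cases hs : s <;> cases hb : b (σ j) <;> simp only [hs, hb] at hk <;>
      norm_num at hk <;> linarith

/-! ### Main theorem -/

/-- The 120 vertices of the 600-cell form a 4-averaging set in `ℝ⁴`:
`∑ ⟨u,η⟩² = 120|u|²`, `∑ ⟨u,η⟩²⟨Aη,η⟩ = 160⟨Au,u⟩ + 80 tr(A)|u|²`, and for unit `u` the
ratio equals `(8/3)((2/4)⟨Au,u⟩ + (1/4)tr A)`. Here `c` is the golden ratio; the vertex set
consists of `(±1,±1,±1,±1)`, all permutations of `(±2,0,0,0)`, and all even permutations
of `(±c,±1,±1/c,0)`. -/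
theorem cell600_four_averaging (c : ℝ) (hc : c = (1 + Real.sqrt 5) / 2)
    (J : Finset (Fin 4 → ℝ))
    (hJ : J = signedPerms ![1, 1, 1, 1] ∪ signedPerms ![2, 0, 0, 0]
              ∪ evenSignedPerms ![c, 1, c⁻¹, 0])
    (u : Fin 4 → ℝ)
    (A : Matrix (Fin 4) (Fin 4) ℝ) (hA : A.IsSymm) :
    (∑ η ∈ J, (u ⬝ᵥ η) ^ 2 = 120 * (u ⬝ᵥ u)) ∧
    (∑ η ∈ J, (u ⬝ᵥ η) ^ 2 * (A.mulVec η ⬝ᵥ η)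
      = 160 * (A.mulVec u ⬝ᵥ u) + 80 * Matrix.trace A * (u ⬝ᵥ u)) ∧
    (u ⬝ᵥ u = 1 →
      (∑ η ∈ J, (u ⬝ᵥ η) ^ 2 * (A.mulVec η ⬝ᵥ η)) / (∑ η ∈ J, (u ⬝ᵥ η) ^ 2)
        = (8 / 3) * ((2 / 4) * (A.mulVec u ⬝ᵥ u) + (1 / 4) * Matrix.trace A)) := by
  have hs : Real.sqrt 5 ^ 2 = 5 := Real.sq_sqrt (by norm_num)
  have hsnn : 0 ≤ Real.sqrt 5 := Real.sqrt_nonneg 5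
  have hslb : 2 < Real.sqrt 5 := by nlinarith
  have hsub : Real.sqrt 5 < 3 := by nlinarith
  have h1 : 1 < c := by rw [hc]; linarith
  have h2 : c < 2 := by rw [hc]; linarith
  have hc0 : c ≠ 0 := by intro h; rw [h] at h1; linarith
  have hc2 : c ^ 2 = c + 1 := by rw [hc]; linear_combination (1/4) * hs
  have hcinv : c⁻¹ = c - 1 := by
    rw [inv_eq_one_div, eq_comm, eq_div_iff hc0]
    linear_combination hc2
  rw [hcinv] at hJ
  subst hJ
  have key1 : ∑ η ∈ (signedPerms ![(1:ℝ),1,1,1] ∪ signedPerms ![2,0,0,0]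
        ∪ evenSignedPerms ![c, 1, c - 1, 0]), (u ⬝ᵥ η) ^ 2 = 120 * (u ⬝ᵥ u) := by
    rw [Finset.sum_union (disj3 c h1 h2), Finset.sum_union disj12,
      sp1_sum1 u, sp2_sum1 u, sp3_sum1 c h1 h2 hc2 u]
    ring
  have key2 : ∑ η ∈ (signedPerms ![(1:ℝ),1,1,1] ∪ signedPerms ![2,0,0,0]
        ∪ evenSignedPerms ![c, 1, c - 1, 0]), (u ⬝ᵥ η) ^ 2 * (A.mulVec η ⬝ᵥ η)
      = 160 * (A.mulVec u ⬝ᵥ u) + 80 * Matrix.trace A * (u ⬝ᵥ u) := by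
    rw [Finset.sum_union (disj3 c h1 h2), Finset.sum_union disj12,
      sp1_sum2 u A, sp2_sum2 u A, sp3_sum2 c h1 h2 hc2 u A]
    ring
  refine ⟨key1, key2, fun hu => ?_⟩
  rw [key1, key2, hu]
  ring
end

section
/- Let c = (1 + √5)/2 and let J ⊂ ℝ⁴ be the 600 vertices of the 120-cell: all permutations of (±2, ±2, 0, 0), of (±√5, ±1, ±1, ±1), of (±c, ±c, ±c, ±c⁻²), and of (±c², ±c⁻¹, ±c⁻¹, ±c⁻¹), together with all even permutations of (±c², ±c⁻², ±1, 0), of (±√5, ±c⁻¹, ±c, 0), and of (±2, ±1, ±c, ±c⁻¹) (all sign choices). Then for every u ∈ ℝ⁴ and every symmetric 4×4 real matrix A: (i) Σ_{η ∈ J} ⟨u, η⟩² = 1200·|u|²; (ii) Σ_{η ∈ J} ⟨u, η⟩² ⟨A η, η⟩ = 3200·⟨A u, u⟩ + 1600·tr(A)·|u|². In particular, for unit u the ratio (ii)/(i) equals (16/3)·( (2/4)⟨Au,u⟩ + (1/4)tr(A) ), so J is a 4-averaging set in ℝ⁴. -/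
open Matrix

noncomputable def act (w : Fin 4 → ℝ) (x : Equiv.Perm (Fin 4) × (Fin 4 → Bool)) : Fin 4 → ℝ :=
  fun i => (if x.2 i then (1 : ℝ) else -1) * w (x.1 i)

lemma fin4cases : ∀ j : Fin 4, j = 0 ∨ j = 1 ∨ j = 2 ∨ j = 3 := by decide

lemma sg_mul (a b : Bool) :
    (if (a == b) then (1:ℝ) else -1) = (if a then (1:ℝ) else -1) * (if b then (1:ℝ) else -1) := by
  cases a <;> cases b <;> norm_num

lemma sg_sq (a : Bool) : (if a then (1:ℝ) else -1) * (if a then (1:ℝ) else -1) = 1 := by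
  cases a <;> norm_num

lemma fiber_card (w : Fin 4 → ℝ) (P : Finset (Equiv.Perm (Fin 4)))
    (hmul : ∀ a ∈ P, ∀ b ∈ P, a * b ∈ P) (hinv : ∀ a ∈ P, a⁻¹ ∈ P)
    (x₀ : Equiv.Perm (Fin 4) × (Fin 4 → Bool)) (hx₀ : x₀ ∈ P ×ˢ Finset.univ) :
    ((P ×ˢ Finset.univ).filter fun x => act w x = act w x₀).card
      = ((P ×ˢ Finset.univ).filter fun x => act w x = w).card := by
  simp only [Finset.mem_product, Finset.mem_univ, and_true] at hx₀
  apply Finset.card_bij'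
    (i := fun x _ => ((x.1 * x₀.1⁻¹, fun i => (x.2 (x₀.1⁻¹ i) == x₀.2 (x₀.1⁻¹ i))) :
      Equiv.Perm (Fin 4) × (Fin 4 → Bool)))
    (j := fun y _ => ((y.1 * x₀.1, fun i => (y.2 (x₀.1 i) == x₀.2 i)) :
      Equiv.Perm (Fin 4) × (Fin 4 → Bool)))
  · intro x hx
    simp only [Finset.mem_filter, Finset.mem_product, Finset.mem_univ, and_true] at hx ⊢
    obtain ⟨hxP, hfx⟩ := hx
    refine ⟨hmul _ hxP _ (hinv _ hx₀), ?_⟩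
    funext i
    have h := congrFun hfx (x₀.1⁻¹ i)
    simp only [act, Equiv.Perm.mul_apply, sg_mul] at h ⊢
    have h2 : x₀.1 (x₀.1⁻¹ i) = i := Equiv.apply_symm_apply _ _
    rw [Equiv.Perm.inv_def] at *
    rw [h2] at h
    rw [mul_right_comm, h, mul_comm, ← mul_assoc, sg_sq, one_mul]
  · intro y hy
    simp only [Finset.mem_filter, Finset.mem_product, Finset.mem_univ, and_true] at hy ⊢
    obtain ⟨hyP, hfy⟩ := hy
    refine ⟨hmul _ hyP _ hx₀, ?_⟩
    funext i
    have h := congrFun hfy (x₀.1 i)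
    simp only [act, Equiv.Perm.mul_apply, sg_mul] at h ⊢
    rw [mul_comm (if y.2 (x₀.1 i) then (1:ℝ) else -1), mul_assoc, h]
  · intro x hx
    ext i
    · simp [mul_assoc]
    · simp only []
      have : x₀.1⁻¹ (x₀.1 i) = i := Equiv.symm_apply_apply _ _
      rw [this]
      cases h1 : x.2 i <;> cases h2 : x₀.2 i <;> simp [h1, h2]
  · intro y hy
    ext i
    · simp [mul_assoc]
    · simp only []
      have : x₀.1 (x₀.1⁻¹ i) = i := Equiv.apply_symm_apply _ _
      rw [this]
      cases h1 : y.2 i <;> cases h2 : x₀.2 (x₀.1⁻¹ i) <;> simp [h1, h2]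

lemma orbit_sum (w : Fin 4 → ℝ) (P : Finset (Equiv.Perm (Fin 4)))
    (hmul : ∀ a ∈ P, ∀ b ∈ P, a * b ∈ P) (hinv : ∀ a ∈ P, a⁻¹ ∈ P)
    (g : (Fin 4 → ℝ) → ℝ) (k : ℕ)
    (hk : ((P ×ˢ Finset.univ).filter fun x => act w x = w).card = k) :
    (k : ℝ) * ∑ η ∈ Finset.image (act w) (P ×ˢ Finset.univ), g η
      = ∑ x ∈ P ×ˢ Finset.univ, g (act w x) := by
  rw [← Finset.sum_fiberwise_of_maps_to' (fun x hx => Finset.mem_image_of_mem (act w) hx) g]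
  rw [Finset.mul_sum]
  refine Finset.sum_congr rfl fun b hb => ?_
  obtain ⟨x₀, hx₀, rfl⟩ := Finset.mem_image.mp hb
  rw [Finset.sum_const, fiber_card w P hmul hinv x₀ hx₀, hk, nsmul_eq_mul]

lemma sum_perm_single (P : Finset (Equiv.Perm (Fin 4))) (m1 : ℕ)
    (hm1 : ∀ (i a : Fin 4), (P.filter fun σ => σ i = a).card = m1)
    (q : Fin 4 → ℝ) (i : Fin 4) :
    ∑ σ ∈ P, q (σ i) = m1 * ∑ a, q a := by
  have h := Finset.sum_fiberwise_of_maps_to' (s := P) (g := fun σ => σ i) (t := Finset.univ)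
    (fun σ _ => Finset.mem_univ _) q
  refine h.symm.trans ?_
  rw [Finset.mul_sum]
  exact Finset.sum_congr rfl fun a _ => by rw [Finset.sum_const, hm1, nsmul_eq_mul]

lemma sum_perm_pair (P : Finset (Equiv.Perm (Fin 4))) (m2 : ℕ)
    (hm2 : ∀ (i k a b : Fin 4), i ≠ k →
      (P.filter fun σ => σ i = a ∧ σ k = b).card = if a = b then 0 else m2)
    (q : Fin 4 → ℝ) (i k : Fin 4) (hik : i ≠ k) :
    ∑ σ ∈ P, q (σ i) * q (σ k) = m2 * ((∑ a, q a) ^ 2 - ∑ a, q a * q a) := by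
  have h0 := Finset.sum_fiberwise_of_maps_to' (s := P) (g := fun σ => (σ i, σ k))
    (t := Finset.univ) (fun σ _ => Finset.mem_univ _) (fun p => q p.1 * q p.2)
  refine h0.symm.trans ?_
  have hfib : ∀ p : Fin 4 × Fin 4,
      (P.filter fun σ => (σ i, σ k) = p).card = if p.1 = p.2 then 0 else m2 := by
    intro p
    have he : (P.filter fun σ => (σ i, σ k) = p)
        = P.filter fun σ => σ i = p.1 ∧ σ k = p.2 :=
      Finset.filter_congr fun σ _ => by simp [Prod.ext_iff]
    rw [he]
    exact hm2 i k p.1 p.2 hik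
  have : ∀ p : Fin 4 × Fin 4,
      ∑ _σ ∈ P.filter fun σ => (σ i, σ k) = p, q p.1 * q p.2
        = (if p.1 = p.2 then 0 else (m2:ℝ)) * (q p.1 * q p.2) := by
    intro p
    rw [Finset.sum_const, hfib, nsmul_eq_mul]
    by_cases h : p.1 = p.2 <;> simp [h]
  rw [Finset.sum_congr rfl fun p _ => this p]
  rw [Fintype.sum_prod_type]
  have : ∀ a : Fin 4, ∑ b, (if a = b then 0 else (m2:ℝ)) * (q a * q b)
      = m2 * (q a * ∑ b, q b) - m2 * (q a * q a) := by
    intro a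
    have h1 : ∀ b : Fin 4, (if a = b then 0 else (m2:ℝ)) * (q a * q b)
        = m2 * (q a * q b) - (if a = b then m2 * (q a * q b) else 0) := by
      intro b; by_cases h : a = b <;> simp [h]
    rw [Finset.sum_congr rfl fun b _ => h1 b, Finset.sum_sub_distrib, Finset.sum_ite_eq]
    simp [Finset.mul_sum]
  rw [Finset.sum_congr rfl fun a _ => this a, Finset.sum_sub_distrib]
  simp only [← Finset.mul_sum]
  rw [← Finset.sum_mul]
  ring

lemma sum_bool4 (F : (Fin 4 → Bool) → ℝ) :
    ∑ ε : Fin 4 → Bool, F ε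
      = ∑ a : Bool, ∑ b : Bool, ∑ c : Bool, ∑ d : Bool, F ![a, b, c, d] := by
  have hbij : Function.Bijective
      (fun x : Bool × Bool × Bool × Bool => (![x.1, x.2.1, x.2.2.1, x.2.2.2] : Fin 4 → Bool)) := by
    decide
  rw [← Fintype.sum_bijective _ hbij _ F (fun x => rfl), Fintype.sum_prod_type]
  refine Finset.sum_congr rfl fun a _ => ?_
  rw [Fintype.sum_prod_type]
  refine Finset.sum_congr rfl fun b _ => ?_
  rw [Fintype.sum_prod_type]

lemma sign_quad (u v : Fin 4 → ℝ) :
    ∑ ε : Fin 4 → Bool, (∑ i, u i * ((if ε i then (1:ℝ) else -1) * v i)) ^ 2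
      = 16 * ∑ i, u i ^ 2 * (v i * v i) := by
  rw [sum_bool4]
  simp only [Fin.sum_univ_four, Matrix.cons_val_zero, Matrix.cons_val_one, Matrix.head_cons,
    Matrix.cons_val_two, Matrix.tail_cons, Matrix.cons_val_three, Fintype.sum_bool]
  norm_num; ring

lemma sign_quart (u v : Fin 4 → ℝ) (A : Matrix (Fin 4) (Fin 4) ℝ) :
    ∑ ε : Fin 4 → Bool,
        (∑ i, u i * ((if ε i then (1:ℝ) else -1) * v i)) ^ 2
          * (∑ i, (∑ j, A i j * ((if ε j then (1:ℝ) else -1) * v j))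
              * ((if ε i then (1:ℝ) else -1) * v i))
      = 16 * ((∑ i, ∑ k, (u i ^ 2 * A k k + u i * u k * (A i k + A k i))
                * ((v i * v i) * (v k * v k)))
            - 2 * ∑ i, u i ^ 2 * A i i * ((v i * v i) * (v i * v i))) := by
  rw [sum_bool4]
  simp only [Fin.sum_univ_four, Matrix.cons_val_zero, Matrix.cons_val_one, Matrix.head_cons,
    Matrix.cons_val_two, Matrix.tail_cons, Matrix.cons_val_three, Fintype.sum_bool]
  norm_num; ring

lemma quad_total (P : Finset (Equiv.Perm (Fin 4))) (m1 : ℕ)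
    (hm1 : ∀ (i a : Fin 4), (P.filter fun σ => σ i = a).card = m1)
    (w u : Fin 4 → ℝ) :
    ∑ x ∈ P ×ˢ (Finset.univ : Finset (Fin 4 → Bool)), (u ⬝ᵥ act w x) ^ 2
      = 16 * m1 * (∑ a, w a * w a) * (∑ i, u i ^ 2) := by
  rw [Finset.sum_product]
  have h : ∀ σ ∈ P, ∑ ε : Fin 4 → Bool, (u ⬝ᵥ act w (σ, ε)) ^ 2
      = 16 * ∑ i, u i ^ 2 * (w (σ i) * w (σ i)) := by
    intro σ _
    simpa [act, dotProduct] using sign_quad u (fun i => w (σ i))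
  rw [Finset.sum_congr rfl h, ← Finset.mul_sum, Finset.sum_comm]
  simp only [← Finset.mul_sum]
  rw [Finset.sum_congr rfl fun i (_ : i ∈ Finset.univ) => by
    rw [sum_perm_single P m1 hm1 (fun a => w a * w a) i]]
  rw [← Finset.sum_mul]
  ring

set_option maxHeartbeats 2000000 in
lemma quart_total (P : Finset (Equiv.Perm (Fin 4))) (m1 m2 : ℕ)
    (hm1 : ∀ (i a : Fin 4), (P.filter fun σ => σ i = a).card = m1)
    (hm2 : ∀ (i k a b : Fin 4), i ≠ k →
      (P.filter fun σ => σ i = a ∧ σ k = b).card = if a = b then 0 else m2)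
    (w u : Fin 4 → ℝ) (A : Matrix (Fin 4) (Fin 4) ℝ) :
    ∑ x ∈ P ×ˢ (Finset.univ : Finset (Fin 4 → Bool)),
        (u ⬝ᵥ act w x) ^ 2 * (A.mulVec (act w x) ⬝ᵥ act w x)
      = 16 * ((m2:ℝ) * ((∑ a, w a * w a) ^ 2 - ∑ a, (w a * w a) * (w a * w a))
              * ((∑ i, u i ^ 2) * (∑ i, A i i) + 2 * (A.mulVec u ⬝ᵥ u))
          + ((m1:ℝ) * (∑ a, (w a * w a) * (w a * w a))
              - 3 * (m2:ℝ) * ((∑ a, w a * w a) ^ 2 - ∑ a, (w a * w a) * (w a * w a)))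
            * (∑ i, u i ^ 2 * A i i)) := by
  set q : Fin 4 → ℝ := fun a => w a * w a with hq
  have hpair : ∀ i k : Fin 4, ∑ σ ∈ P, q (σ i) * q (σ k)
      = if i = k then (m1:ℝ) * (∑ a, q a * q a)
        else (m2:ℝ) * ((∑ a, q a) ^ 2 - ∑ a, q a * q a) := by
    intro i k
    by_cases hik : i = k
    · subst hik; rw [if_pos rfl]
      simpa using sum_perm_single P m1 hm1 (fun a => q a * q a) i
    · rw [if_neg hik]; exact sum_perm_pair P m2 hm2 q i k hik
  rw [Finset.sum_product]
  have h : ∀ σ ∈ P, ∑ ε : Fin 4 → Bool,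
        (u ⬝ᵥ act w (σ, ε)) ^ 2 * (A.mulVec (act w (σ, ε)) ⬝ᵥ act w (σ, ε))
      = 16 * ((∑ i, ∑ k, (u i ^ 2 * A k k + u i * u k * (A i k + A k i))
                * (q (σ i) * q (σ k)))
            - 2 * ∑ i, u i ^ 2 * A i i * (q (σ i) * q (σ i))) := by
    intro σ _
    simpa [act, dotProduct, Matrix.mulVec, hq] using sign_quart u (fun i => w (σ i)) A
  rw [Finset.sum_congr rfl h, ← Finset.mul_sum, Finset.sum_sub_distrib]
  have hX : (∑ σ ∈ P, ∑ i, ∑ k,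
        (u i ^ 2 * A k k + u i * u k * (A i k + A k i)) * (q (σ i) * q (σ k)))
      = ∑ i : Fin 4, ∑ k : Fin 4, (u i ^ 2 * A k k + u i * u k * (A i k + A k i)) *
          (if i = k then (m1:ℝ) * (∑ a, q a * q a)
            else (m2:ℝ) * ((∑ a, q a) ^ 2 - ∑ a, q a * q a)) := by
    rw [Finset.sum_comm]
    refine Finset.sum_congr rfl fun i _ => ?_
    rw [Finset.sum_comm]
    refine Finset.sum_congr rfl fun k _ => ?_
    rw [← Finset.mul_sum, hpair i k]
  have hY : (∑ σ ∈ P, 2 * ∑ i, u i ^ 2 * A i i * (q (σ i) * q (σ i)))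
      = 2 * ∑ i : Fin 4, u i ^ 2 * A i i * ((m1:ℝ) * (∑ a, q a * q a)) := by
    rw [← Finset.mul_sum]
    congr 1
    rw [Finset.sum_comm]
    refine Finset.sum_congr rfl fun i _ => ?_
    rw [← Finset.mul_sum, hpair i i, if_pos rfl]
  rw [hX, hY]
  simp only [Fin.sum_univ_four, Matrix.mulVec, dotProduct, hq, reduceIte, Fin.reduceEq]
  ring

lemma orbit_quad (w : Fin 4 → ℝ) (P : Finset (Equiv.Perm (Fin 4)))
    (hmul : ∀ a ∈ P, ∀ b ∈ P, a * b ∈ P) (hinv : ∀ a ∈ P, a⁻¹ ∈ P)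
    (m1 : ℕ) (hm1 : ∀ (i a : Fin 4), (P.filter fun σ => σ i = a).card = m1)
    (k : ℕ) (hk : ((P ×ˢ Finset.univ).filter fun x => act w x = w).card = k)
    (u : Fin 4 → ℝ) :
    (k : ℝ) * ∑ η ∈ Finset.image (act w) (P ×ˢ Finset.univ), (u ⬝ᵥ η) ^ 2
      = 16 * m1 * (∑ a, w a * w a) * (∑ i, u i ^ 2) :=
  (orbit_sum w P hmul hinv (fun η => (u ⬝ᵥ η) ^ 2) k hk).trans (quad_total P m1 hm1 w u)

lemma orbit_quart (w : Fin 4 → ℝ) (P : Finset (Equiv.Perm (Fin 4)))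
    (hmul : ∀ a ∈ P, ∀ b ∈ P, a * b ∈ P) (hinv : ∀ a ∈ P, a⁻¹ ∈ P)
    (m1 m2 : ℕ) (hm1 : ∀ (i a : Fin 4), (P.filter fun σ => σ i = a).card = m1)
    (hm2 : ∀ (i k a b : Fin 4), i ≠ k →
      (P.filter fun σ => σ i = a ∧ σ k = b).card = if a = b then 0 else m2)
    (k : ℕ) (hk : ((P ×ˢ Finset.univ).filter fun x => act w x = w).card = k)
    (u : Fin 4 → ℝ) (A : Matrix (Fin 4) (Fin 4) ℝ) :
    (k : ℝ) * ∑ η ∈ Finset.image (act w) (P ×ˢ Finset.univ),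
        (u ⬝ᵥ η) ^ 2 * (A.mulVec η ⬝ᵥ η)
      = 16 * ((m2:ℝ) * ((∑ a, w a * w a) ^ 2 - ∑ a, (w a * w a) * (w a * w a))
              * ((∑ i, u i ^ 2) * (∑ i, A i i) + 2 * (A.mulVec u ⬝ᵥ u))
          + ((m1:ℝ) * (∑ a, (w a * w a) * (w a * w a))
              - 3 * (m2:ℝ) * ((∑ a, w a * w a) ^ 2 - ∑ a, (w a * w a) * (w a * w a)))
            * (∑ i, u i ^ 2 * A i i)) :=
  (orbit_sum w P hmul hinv (fun η => (u ⬝ᵥ η) ^ 2 * (A.mulVec η ⬝ᵥ η)) k hk).trans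
    (quart_total P m1 m2 hm1 hm2 w u A)

lemma count1_univ : ∀ (i a : Fin 4),
    ((Finset.univ : Finset (Equiv.Perm (Fin 4))).filter fun σ => σ i = a).card = 6 := by decide

lemma count2_univ : ∀ (i k a b : Fin 4), i ≠ k →
    ((Finset.univ : Finset (Equiv.Perm (Fin 4))).filter fun σ => σ i = a ∧ σ k = b).card
      = if a = b then 0 else 2 := by decide

lemma A4count1 : ∀ (i a : Fin 4),
    (((Finset.univ : Finset (Equiv.Perm (Fin 4))).filter
      fun σ => Equiv.Perm.sign σ = 1).filter fun σ => σ i = a).card = 3 := by decide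

lemma A4count2 : ∀ (i k a b : Fin 4), i ≠ k →
    (((Finset.univ : Finset (Equiv.Perm (Fin 4))).filter
      fun σ => Equiv.Perm.sign σ = 1).filter fun σ => σ i = a ∧ σ k = b).card
      = if a = b then 0 else 1 := by decide

lemma A4mul : ∀ a ∈ ((Finset.univ : Finset (Equiv.Perm (Fin 4))).filter
      fun σ => Equiv.Perm.sign σ = 1), ∀ b ∈ ((Finset.univ : Finset (Equiv.Perm (Fin 4))).filter
      fun σ => Equiv.Perm.sign σ = 1), a * b ∈ ((Finset.univ : Finset (Equiv.Perm (Fin 4))).filter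
      fun σ => Equiv.Perm.sign σ = 1) := by decide

lemma A4inv : ∀ a ∈ ((Finset.univ : Finset (Equiv.Perm (Fin 4))).filter
      fun σ => Equiv.Perm.sign σ = 1), a⁻¹ ∈ ((Finset.univ : Finset (Equiv.Perm (Fin 4))).filter
      fun σ => Equiv.Perm.sign σ = 1) := by decide

lemma sum_pow4_inv (w : Fin 4 → ℝ) (s : Finset (Equiv.Perm (Fin 4) × (Fin 4 → Bool)))
    {η : Fin 4 → ℝ} (hη : η ∈ Finset.image (act w) s) :
    ∑ i, (η i * η i) * (η i * η i) = ∑ i, (w i * w i) * (w i * w i) := by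
  obtain ⟨x, -, rfl⟩ := Finset.mem_image.mp hη
  have h : ∀ i, (act w x i * act w x i) * (act w x i * act w x i)
      = (w (x.1 i) * w (x.1 i)) * (w (x.1 i) * w (x.1 i)) := by
    intro i
    simp only [act]
    cases hb : x.2 i <;> simp [hb] <;> ring
  rw [Finset.sum_congr rfl fun i _ => h i]
  exact Equiv.sum_comp x.1 fun a => (w a * w a) * (w a * w a)

lemma sum_pow6_inv (w : Fin 4 → ℝ) (s : Finset (Equiv.Perm (Fin 4) × (Fin 4 → Bool)))
    {η : Fin 4 → ℝ} (hη : η ∈ Finset.image (act w) s) :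
    ∑ i, (η i * η i) * (η i * η i) * (η i * η i)
      = ∑ i, (w i * w i) * (w i * w i) * (w i * w i) := by
  obtain ⟨x, -, rfl⟩ := Finset.mem_image.mp hη
  have h : ∀ i, (act w x i * act w x i) * (act w x i * act w x i) * (act w x i * act w x i)
      = (w (x.1 i) * w (x.1 i)) * (w (x.1 i) * w (x.1 i)) * (w (x.1 i) * w (x.1 i)) := by
    intro i
    simp only [act]
    cases hb : x.2 i <;> simp [hb] <;> ring
  rw [Finset.sum_congr rfl fun i _ => h i]
  exact Equiv.sum_comp x.1 fun a => (w a * w a) * (w a * w a) * (w a * w a)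

lemma disj4 (w w' : Fin 4 → ℝ) (s s' : Finset (Equiv.Perm (Fin 4) × (Fin 4 → Bool)))
    (hne : (∑ i, (w i * w i) * (w i * w i)) ≠ ∑ i, (w' i * w' i) * (w' i * w' i)) :
    Disjoint (Finset.image (act w) s) (Finset.image (act w') s') := by
  rw [Finset.disjoint_left]
  intro η h1 h2
  exact hne ((sum_pow4_inv w s h1).symm.trans (sum_pow4_inv w' s' h2))

lemma disj6 (w w' : Fin 4 → ℝ) (s s' : Finset (Equiv.Perm (Fin 4) × (Fin 4 → Bool)))
    (hne : (∑ i, (w i * w i) * (w i * w i) * (w i * w i))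
      ≠ ∑ i, (w' i * w' i) * (w' i * w' i) * (w' i * w' i)) :
    Disjoint (Finset.image (act w) s) (Finset.image (act w') s') := by
  rw [Finset.disjoint_left]
  intro η h1 h2
  exact hne ((sum_pow6_inv w s h1).symm.trans (sum_pow6_inv w' s' h2))

lemma stab7 (c : ℝ) (hc2 : c^2 = c+1) (hl : 1.5 < c) (hu : c < 1.7)
    (hcinv : c⁻¹ = c - 1) :
    (((Finset.univ.filter fun σ : Equiv.Perm (Fin 4) => Equiv.Perm.sign σ = 1)
        ×ˢ (Finset.univ : Finset (Fin 4 → Bool))).filter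
      fun x => act ![2, 1, c, c⁻¹] x = ![2, 1, c, c⁻¹]).card = 1 := by
  have key : ∀ x ∈ ((Finset.univ.filter fun σ : Equiv.Perm (Fin 4) => Equiv.Perm.sign σ = 1)
      ×ˢ (Finset.univ : Finset (Fin 4 → Bool))),
      (act ![2, 1, c, c⁻¹] x = ![2, 1, c, c⁻¹]
        ↔ x = ((1 : Equiv.Perm (Fin 4)), fun _ => true)) := by
    intro x _
    constructor
    · intro h
      have hf : ∀ i, x.1 i = i ∧ x.2 i = true := by
        intro i
        obtain ⟨j, hj⟩ : ∃ j, x.1 i = j := ⟨_, rfl⟩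
        obtain ⟨b, hb⟩ : ∃ b, x.2 i = b := ⟨_, rfl⟩
        have hcf := congrFun h i
        simp only [act] at hcf
        rw [hj, hb] at hcf
        rw [hj, hb]
        rcases fin4cases i with rfl | rfl | rfl | rfl <;>
          rcases fin4cases j with rfl | rfl | rfl | rfl <;>
          cases b <;>
          (try norm_num [hcinv, Matrix.cons_val_zero, Matrix.cons_val_one, Matrix.cons_val_two, Matrix.cons_val_three, Matrix.head_cons, Matrix.tail_cons] at hcf) <;>
          first
            | exact ⟨rfl, rfl⟩
            | (exfalso; nlinarith [hl, hu])
      have hx1 : x.1 = 1 := Equiv.ext fun i => by simpa using (hf i).1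
      have hx2 : x.2 = fun _ => true := funext fun i => (hf i).2
      exact Prod.ext hx1 hx2
    · rintro rfl
      funext i
      simp [act]
  rw [Finset.filter_congr key]
  decide

lemma stab1 :
    (((Finset.univ : Finset (Equiv.Perm (Fin 4)))
        ×ˢ (Finset.univ : Finset (Fin 4 → Bool))).filter
      fun x => act ![2, 2, 0, 0] x = ![2, 2, 0, 0]).card = 16 := by
  have key : ∀ x ∈ ((Finset.univ : Finset (Equiv.Perm (Fin 4)))
      ×ˢ (Finset.univ : Finset (Fin 4 → Bool))),
      (act ![2, 2, 0, 0] x = ![2, 2, 0, 0]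
        ↔ ((x.1 0 = 0 ∨ x.1 0 = 1) ∧ (x.1 1 = 0 ∨ x.1 1 = 1) ∧ (x.1 2 = 2 ∨ x.1 2 = 3)
            ∧ (x.1 3 = 2 ∨ x.1 3 = 3) ∧ x.2 0 = true ∧ x.2 1 = true)) := by
    intro x _
    constructor
    · intro h
      have hf : ∀ i, ((i = 0 ∨ i = 1) → ((x.1 i = 0 ∨ x.1 i = 1) ∧ x.2 i = true))
          ∧ ((i = 2 ∨ i = 3) → (x.1 i = 2 ∨ x.1 i = 3)) := by
        intro i
        obtain ⟨j, hj⟩ : ∃ j, x.1 i = j := ⟨_, rfl⟩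
        obtain ⟨b, hb⟩ : ∃ b, x.2 i = b := ⟨_, rfl⟩
        have hcf := congrFun h i
        simp only [act] at hcf
        rw [hj, hb] at hcf
        rw [hj, hb]
        rcases fin4cases i with rfl | rfl | rfl | rfl <;>
          rcases fin4cases j with rfl | rfl | rfl | rfl <;>
          cases b <;>
          (try norm_num [Matrix.cons_val_zero, Matrix.cons_val_one, Matrix.cons_val_two, Matrix.cons_val_three, Matrix.head_cons, Matrix.tail_cons] at hcf) <;>
          first
            | exact ⟨fun _ => ⟨Or.inl rfl, rfl⟩, fun hh => absurd hh (by decide)⟩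
            | exact ⟨fun _ => ⟨Or.inr rfl, rfl⟩, fun hh => absurd hh (by decide)⟩
            | exact ⟨fun hh => absurd hh (by decide), fun _ => Or.inl rfl⟩
            | exact ⟨fun hh => absurd hh (by decide), fun _ => Or.inr rfl⟩
      exact ⟨((hf 0).1 (Or.inl rfl)).1, ((hf 1).1 (Or.inr rfl)).1, (hf 2).2 (Or.inl rfl),
        (hf 3).2 (Or.inr rfl), ((hf 0).1 (Or.inl rfl)).2, ((hf 1).1 (Or.inr rfl)).2⟩
    · rintro ⟨h1, h2, h3, h4, h5, h6⟩
      funext i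
      simp only [act]
      rcases fin4cases i with rfl | rfl | rfl | rfl
      · rcases h1 with h | h <;> simp [h, h5]
      · rcases h2 with h | h <;> simp [h, h6]
      · rcases h3 with h | h <;> simp [h]
      · rcases h4 with h | h <;> simp [h]
  rw [Finset.filter_congr key]
  decide

lemma stab2 (c : ℝ) (hc2 : c^2 = c+1) (hl : 1.5 < c) (hu : c < 1.7)
    (hs5 : Real.sqrt 5 = 2*c - 1) :
    (((Finset.univ : Finset (Equiv.Perm (Fin 4)))
        ×ˢ (Finset.univ : Finset (Fin 4 → Bool))).filter
      fun x => act ![Real.sqrt 5, 1, 1, 1] x = ![Real.sqrt 5, 1, 1, 1]).card = 6 := by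
  have key : ∀ x ∈ ((Finset.univ : Finset (Equiv.Perm (Fin 4)))
      ×ˢ (Finset.univ : Finset (Fin 4 → Bool))),
      (act ![Real.sqrt 5, 1, 1, 1] x = ![Real.sqrt 5, 1, 1, 1]
        ↔ (x.1 0 = 0 ∧ x.2 0 = true ∧ x.2 1 = true ∧ x.2 2 = true ∧ x.2 3 = true)) := by
    intro x _
    constructor
    · intro h
      have hf : ∀ i, (i = 0 → x.1 i = 0) ∧ x.2 i = true := by
        intro i
        obtain ⟨j, hj⟩ : ∃ j, x.1 i = j := ⟨_, rfl⟩
        obtain ⟨b, hb⟩ : ∃ b, x.2 i = b := ⟨_, rfl⟩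
        have hcf := congrFun h i
        simp only [act] at hcf
        rw [hj, hb] at hcf
        rw [hj, hb]
        rcases fin4cases i with rfl | rfl | rfl | rfl <;>
          rcases fin4cases j with rfl | rfl | rfl | rfl <;>
          cases b <;>
          (try norm_num [hs5, Matrix.cons_val_zero, Matrix.cons_val_one, Matrix.cons_val_two, Matrix.cons_val_three, Matrix.head_cons, Matrix.tail_cons] at hcf) <;>
          first
            | exact ⟨fun _ => rfl, rfl⟩
            | exact ⟨fun hh => absurd hh (by decide), rfl⟩
            | (exfalso; nlinarith [hl, hu])
      exact ⟨(hf 0).1 rfl, (hf 0).2, (hf 1).2, (hf 2).2, (hf 3).2⟩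
    · rintro ⟨h1, h2, h3, h4, h5⟩
      funext i
      obtain ⟨j, hj⟩ : ∃ j, x.1 i = j := ⟨_, rfl⟩
      have hji : j = 0 → i = 0 := fun h0 => x.1.injective (by rw [hj, h0, h1])
      simp only [act]
      rw [hj]
      rcases fin4cases i with rfl | rfl | rfl | rfl <;>
        rcases fin4cases j with rfl | rfl | rfl | rfl <;>
        first
          | exact absurd (hj.symm.trans h1) (by decide)
          | exact absurd (hji rfl) (by decide)
          | simp [h2, h3, h4, h5]
  rw [Finset.filter_congr key]
  decide

lemma stab3 (c : ℝ) (hc2 : c^2 = c+1) (hl : 1.5 < c) (hu : c < 1.7)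
    (hc2inv : (c^2)⁻¹ = 2 - c) :
    (((Finset.univ : Finset (Equiv.Perm (Fin 4)))
        ×ˢ (Finset.univ : Finset (Fin 4 → Bool))).filter
      fun x => act ![c, c, c, (c^2)⁻¹] x = ![c, c, c, (c^2)⁻¹]).card = 6 := by
  have key : ∀ x ∈ ((Finset.univ : Finset (Equiv.Perm (Fin 4)))
      ×ˢ (Finset.univ : Finset (Fin 4 → Bool))),
      (act ![c, c, c, (c^2)⁻¹] x = ![c, c, c, (c^2)⁻¹]
        ↔ (x.1 3 = 3 ∧ x.2 0 = true ∧ x.2 1 = true ∧ x.2 2 = true ∧ x.2 3 = true)) := by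
    intro x _
    constructor
    · intro h
      have hf : ∀ i, (i = 3 → x.1 i = 3) ∧ x.2 i = true := by
        intro i
        obtain ⟨j, hj⟩ : ∃ j, x.1 i = j := ⟨_, rfl⟩
        obtain ⟨b, hb⟩ : ∃ b, x.2 i = b := ⟨_, rfl⟩
        have hcf := congrFun h i
        simp only [act] at hcf
        rw [hj, hb] at hcf
        rw [hj, hb]
        rcases fin4cases i with rfl | rfl | rfl | rfl <;>
          rcases fin4cases j with rfl | rfl | rfl | rfl <;>
          cases b <;>
          (try norm_num [hc2inv, Matrix.cons_val_zero, Matrix.cons_val_one, Matrix.cons_val_two, Matrix.cons_val_three, Matrix.head_cons, Matrix.tail_cons] at hcf) <;>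
          first
            | exact ⟨fun _ => rfl, rfl⟩
            | exact ⟨fun hh => absurd hh (by decide), rfl⟩
            | (exfalso; nlinarith [hl, hu])
      exact ⟨(hf 3).1 rfl, (hf 0).2, (hf 1).2, (hf 2).2, (hf 3).2⟩
    · rintro ⟨h1, h2, h3, h4, h5⟩
      funext i
      obtain ⟨j, hj⟩ : ∃ j, x.1 i = j := ⟨_, rfl⟩
      have hji : j = 3 → i = 3 := fun h0 => x.1.injective (by rw [hj, h0, h1])
      simp only [act]
      rw [hj]
      rcases fin4cases i with rfl | rfl | rfl | rfl <;>
        rcases fin4cases j with rfl | rfl | rfl | rfl <;>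
        first
          | exact absurd (hj.symm.trans h1) (by decide)
          | exact absurd (hji rfl) (by decide)
          | simp [h2, h3, h4, h5]
  rw [Finset.filter_congr key]
  decide

lemma stab4 (c : ℝ) (hc2 : c^2 = c+1) (hl : 1.5 < c) (hu : c < 1.7)
    (hcinv : c⁻¹ = c - 1) :
    (((Finset.univ : Finset (Equiv.Perm (Fin 4)))
        ×ˢ (Finset.univ : Finset (Fin 4 → Bool))).filter
      fun x => act ![c^2, c⁻¹, c⁻¹, c⁻¹] x = ![c^2, c⁻¹, c⁻¹, c⁻¹]).card = 6 := by
  have key : ∀ x ∈ ((Finset.univ : Finset (Equiv.Perm (Fin 4)))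
      ×ˢ (Finset.univ : Finset (Fin 4 → Bool))),
      (act ![c^2, c⁻¹, c⁻¹, c⁻¹] x = ![c^2, c⁻¹, c⁻¹, c⁻¹]
        ↔ (x.1 0 = 0 ∧ x.2 0 = true ∧ x.2 1 = true ∧ x.2 2 = true ∧ x.2 3 = true)) := by
    intro x _
    constructor
    · intro h
      have hf : ∀ i, (i = 0 → x.1 i = 0) ∧ x.2 i = true := by
        intro i
        obtain ⟨j, hj⟩ : ∃ j, x.1 i = j := ⟨_, rfl⟩
        obtain ⟨b, hb⟩ : ∃ b, x.2 i = b := ⟨_, rfl⟩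
        have hcf := congrFun h i
        simp only [act] at hcf
        rw [hj, hb] at hcf
        rw [hj, hb]
        rcases fin4cases i with rfl | rfl | rfl | rfl <;>
          rcases fin4cases j with rfl | rfl | rfl | rfl <;>
          cases b <;>
          (try norm_num [hcinv, Matrix.cons_val_zero, Matrix.cons_val_one, Matrix.cons_val_two, Matrix.cons_val_three, Matrix.head_cons, Matrix.tail_cons] at hcf) <;>
          first
            | exact ⟨fun _ => rfl, rfl⟩
            | exact ⟨fun hh => absurd hh (by decide), rfl⟩
            | (exfalso; nlinarith [hl, hu, hc2])
      exact ⟨(hf 0).1 rfl, (hf 0).2, (hf 1).2, (hf 2).2, (hf 3).2⟩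
    · rintro ⟨h1, h2, h3, h4, h5⟩
      funext i
      obtain ⟨j, hj⟩ : ∃ j, x.1 i = j := ⟨_, rfl⟩
      have hji : j = 0 → i = 0 := fun h0 => x.1.injective (by rw [hj, h0, h1])
      simp only [act]
      rw [hj]
      rcases fin4cases i with rfl | rfl | rfl | rfl <;>
        rcases fin4cases j with rfl | rfl | rfl | rfl <;>
        first
          | exact absurd (hj.symm.trans h1) (by decide)
          | exact absurd (hji rfl) (by decide)
          | simp [h2, h3, h4, h5]
  rw [Finset.filter_congr key]
  decide

lemma stab5 (c : ℝ) (hc2 : c^2 = c+1) (hl : 1.5 < c) (hu : c < 1.7)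
    (hc2inv : (c^2)⁻¹ = 2 - c) :
    (((Finset.univ.filter fun σ : Equiv.Perm (Fin 4) => Equiv.Perm.sign σ = 1)
        ×ˢ (Finset.univ : Finset (Fin 4 → Bool))).filter
      fun x => act ![c^2, (c^2)⁻¹, 1, 0] x = ![c^2, (c^2)⁻¹, 1, 0]).card = 2 := by
  have key : ∀ x ∈ ((Finset.univ.filter fun σ : Equiv.Perm (Fin 4) => Equiv.Perm.sign σ = 1)
      ×ˢ (Finset.univ : Finset (Fin 4 → Bool))),
      (act ![c^2, (c^2)⁻¹, 1, 0] x = ![c^2, (c^2)⁻¹, 1, 0]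
        ↔ (x.1 0 = 0 ∧ x.1 1 = 1 ∧ x.1 2 = 2
            ∧ x.2 0 = true ∧ x.2 1 = true ∧ x.2 2 = true)) := by
    intro x _
    constructor
    · intro h
      have hf : ∀ i, i ≠ 3 → x.1 i = i ∧ x.2 i = true := by
        intro i
        obtain ⟨j, hj⟩ : ∃ j, x.1 i = j := ⟨_, rfl⟩
        obtain ⟨b, hb⟩ : ∃ b, x.2 i = b := ⟨_, rfl⟩
        have hcf := congrFun h i
        simp only [act] at hcf
        rw [hj, hb] at hcf
        rw [hj, hb]
        rcases fin4cases i with rfl | rfl | rfl | rfl <;>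
          rcases fin4cases j with rfl | rfl | rfl | rfl <;>
          cases b <;>
          (try norm_num [hc2inv, Matrix.cons_val_zero, Matrix.cons_val_one, Matrix.cons_val_two, Matrix.cons_val_three, Matrix.head_cons, Matrix.tail_cons] at hcf) <;>
          first
            | exact fun _ => ⟨rfl, rfl⟩
            | exact fun hh => absurd rfl hh
            | (intro _; exfalso; nlinarith [hl, hu, hc2])
            | (intro _; exfalso; rcases hcf with hcf | hcf <;> nlinarith [hl, hu, hc2])
      exact ⟨((hf 0) (by decide)).1, ((hf 1) (by decide)).1, ((hf 2) (by decide)).1,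
        ((hf 0) (by decide)).2, ((hf 1) (by decide)).2, ((hf 2) (by decide)).2⟩
    · rintro ⟨h1, h2, h3, h4, h5, h6⟩
      have hx3 : x.1 3 = 3 := by
        rcases fin4cases (x.1 3) with hh | hh | hh | hh
        · exact absurd (x.1.injective (hh.trans h1.symm)) (by decide)
        · exact absurd (x.1.injective (hh.trans h2.symm)) (by decide)
        · exact absurd (x.1.injective (hh.trans h3.symm)) (by decide)
        · exact hh
      funext i
      simp only [act]
      rcases fin4cases i with rfl | rfl | rfl | rfl
      · simp [h1, h4]
      · simp [h2, h5]
      · simp [h3, h6]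
      · simp [hx3]
  rw [Finset.filter_congr key]
  decide

lemma stab6 (c : ℝ) (hc2 : c^2 = c+1) (hl : 1.5 < c) (hu : c < 1.7)
    (hcinv : c⁻¹ = c - 1) (hs5 : Real.sqrt 5 = 2*c - 1) :
    (((Finset.univ.filter fun σ : Equiv.Perm (Fin 4) => Equiv.Perm.sign σ = 1)
        ×ˢ (Finset.univ : Finset (Fin 4 → Bool))).filter
      fun x => act ![Real.sqrt 5, c⁻¹, c, 0] x = ![Real.sqrt 5, c⁻¹, c, 0]).card = 2 := by
  have key : ∀ x ∈ ((Finset.univ.filter fun σ : Equiv.Perm (Fin 4) => Equiv.Perm.sign σ = 1)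
      ×ˢ (Finset.univ : Finset (Fin 4 → Bool))),
      (act ![Real.sqrt 5, c⁻¹, c, 0] x = ![Real.sqrt 5, c⁻¹, c, 0]
        ↔ (x.1 0 = 0 ∧ x.1 1 = 1 ∧ x.1 2 = 2
            ∧ x.2 0 = true ∧ x.2 1 = true ∧ x.2 2 = true)) := by
    intro x _
    constructor
    · intro h
      have hf : ∀ i, i ≠ 3 → x.1 i = i ∧ x.2 i = true := by
        intro i
        obtain ⟨j, hj⟩ : ∃ j, x.1 i = j := ⟨_, rfl⟩
        obtain ⟨b, hb⟩ : ∃ b, x.2 i = b := ⟨_, rfl⟩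
        have hcf := congrFun h i
        simp only [act] at hcf
        rw [hj, hb] at hcf
        rw [hj, hb]
        rcases fin4cases i with rfl | rfl | rfl | rfl <;>
          rcases fin4cases j with rfl | rfl | rfl | rfl <;>
          cases b <;>
          (try norm_num [hcinv, hs5, Matrix.cons_val_zero, Matrix.cons_val_one, Matrix.cons_val_two, Matrix.cons_val_three, Matrix.head_cons, Matrix.tail_cons] at hcf) <;>
          first
            | exact fun _ => ⟨rfl, rfl⟩
            | exact fun hh => absurd rfl hh
            | (intro _; exfalso; nlinarith [hl, hu, hc2])
            | (intro _; exfalso; rcases hcf with hcf | hcf <;> nlinarith [hl, hu, hc2])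
      exact ⟨((hf 0) (by decide)).1, ((hf 1) (by decide)).1, ((hf 2) (by decide)).1,
        ((hf 0) (by decide)).2, ((hf 1) (by decide)).2, ((hf 2) (by decide)).2⟩
    · rintro ⟨h1, h2, h3, h4, h5, h6⟩
      have hx3 : x.1 3 = 3 := by
        rcases fin4cases (x.1 3) with hh | hh | hh | hh
        · exact absurd (x.1.injective (hh.trans h1.symm)) (by decide)
        · exact absurd (x.1.injective (hh.trans h2.symm)) (by decide)
        · exact absurd (x.1.injective (hh.trans h3.symm)) (by decide)
        · exact hh
      funext i
      simp only [act]
      rcases fin4cases i with rfl | rfl | rfl | rfl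
      · simp [h1, h4]
      · simp [h2, h5]
      · simp [h3, h6]
      · simp [hx3]
  rw [Finset.filter_congr key]
  decide

set_option maxHeartbeats 4000000 in
/-- The 600 vertices of the 120-cell form a 4-averaging set in `ℝ⁴`:
`∑ ⟨u,η⟩² = 1200|u|²`, `∑ ⟨u,η⟩²⟨Aη,η⟩ = 3200⟨Au,u⟩ + 1600 tr(A)|u|²`, and for unit `u`
the ratio equals `(16/3)((2/4)⟨Au,u⟩ + (1/4)tr A)`. Here `c` is the golden ratio; the
vertex set consists of all permutations (with signs) of `(2,2,0,0)`, `(√5,1,1,1)`,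
`(c,c,c,c⁻²)` and `(c²,c⁻¹,c⁻¹,c⁻¹)`, together with all even permutations (with signs) of
`(c²,c⁻²,1,0)`, `(√5,c⁻¹,c,0)` and `(2,1,c,c⁻¹)`. -/
theorem cell120_four_averaging (c : ℝ) (hc : c = (1 + Real.sqrt 5) / 2)
    (J : Finset (Fin 4 → ℝ))
    (hJ : J = signedPerms ![2, 2, 0, 0]
              ∪ signedPerms ![Real.sqrt 5, 1, 1, 1]
              ∪ signedPerms ![c, c, c, (c ^ 2)⁻¹]
              ∪ signedPerms ![c ^ 2, c⁻¹, c⁻¹, c⁻¹]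
              ∪ evenSignedPerms ![c ^ 2, (c ^ 2)⁻¹, 1, 0]
              ∪ evenSignedPerms ![Real.sqrt 5, c⁻¹, c, 0]
              ∪ evenSignedPerms ![2, 1, c, c⁻¹])
    (u : Fin 4 → ℝ)
    (A : Matrix (Fin 4) (Fin 4) ℝ) (hA : A.IsSymm) :
    (∑ η ∈ J, (u ⬝ᵥ η) ^ 2 = 1200 * (u ⬝ᵥ u)) ∧
    (∑ η ∈ J, (u ⬝ᵥ η) ^ 2 * (A.mulVec η ⬝ᵥ η)
      = 3200 * (A.mulVec u ⬝ᵥ u) + 1600 * Matrix.trace A * (u ⬝ᵥ u)) ∧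
    (u ⬝ᵥ u = 1 →
      (∑ η ∈ J, (u ⬝ᵥ η) ^ 2 * (A.mulVec η ⬝ᵥ η)) / (∑ η ∈ J, (u ⬝ᵥ η) ^ 2)
        = (16 / 3) * ((2 / 4) * (A.mulVec u ⬝ᵥ u) + (1 / 4) * Matrix.trace A)) := by
  have hs5sq : Real.sqrt 5 ^ 2 = 5 := Real.sq_sqrt (by norm_num)
  have hs5nn : (0:ℝ) ≤ Real.sqrt 5 := Real.sqrt_nonneg 5
  have hl : 1.5 < c := by rw [hc]; nlinarith [hs5sq, hs5nn]
  have hu2 : c < 1.7 := by rw [hc]; nlinarith [hs5sq, hs5nn]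
  have hc2 : c ^ 2 = c + 1 := by rw [hc]; linear_combination hs5sq / 4
  have hcinv : c⁻¹ = c - 1 := inv_eq_of_mul_eq_one_right (by linear_combination hc2)
  have hc2inv : (c ^ 2)⁻¹ = 2 - c :=
    inv_eq_of_mul_eq_one_right (by linear_combination (1 - c) * hc2)
  have hs5 : Real.sqrt 5 = 2 * c - 1 := by rw [hc]; ring
  have hU : u ⬝ᵥ u = ∑ i, u i ^ 2 := by
    simp only [dotProduct]
    exact Finset.sum_congr rfl fun i _ => (pow_two (u i)).symm
  have hTr : Matrix.trace A = ∑ i, A i i := by simp [Matrix.trace, Matrix.diag]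
  have hmU : ∀ a ∈ (Finset.univ : Finset (Equiv.Perm (Fin 4))), ∀ b ∈
      (Finset.univ : Finset (Equiv.Perm (Fin 4))),
      a * b ∈ (Finset.univ : Finset (Equiv.Perm (Fin 4))) := fun _ _ _ _ => Finset.mem_univ _
  have hiU : ∀ a ∈ (Finset.univ : Finset (Equiv.Perm (Fin 4))),
      a⁻¹ ∈ (Finset.univ : Finset (Equiv.Perm (Fin 4))) := fun _ _ => Finset.mem_univ _
  have S1v : ∑ a, (![2, 2, 0, 0] : Fin 4 → ℝ) a * (![2, 2, 0, 0] : Fin 4 → ℝ) a = 8 := by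
    simp only [Fin.sum_univ_four, Matrix.cons_val_zero, Matrix.cons_val_one,
      Matrix.head_cons, Matrix.cons_val_two, Matrix.tail_cons, Matrix.cons_val_three]
    norm_num
  have Q1v : ∑ a, ((![2, 2, 0, 0] : Fin 4 → ℝ) a * (![2, 2, 0, 0] : Fin 4 → ℝ) a) * ((![2, 2, 0, 0] : Fin 4 → ℝ) a * (![2, 2, 0, 0] : Fin 4 → ℝ) a) = 32 := by
    simp only [Fin.sum_univ_four, Matrix.cons_val_zero, Matrix.cons_val_one,
      Matrix.head_cons, Matrix.cons_val_two, Matrix.tail_cons, Matrix.cons_val_three]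
    norm_num
  have S2v : ∑ a, (![Real.sqrt 5, 1, 1, 1] : Fin 4 → ℝ) a * (![Real.sqrt 5, 1, 1, 1] : Fin 4 → ℝ) a = 8 := by
    simp only [Fin.sum_univ_four, Matrix.cons_val_zero, Matrix.cons_val_one,
      Matrix.head_cons, Matrix.cons_val_two, Matrix.tail_cons, Matrix.cons_val_three]
    rw [hs5]
    linear_combination 4 * hc2
  have Q2v : ∑ a, ((![Real.sqrt 5, 1, 1, 1] : Fin 4 → ℝ) a * (![Real.sqrt 5, 1, 1, 1] : Fin 4 → ℝ) a) * ((![Real.sqrt 5, 1, 1, 1] : Fin 4 → ℝ) a * (![Real.sqrt 5, 1, 1, 1] : Fin 4 → ℝ) a) = 28 := by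
    simp only [Fin.sum_univ_four, Matrix.cons_val_zero, Matrix.cons_val_one,
      Matrix.head_cons, Matrix.cons_val_two, Matrix.tail_cons, Matrix.cons_val_three]
    rw [hs5]
    linear_combination (16*c^2 - 16*c + 24) * hc2
  have S3v : ∑ a, (![c, c, c, (c ^ 2)⁻¹] : Fin 4 → ℝ) a * (![c, c, c, (c ^ 2)⁻¹] : Fin 4 → ℝ) a = 8 := by
    simp only [Fin.sum_univ_four, Matrix.cons_val_zero, Matrix.cons_val_one,
      Matrix.head_cons, Matrix.cons_val_two, Matrix.tail_cons, Matrix.cons_val_three]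
    rw [hc2inv]
    linear_combination 4 * hc2
  have Q3v : ∑ a, ((![c, c, c, (c ^ 2)⁻¹] : Fin 4 → ℝ) a * (![c, c, c, (c ^ 2)⁻¹] : Fin 4 → ℝ) a) * ((![c, c, c, (c ^ 2)⁻¹] : Fin 4 → ℝ) a * (![c, c, c, (c ^ 2)⁻¹] : Fin 4 → ℝ) a) = 40 - 12 * c := by
    simp only [Fin.sum_univ_four, Matrix.cons_val_zero, Matrix.cons_val_one,
      Matrix.head_cons, Matrix.cons_val_two, Matrix.tail_cons, Matrix.cons_val_three]
    rw [hc2inv]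
    linear_combination (4*c^2 - 4*c + 24) * hc2
  have S4v : ∑ a, (![c ^ 2, c⁻¹, c⁻¹, c⁻¹] : Fin 4 → ℝ) a * (![c ^ 2, c⁻¹, c⁻¹, c⁻¹] : Fin 4 → ℝ) a = 8 := by
    simp only [Fin.sum_univ_four, Matrix.cons_val_zero, Matrix.cons_val_one,
      Matrix.head_cons, Matrix.cons_val_two, Matrix.tail_cons, Matrix.cons_val_three]
    rw [hcinv]
    linear_combination (c^2 + c + 5) * hc2
  have Q4v : ∑ a, ((![c ^ 2, c⁻¹, c⁻¹, c⁻¹] : Fin 4 → ℝ) a * (![c ^ 2, c⁻¹, c⁻¹, c⁻¹] : Fin 4 → ℝ) a) * ((![c ^ 2, c⁻¹, c⁻¹, c⁻¹] : Fin 4 → ℝ) a * (![c ^ 2, c⁻¹, c⁻¹, c⁻¹] : Fin 4 → ℝ) a) = 28 + 12 * c := by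
    simp only [Fin.sum_univ_four, Matrix.cons_val_zero, Matrix.cons_val_one,
      Matrix.head_cons, Matrix.cons_val_two, Matrix.tail_cons, Matrix.cons_val_three]
    rw [hcinv]
    linear_combination (c^6 + c^5 + 2*c^4 + 3*c^3 + 8*c^2 - c + 25) * hc2
  have S5v : ∑ a, (![c ^ 2, (c ^ 2)⁻¹, 1, 0] : Fin 4 → ℝ) a * (![c ^ 2, (c ^ 2)⁻¹, 1, 0] : Fin 4 → ℝ) a = 8 := by
    simp only [Fin.sum_univ_four, Matrix.cons_val_zero, Matrix.cons_val_one,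
      Matrix.head_cons, Matrix.cons_val_two, Matrix.tail_cons, Matrix.cons_val_three]
    rw [hc2inv]
    linear_combination (c^2 + c + 3) * hc2
  have Q5v : ∑ a, ((![c ^ 2, (c ^ 2)⁻¹, 1, 0] : Fin 4 → ℝ) a * (![c ^ 2, (c ^ 2)⁻¹, 1, 0] : Fin 4 → ℝ) a) * ((![c ^ 2, (c ^ 2)⁻¹, 1, 0] : Fin 4 → ℝ) a * (![c ^ 2, (c ^ 2)⁻¹, 1, 0] : Fin 4 → ℝ) a) = 48 := by
    simp only [Fin.sum_univ_four, Matrix.cons_val_zero, Matrix.cons_val_one,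
      Matrix.head_cons, Matrix.cons_val_two, Matrix.tail_cons, Matrix.cons_val_three]
    rw [hc2inv]
    linear_combination (c^6 + c^5 + 2*c^4 + 3*c^3 + 6*c^2 + c + 31) * hc2
  have S6v : ∑ a, (![Real.sqrt 5, c⁻¹, c, 0] : Fin 4 → ℝ) a * (![Real.sqrt 5, c⁻¹, c, 0] : Fin 4 → ℝ) a = 8 := by
    simp only [Fin.sum_univ_four, Matrix.cons_val_zero, Matrix.cons_val_one,
      Matrix.head_cons, Matrix.cons_val_two, Matrix.tail_cons, Matrix.cons_val_three]
    rw [hs5, hcinv]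
    linear_combination 6 * hc2
  have Q6v : ∑ a, ((![Real.sqrt 5, c⁻¹, c, 0] : Fin 4 → ℝ) a * (![Real.sqrt 5, c⁻¹, c, 0] : Fin 4 → ℝ) a) * ((![Real.sqrt 5, c⁻¹, c, 0] : Fin 4 → ℝ) a * (![Real.sqrt 5, c⁻¹, c, 0] : Fin 4 → ℝ) a) = 32 := by
    simp only [Fin.sum_univ_four, Matrix.cons_val_zero, Matrix.cons_val_one,
      Matrix.head_cons, Matrix.cons_val_two, Matrix.tail_cons, Matrix.cons_val_three]
    rw [hs5, hcinv]
    linear_combination (18*c^2 - 18*c + 30) * hc2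
  have S7v : ∑ a, (![2, 1, c, c⁻¹] : Fin 4 → ℝ) a * (![2, 1, c, c⁻¹] : Fin 4 → ℝ) a = 8 := by
    simp only [Fin.sum_univ_four, Matrix.cons_val_zero, Matrix.cons_val_one,
      Matrix.head_cons, Matrix.cons_val_two, Matrix.tail_cons, Matrix.cons_val_three]
    rw [hcinv]
    linear_combination 2 * hc2
  have Q7v : ∑ a, ((![2, 1, c, c⁻¹] : Fin 4 → ℝ) a * (![2, 1, c, c⁻¹] : Fin 4 → ℝ) a) * ((![2, 1, c, c⁻¹] : Fin 4 → ℝ) a * (![2, 1, c, c⁻¹] : Fin 4 → ℝ) a) = 24 := by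
    simp only [Fin.sum_univ_four, Matrix.cons_val_zero, Matrix.cons_val_one,
      Matrix.head_cons, Matrix.cons_val_two, Matrix.tail_cons, Matrix.cons_val_three]
    rw [hcinv]
    linear_combination (2*c^2 - 2*c + 6) * hc2
  have X1v : ∑ a, ((![2, 2, 0, 0] : Fin 4 → ℝ) a * (![2, 2, 0, 0] : Fin 4 → ℝ) a) * ((![2, 2, 0, 0] : Fin 4 → ℝ) a * (![2, 2, 0, 0] : Fin 4 → ℝ) a) * ((![2, 2, 0, 0] : Fin 4 → ℝ) a * (![2, 2, 0, 0] : Fin 4 → ℝ) a) = 128 := by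
    simp only [Fin.sum_univ_four, Matrix.cons_val_zero, Matrix.cons_val_one,
      Matrix.head_cons, Matrix.cons_val_two, Matrix.tail_cons, Matrix.cons_val_three]
    norm_num
  have X6v : ∑ a, ((![Real.sqrt 5, c⁻¹, c, 0] : Fin 4 → ℝ) a * (![Real.sqrt 5, c⁻¹, c, 0] : Fin 4 → ℝ) a) * ((![Real.sqrt 5, c⁻¹, c, 0] : Fin 4 → ℝ) a * (![Real.sqrt 5, c⁻¹, c, 0] : Fin 4 → ℝ) a) * ((![Real.sqrt 5, c⁻¹, c, 0] : Fin 4 → ℝ) a * (![Real.sqrt 5, c⁻¹, c, 0] : Fin 4 → ℝ) a) = 143 := by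
    simp only [Fin.sum_univ_four, Matrix.cons_val_zero, Matrix.cons_val_one,
      Matrix.head_cons, Matrix.cons_val_two, Matrix.tail_cons, Matrix.cons_val_three]
    rw [hs5, hcinv]
    linear_combination (66*c^4 - 132*c^3 + 189*c^2 - 123*c + 141) * hc2
  have hr1 : signedPerms ![2, 2, 0, 0] = (Finset.image (act ![2, 2, 0, 0]) ((Finset.univ : Finset (Equiv.Perm (Fin 4))) ×ˢ Finset.univ)) := rfl
  have hr2 : signedPerms ![Real.sqrt 5, 1, 1, 1] = (Finset.image (act ![Real.sqrt 5, 1, 1, 1]) ((Finset.univ : Finset (Equiv.Perm (Fin 4))) ×ˢ Finset.univ)) := rfl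
  have hr3 : signedPerms ![c, c, c, (c ^ 2)⁻¹] = (Finset.image (act ![c, c, c, (c ^ 2)⁻¹]) ((Finset.univ : Finset (Equiv.Perm (Fin 4))) ×ˢ Finset.univ)) := rfl
  have hr4 : signedPerms ![c ^ 2, c⁻¹, c⁻¹, c⁻¹] = (Finset.image (act ![c ^ 2, c⁻¹, c⁻¹, c⁻¹]) ((Finset.univ : Finset (Equiv.Perm (Fin 4))) ×ˢ Finset.univ)) := rfl
  have hr5 : evenSignedPerms ![c ^ 2, (c ^ 2)⁻¹, 1, 0] = (Finset.image (act ![c ^ 2, (c ^ 2)⁻¹, 1, 0]) ((Finset.univ.filter fun σ : Equiv.Perm (Fin 4) => Equiv.Perm.sign σ = 1) ×ˢ Finset.univ)) := rfl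
  have hr6 : evenSignedPerms ![Real.sqrt 5, c⁻¹, c, 0] = (Finset.image (act ![Real.sqrt 5, c⁻¹, c, 0]) ((Finset.univ.filter fun σ : Equiv.Perm (Fin 4) => Equiv.Perm.sign σ = 1) ×ˢ Finset.univ)) := rfl
  have hr7 : evenSignedPerms ![2, 1, c, c⁻¹] = (Finset.image (act ![2, 1, c, c⁻¹]) ((Finset.univ.filter fun σ : Equiv.Perm (Fin 4) => Equiv.Perm.sign σ = 1) ×ˢ Finset.univ)) := rfl
  have E1 := orbit_quad ![2, 2, 0, 0] (Finset.univ : Finset (Equiv.Perm (Fin 4))) hmU hiU 6 count1_univ 16 (stab1) u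
  rw [S1v] at E1
  have F1 := orbit_quart ![2, 2, 0, 0] (Finset.univ : Finset (Equiv.Perm (Fin 4))) hmU hiU 6 2 count1_univ count2_univ 16 (stab1) u A
  rw [S1v, Q1v] at F1
  have E2 := orbit_quad ![Real.sqrt 5, 1, 1, 1] (Finset.univ : Finset (Equiv.Perm (Fin 4))) hmU hiU 6 count1_univ 6 (stab2 c hc2 hl hu2 hs5) u
  rw [S2v] at E2
  have F2 := orbit_quart ![Real.sqrt 5, 1, 1, 1] (Finset.univ : Finset (Equiv.Perm (Fin 4))) hmU hiU 6 2 count1_univ count2_univ 6 (stab2 c hc2 hl hu2 hs5) u A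
  rw [S2v, Q2v] at F2
  have E3 := orbit_quad ![c, c, c, (c ^ 2)⁻¹] (Finset.univ : Finset (Equiv.Perm (Fin 4))) hmU hiU 6 count1_univ 6 (stab3 c hc2 hl hu2 hc2inv) u
  rw [S3v] at E3
  have F3 := orbit_quart ![c, c, c, (c ^ 2)⁻¹] (Finset.univ : Finset (Equiv.Perm (Fin 4))) hmU hiU 6 2 count1_univ count2_univ 6 (stab3 c hc2 hl hu2 hc2inv) u A
  rw [S3v, Q3v] at F3
  have E4 := orbit_quad ![c ^ 2, c⁻¹, c⁻¹, c⁻¹] (Finset.univ : Finset (Equiv.Perm (Fin 4))) hmU hiU 6 count1_univ 6 (stab4 c hc2 hl hu2 hcinv) u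
  rw [S4v] at E4
  have F4 := orbit_quart ![c ^ 2, c⁻¹, c⁻¹, c⁻¹] (Finset.univ : Finset (Equiv.Perm (Fin 4))) hmU hiU 6 2 count1_univ count2_univ 6 (stab4 c hc2 hl hu2 hcinv) u A
  rw [S4v, Q4v] at F4
  have E5 := orbit_quad ![c ^ 2, (c ^ 2)⁻¹, 1, 0] (Finset.univ.filter fun σ : Equiv.Perm (Fin 4) => Equiv.Perm.sign σ = 1) A4mul A4inv 3 A4count1 2 (stab5 c hc2 hl hu2 hc2inv) u
  rw [S5v] at E5
  have F5 := orbit_quart ![c ^ 2, (c ^ 2)⁻¹, 1, 0] (Finset.univ.filter fun σ : Equiv.Perm (Fin 4) => Equiv.Perm.sign σ = 1) A4mul A4inv 3 1 A4count1 A4count2 2 (stab5 c hc2 hl hu2 hc2inv) u A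
  rw [S5v, Q5v] at F5
  have E6 := orbit_quad ![Real.sqrt 5, c⁻¹, c, 0] (Finset.univ.filter fun σ : Equiv.Perm (Fin 4) => Equiv.Perm.sign σ = 1) A4mul A4inv 3 A4count1 2 (stab6 c hc2 hl hu2 hcinv hs5) u
  rw [S6v] at E6
  have F6 := orbit_quart ![Real.sqrt 5, c⁻¹, c, 0] (Finset.univ.filter fun σ : Equiv.Perm (Fin 4) => Equiv.Perm.sign σ = 1) A4mul A4inv 3 1 A4count1 A4count2 2 (stab6 c hc2 hl hu2 hcinv hs5) u A
  rw [S6v, Q6v] at F6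
  have E7 := orbit_quad ![2, 1, c, c⁻¹] (Finset.univ.filter fun σ : Equiv.Perm (Fin 4) => Equiv.Perm.sign σ = 1) A4mul A4inv 3 A4count1 1 (stab7 c hc2 hl hu2 hcinv) u
  rw [S7v] at E7
  have F7 := orbit_quart ![2, 1, c, c⁻¹] (Finset.univ.filter fun σ : Equiv.Perm (Fin 4) => Equiv.Perm.sign σ = 1) A4mul A4inv 3 1 A4count1 A4count2 1 (stab7 c hc2 hl hu2 hcinv) u A
  rw [S7v, Q7v] at F7
  have d12 : Disjoint (Finset.image (act ![2, 2, 0, 0]) ((Finset.univ : Finset (Equiv.Perm (Fin 4))) ×ˢ Finset.univ)) (Finset.image (act ![Real.sqrt 5, 1, 1, 1]) ((Finset.univ : Finset (Equiv.Perm (Fin 4))) ×ˢ Finset.univ)) := disj4 _ _ _ _ (by rw [Q1v, Q2v]; norm_num)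
  have d13 : Disjoint (Finset.image (act ![2, 2, 0, 0]) ((Finset.univ : Finset (Equiv.Perm (Fin 4))) ×ˢ Finset.univ)) (Finset.image (act ![c, c, c, (c ^ 2)⁻¹]) ((Finset.univ : Finset (Equiv.Perm (Fin 4))) ×ˢ Finset.univ)) := disj4 _ _ _ _ (by rw [Q1v, Q3v]; intro heq; linarith [hl, hu2])
  have d14 : Disjoint (Finset.image (act ![2, 2, 0, 0]) ((Finset.univ : Finset (Equiv.Perm (Fin 4))) ×ˢ Finset.univ)) (Finset.image (act ![c ^ 2, c⁻¹, c⁻¹, c⁻¹]) ((Finset.univ : Finset (Equiv.Perm (Fin 4))) ×ˢ Finset.univ)) := disj4 _ _ _ _ (by rw [Q1v, Q4v]; intro heq; linarith [hl, hu2])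
  have d15 : Disjoint (Finset.image (act ![2, 2, 0, 0]) ((Finset.univ : Finset (Equiv.Perm (Fin 4))) ×ˢ Finset.univ)) (Finset.image (act ![c ^ 2, (c ^ 2)⁻¹, 1, 0]) ((Finset.univ.filter fun σ : Equiv.Perm (Fin 4) => Equiv.Perm.sign σ = 1) ×ˢ Finset.univ)) := disj4 _ _ _ _ (by rw [Q1v, Q5v]; norm_num)
  have d16 : Disjoint (Finset.image (act ![2, 2, 0, 0]) ((Finset.univ : Finset (Equiv.Perm (Fin 4))) ×ˢ Finset.univ)) (Finset.image (act ![Real.sqrt 5, c⁻¹, c, 0]) ((Finset.univ.filter fun σ : Equiv.Perm (Fin 4) => Equiv.Perm.sign σ = 1) ×ˢ Finset.univ)) := disj6 _ _ _ _ (by rw [X1v, X6v]; norm_num)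
  have d17 : Disjoint (Finset.image (act ![2, 2, 0, 0]) ((Finset.univ : Finset (Equiv.Perm (Fin 4))) ×ˢ Finset.univ)) (Finset.image (act ![2, 1, c, c⁻¹]) ((Finset.univ.filter fun σ : Equiv.Perm (Fin 4) => Equiv.Perm.sign σ = 1) ×ˢ Finset.univ)) := disj4 _ _ _ _ (by rw [Q1v, Q7v]; norm_num)
  have d23 : Disjoint (Finset.image (act ![Real.sqrt 5, 1, 1, 1]) ((Finset.univ : Finset (Equiv.Perm (Fin 4))) ×ˢ Finset.univ)) (Finset.image (act ![c, c, c, (c ^ 2)⁻¹]) ((Finset.univ : Finset (Equiv.Perm (Fin 4))) ×ˢ Finset.univ)) := disj4 _ _ _ _ (by rw [Q2v, Q3v]; intro heq; linarith [hl, hu2])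
  have d24 : Disjoint (Finset.image (act ![Real.sqrt 5, 1, 1, 1]) ((Finset.univ : Finset (Equiv.Perm (Fin 4))) ×ˢ Finset.univ)) (Finset.image (act ![c ^ 2, c⁻¹, c⁻¹, c⁻¹]) ((Finset.univ : Finset (Equiv.Perm (Fin 4))) ×ˢ Finset.univ)) := disj4 _ _ _ _ (by rw [Q2v, Q4v]; intro heq; linarith [hl, hu2])
  have d25 : Disjoint (Finset.image (act ![Real.sqrt 5, 1, 1, 1]) ((Finset.univ : Finset (Equiv.Perm (Fin 4))) ×ˢ Finset.univ)) (Finset.image (act ![c ^ 2, (c ^ 2)⁻¹, 1, 0]) ((Finset.univ.filter fun σ : Equiv.Perm (Fin 4) => Equiv.Perm.sign σ = 1) ×ˢ Finset.univ)) := disj4 _ _ _ _ (by rw [Q2v, Q5v]; norm_num)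
  have d26 : Disjoint (Finset.image (act ![Real.sqrt 5, 1, 1, 1]) ((Finset.univ : Finset (Equiv.Perm (Fin 4))) ×ˢ Finset.univ)) (Finset.image (act ![Real.sqrt 5, c⁻¹, c, 0]) ((Finset.univ.filter fun σ : Equiv.Perm (Fin 4) => Equiv.Perm.sign σ = 1) ×ˢ Finset.univ)) := disj4 _ _ _ _ (by rw [Q2v, Q6v]; norm_num)
  have d27 : Disjoint (Finset.image (act ![Real.sqrt 5, 1, 1, 1]) ((Finset.univ : Finset (Equiv.Perm (Fin 4))) ×ˢ Finset.univ)) (Finset.image (act ![2, 1, c, c⁻¹]) ((Finset.univ.filter fun σ : Equiv.Perm (Fin 4) => Equiv.Perm.sign σ = 1) ×ˢ Finset.univ)) := disj4 _ _ _ _ (by rw [Q2v, Q7v]; norm_num)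
  have d34 : Disjoint (Finset.image (act ![c, c, c, (c ^ 2)⁻¹]) ((Finset.univ : Finset (Equiv.Perm (Fin 4))) ×ˢ Finset.univ)) (Finset.image (act ![c ^ 2, c⁻¹, c⁻¹, c⁻¹]) ((Finset.univ : Finset (Equiv.Perm (Fin 4))) ×ˢ Finset.univ)) := disj4 _ _ _ _ (by rw [Q3v, Q4v]; intro heq; linarith [hl, hu2])
  have d35 : Disjoint (Finset.image (act ![c, c, c, (c ^ 2)⁻¹]) ((Finset.univ : Finset (Equiv.Perm (Fin 4))) ×ˢ Finset.univ)) (Finset.image (act ![c ^ 2, (c ^ 2)⁻¹, 1, 0]) ((Finset.univ.filter fun σ : Equiv.Perm (Fin 4) => Equiv.Perm.sign σ = 1) ×ˢ Finset.univ)) := disj4 _ _ _ _ (by rw [Q3v, Q5v]; intro heq; linarith [hl, hu2])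
  have d36 : Disjoint (Finset.image (act ![c, c, c, (c ^ 2)⁻¹]) ((Finset.univ : Finset (Equiv.Perm (Fin 4))) ×ˢ Finset.univ)) (Finset.image (act ![Real.sqrt 5, c⁻¹, c, 0]) ((Finset.univ.filter fun σ : Equiv.Perm (Fin 4) => Equiv.Perm.sign σ = 1) ×ˢ Finset.univ)) := disj4 _ _ _ _ (by rw [Q3v, Q6v]; intro heq; linarith [hl, hu2])
  have d37 : Disjoint (Finset.image (act ![c, c, c, (c ^ 2)⁻¹]) ((Finset.univ : Finset (Equiv.Perm (Fin 4))) ×ˢ Finset.univ)) (Finset.image (act ![2, 1, c, c⁻¹]) ((Finset.univ.filter fun σ : Equiv.Perm (Fin 4) => Equiv.Perm.sign σ = 1) ×ˢ Finset.univ)) := disj4 _ _ _ _ (by rw [Q3v, Q7v]; intro heq; linarith [hl, hu2])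
  have d45 : Disjoint (Finset.image (act ![c ^ 2, c⁻¹, c⁻¹, c⁻¹]) ((Finset.univ : Finset (Equiv.Perm (Fin 4))) ×ˢ Finset.univ)) (Finset.image (act ![c ^ 2, (c ^ 2)⁻¹, 1, 0]) ((Finset.univ.filter fun σ : Equiv.Perm (Fin 4) => Equiv.Perm.sign σ = 1) ×ˢ Finset.univ)) := disj4 _ _ _ _ (by rw [Q4v, Q5v]; intro heq; have hcc : c = 5/3 := (by linarith); exact absurd hc2 (by rw [hcc]; norm_num))
  have d46 : Disjoint (Finset.image (act ![c ^ 2, c⁻¹, c⁻¹, c⁻¹]) ((Finset.univ : Finset (Equiv.Perm (Fin 4))) ×ˢ Finset.univ)) (Finset.image (act ![Real.sqrt 5, c⁻¹, c, 0]) ((Finset.univ.filter fun σ : Equiv.Perm (Fin 4) => Equiv.Perm.sign σ = 1) ×ˢ Finset.univ)) := disj4 _ _ _ _ (by rw [Q4v, Q6v]; intro heq; linarith [hl, hu2])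
  have d47 : Disjoint (Finset.image (act ![c ^ 2, c⁻¹, c⁻¹, c⁻¹]) ((Finset.univ : Finset (Equiv.Perm (Fin 4))) ×ˢ Finset.univ)) (Finset.image (act ![2, 1, c, c⁻¹]) ((Finset.univ.filter fun σ : Equiv.Perm (Fin 4) => Equiv.Perm.sign σ = 1) ×ˢ Finset.univ)) := disj4 _ _ _ _ (by rw [Q4v, Q7v]; intro heq; linarith [hl, hu2])
  have d56 : Disjoint (Finset.image (act ![c ^ 2, (c ^ 2)⁻¹, 1, 0]) ((Finset.univ.filter fun σ : Equiv.Perm (Fin 4) => Equiv.Perm.sign σ = 1) ×ˢ Finset.univ)) (Finset.image (act ![Real.sqrt 5, c⁻¹, c, 0]) ((Finset.univ.filter fun σ : Equiv.Perm (Fin 4) => Equiv.Perm.sign σ = 1) ×ˢ Finset.univ)) := disj4 _ _ _ _ (by rw [Q5v, Q6v]; norm_num)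
  have d57 : Disjoint (Finset.image (act ![c ^ 2, (c ^ 2)⁻¹, 1, 0]) ((Finset.univ.filter fun σ : Equiv.Perm (Fin 4) => Equiv.Perm.sign σ = 1) ×ˢ Finset.univ)) (Finset.image (act ![2, 1, c, c⁻¹]) ((Finset.univ.filter fun σ : Equiv.Perm (Fin 4) => Equiv.Perm.sign σ = 1) ×ˢ Finset.univ)) := disj4 _ _ _ _ (by rw [Q5v, Q7v]; norm_num)
  have d67 : Disjoint (Finset.image (act ![Real.sqrt 5, c⁻¹, c, 0]) ((Finset.univ.filter fun σ : Equiv.Perm (Fin 4) => Equiv.Perm.sign σ = 1) ×ˢ Finset.univ)) (Finset.image (act ![2, 1, c, c⁻¹]) ((Finset.univ.filter fun σ : Equiv.Perm (Fin 4) => Equiv.Perm.sign σ = 1) ×ˢ Finset.univ)) := disj4 _ _ _ _ (by rw [Q6v, Q7v]; norm_num)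
  have hD1 := d12
  have hD2 := Finset.disjoint_union_left.mpr ⟨d13, d23⟩
  have hD3 := Finset.disjoint_union_left.mpr ⟨Finset.disjoint_union_left.mpr ⟨d14, d24⟩, d34⟩
  have hD4 := Finset.disjoint_union_left.mpr ⟨Finset.disjoint_union_left.mpr ⟨Finset.disjoint_union_left.mpr ⟨d15, d25⟩, d35⟩, d45⟩
  have hD5 := Finset.disjoint_union_left.mpr ⟨Finset.disjoint_union_left.mpr ⟨Finset.disjoint_union_left.mpr ⟨Finset.disjoint_union_left.mpr ⟨d16, d26⟩, d36⟩, d46⟩, d56⟩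
  have hD6 := Finset.disjoint_union_left.mpr ⟨Finset.disjoint_union_left.mpr ⟨Finset.disjoint_union_left.mpr ⟨Finset.disjoint_union_left.mpr ⟨Finset.disjoint_union_left.mpr ⟨d17, d27⟩, d37⟩, d47⟩, d57⟩, d67⟩
  have Hi : ∑ η ∈ J, (u ⬝ᵥ η) ^ 2 = 1200 * (u ⬝ᵥ u) := by
    rw [hJ, hr1, hr2, hr3, hr4, hr5, hr6, hr7, Finset.sum_union hD6, Finset.sum_union hD5,
      Finset.sum_union hD4, Finset.sum_union hD3, Finset.sum_union hD2, Finset.sum_union hD1]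
    linear_combination (1/16) * E1 + (1/6) * E2 + (1/6) * E3 + (1/6) * E4
      + (1/2) * E5 + (1/2) * E6 + E7 - 1200 * hU
  have Hii : ∑ η ∈ J, (u ⬝ᵥ η) ^ 2 * (A.mulVec η ⬝ᵥ η)
      = 3200 * (A.mulVec u ⬝ᵥ u) + 1600 * Matrix.trace A * (u ⬝ᵥ u) := by
    rw [hJ, hr1, hr2, hr3, hr4, hr5, hr6, hr7, Finset.sum_union hD6, Finset.sum_union hD5,
      Finset.sum_union hD4, Finset.sum_union hD3, Finset.sum_union hD2, Finset.sum_union hD1]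
    linear_combination (1/16) * F1 + (1/6) * F2 + (1/6) * F3 + (1/6) * F4
      + (1/2) * F5 + (1/2) * F6 + F7 - 1600 * Matrix.trace A * hU
      - 1600 * (∑ i, u i ^ 2) * hTr
  exact ⟨Hi, Hii, fun hu1 => by rw [Hi, Hii, hu1]; ring⟩
end

section
/- Let J ⊂ ℝ² be the 8 vectors { (±1/√2, ±1/√2), (±1, 0), (0, ±1) } (all sign choices). Then for every unit vector u ∈ ℝ² and every symmetric 2×2 real matrix A: (i) Σ_{η ∈ J} ⟨u, η⟩⁴ = 3; (ii) Σ_{η ∈ J} ⟨u, η⟩⁴ ⟨A η, η⟩ = (1/2)·tr(A) + 2·⟨A u, u⟩. Consequently the ratio (ii)/(i) equals (1/6)·tr(A) + (4/6)·⟨Au,u⟩, so J is a 6-averaging set in ℝ² with d = 1. -/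
open Matrix

/-- The 8 vectors `(±1/√2, ±1/√2), (±1, 0), (0, ±1)` form a 6-averaging set in `ℝ²` with
`d = 1`: for any unit vector `u` and symmetric matrix `A`, `∑ ⟨u,η⟩⁴ = 3`,
`∑ ⟨u,η⟩⁴⟨Aη,η⟩ = (1/2) tr A + 2⟨Au,u⟩`, and the ratio equals
`(1/6) tr A + (4/6)⟨Au,u⟩`. -/
theorem eight_vectors_six_averaging
    (η : Fin 8 → Fin 2 → ℝ)
    (hη : η = ![![(Real.sqrt 2)⁻¹, (Real.sqrt 2)⁻¹], ![(Real.sqrt 2)⁻¹, -(Real.sqrt 2)⁻¹],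
                ![-(Real.sqrt 2)⁻¹, (Real.sqrt 2)⁻¹], ![-(Real.sqrt 2)⁻¹, -(Real.sqrt 2)⁻¹],
                ![1, 0], ![-1, 0], ![0, 1], ![0, -1]])
    (u : Fin 2 → ℝ) (hu : u ⬝ᵥ u = 1)
    (A : Matrix (Fin 2) (Fin 2) ℝ) (hA : A.IsSymm) :
    (∑ j : Fin 8, (u ⬝ᵥ η j) ^ 4 = 3) ∧
    (∑ j : Fin 8, (u ⬝ᵥ η j) ^ 4 * (A.mulVec (η j) ⬝ᵥ η j)
      = (1 / 2) * Matrix.trace A + 2 * (A.mulVec u ⬝ᵥ u)) ∧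
    ((∑ j : Fin 8, (u ⬝ᵥ η j) ^ 4 * (A.mulVec (η j) ⬝ᵥ η j)) /
        (∑ j : Fin 8, (u ⬝ᵥ η j) ^ 4)
      = (1 / 6) * Matrix.trace A + (4 / 6) * (A.mulVec u ⬝ᵥ u)) := by
  set s : ℝ := (Real.sqrt 2)⁻¹ with hsdef
  have hs : s ^ 2 = 1 / 2 := by
    rw [hsdef, ← Real.sqrt_inv, Real.sq_sqrt] <;> norm_num
  have hsym : A 1 0 = A 0 1 := by
    have := congrFun (congrFun hA.eq 0) 1
    simpa [Matrix.transpose_apply] using this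
  have e0 : η 0 = ![s, s] := by rw [hη]; rfl
  have e1 : η 1 = ![s, -s] := by rw [hη]; rfl
  have e2 : η 2 = ![-s, s] := by rw [hη]; rfl
  have e3 : η 3 = ![-s, -s] := by rw [hη]; rfl
  have e4 : η 4 = ![1, 0] := by rw [hη]; rfl
  have e5 : η 5 = ![-1, 0] := by rw [hη]; rfl
  have e6 : η 6 = ![0, 1] := by rw [hη]; rfl
  have e7 : η 7 = ![0, -1] := by rw [hη]; rfl
  have hu2 : u 0 * u 0 + u 1 * u 1 = 1 := by
    simpa [dotProduct, Fin.sum_univ_two] using hu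
  have h1 : ∑ j : Fin 8, (u ⬝ᵥ η j) ^ 4 = 3 := by
    simp only [Fin.sum_univ_eight, e0, e1, e2, e3, e4, e5, e6, e7, dotProduct,
      Fin.sum_univ_two, Matrix.cons_val_zero, Matrix.cons_val_one, Matrix.head_cons]
    linear_combination
      (2*(u 1)^4 + 12*(u 0)^2*(u 1)^2 + 2*(u 0)^4 + 4*s^2*(u 1)^4
        + 24*s^2*(u 0)^2*(u 1)^2 + 4*s^2*(u 0)^4) * hs
      + (3 + 3*(u 1)^2 + 3*(u 0)^2) * hu2
  have h2 : ∑ j : Fin 8, (u ⬝ᵥ η j) ^ 4 * (A.mulVec (η j) ⬝ᵥ η j)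
      = (1 / 2) * Matrix.trace A + 2 * (A.mulVec u ⬝ᵥ u) := by
    simp only [Fin.sum_univ_eight, e0, e1, e2, e3, e4, e5, e6, e7, dotProduct,
      Fin.sum_univ_two, Matrix.mulVec, Matrix.cons_val_zero, Matrix.cons_val_one,
      Matrix.head_cons, Matrix.trace_fin_two, hsym]
    linear_combination
      ((u 1)^4*(A 1 1) + (u 1)^4*(A 0 0) + 8*(u 0)*(u 1)^3*(A 0 1)
        + 6*(u 0)^2*(u 1)^2*(A 1 1) + 6*(u 0)^2*(u 1)^2*(A 0 0) + 8*(u 0)^3*(u 1)*(A 0 1)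
        + (u 0)^4*(A 1 1) + (u 0)^4*(A 0 0)
        + 2*s^2*(u 1)^4*(A 1 1) + 2*s^2*(u 1)^4*(A 0 0) + 16*s^2*(u 0)*(u 1)^3*(A 0 1)
        + 12*s^2*(u 0)^2*(u 1)^2*(A 1 1) + 12*s^2*(u 0)^2*(u 1)^2*(A 0 0)
        + 16*s^2*(u 0)^3*(u 1)*(A 0 1) + 2*s^2*(u 0)^4*(A 1 1) + 2*s^2*(u 0)^4*(A 0 0)
        + 4*s^4*(u 1)^4*(A 1 1) + 4*s^4*(u 1)^4*(A 0 0) + 32*s^4*(u 0)*(u 1)^3*(A 0 1)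
        + 24*s^4*(u 0)^2*(u 1)^2*(A 1 1) + 24*s^4*(u 0)^2*(u 1)^2*(A 0 0)
        + 32*s^4*(u 0)^3*(u 1)*(A 0 1) + 4*s^4*(u 0)^4*(A 1 1) + 4*s^4*(u 0)^4*(A 0 0)) * hs
      + ((1/2)*(A 1 1) + (1/2)*(A 0 0) + (5/2)*(u 1)^2*(A 1 1) + (1/2)*(u 1)^2*(A 0 0)
        + 4*(u 0)*(u 1)*(A 0 1) + (1/2)*(u 0)^2*(A 1 1) + (5/2)*(u 0)^2*(A 0 0)) * hu2
  refine ⟨h1, h2, ?_⟩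
  rw [h1, h2]
  ring
end
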